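/- arXiv:1903.08706 — 6 statements merged into one kernel-verified Lean document; each statement's English description precedes it below -/
import Mathlib

section
/- Let D be a subordinator with infinite Lévy measure whose Laplace exponent ψ is regularly varying at ∞ with index β ∈ [0,1), and let E be its inverse subordinator. Fix λ > 0, t > 0 and r > 0. If r < 1/(1−β), then E[exp(λ E_t^r)] < ∞. -/
open MeasureTheory Filter Topology Set

private lemma potter_lower {f : ℝ → ℝ} {β δ : ℝ}
    (hmono : ∀ ⦃x y : ℝ⦄, 0 < x → x ≤ y → f x ≤ f y)
    {S₁ : ℝ} (hS₁ : 0 < S₁) (hpos : ∀ s, S₁ ≤ s → 0 < f s)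
    (hRV2 : Tendsto (fun s => f (2 * s) / f s) atTop (𝓝 ((2:ℝ) ^ β)))
    (hδ0 : 0 ≤ δ) (hδβ : δ < β) :
    ∃ C > 0, ∃ S ≥ 1, ∀ s, S ≤ s → C * s ^ δ ≤ f s := by
  have h2δβ : (2:ℝ) ^ δ < 2 ^ β := (Real.rpow_lt_rpow_left_iff one_lt_two).mpr hδβ
  have hev : ∀ᶠ s in atTop, (2:ℝ) ^ δ < f (2 * s) / f s :=
    hRV2.eventually (eventually_gt_nhds h2δβ)
  obtain ⟨S₂, hS₂⟩ := eventually_atTop.mp hev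
  set S : ℝ := max 1 (max S₁ S₂) with hS
  have hS1 : (1:ℝ) ≤ S := le_max_left _ _
  have hSpos : (0:ℝ) < S := lt_of_lt_of_le one_pos hS1
  have hSS₁ : S₁ ≤ S := le_trans (le_max_left _ _) (le_max_right _ _)
  have hSS₂ : S₂ ≤ S := le_trans (le_max_right _ _) (le_max_right _ _)
  have hfS : 0 < f S := hpos S hSS₁
  have hq0 : (0:ℝ) ≤ (2:ℝ) ^ δ := (Real.rpow_pos_of_pos two_pos δ).le
  have key : ∀ s, S ≤ s → (2:ℝ) ^ δ * f s ≤ f (2 * s) := by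
    intro s hs
    have hfs : 0 < f s := hpos s (le_trans hSS₁ hs)
    have := hS₂ s (le_trans hSS₂ hs)
    have := (lt_div_iff₀ hfs).mp this
    linarith
  have step : ∀ n : ℕ, ((2:ℝ) ^ δ) ^ n * f S ≤ f (2 ^ n * S) := by
    intro n
    induction n with
    | zero => simp
    | succ n ih =>
      have h1 : S ≤ 2 ^ n * S := le_mul_of_one_le_left hSpos.le (one_le_pow₀ one_le_two)
      have h2 := key _ h1
      have h3 : (2:ℝ) ^ δ * (((2:ℝ) ^ δ) ^ n * f S) ≤ (2:ℝ) ^ δ * f (2 ^ n * S) :=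
        mul_le_mul_of_nonneg_left ih hq0
      have h4 : (2:ℝ) * (2 ^ n * S) = 2 ^ (n+1) * S := by ring
      calc ((2:ℝ) ^ δ) ^ (n+1) * f S = (2:ℝ) ^ δ * (((2:ℝ) ^ δ) ^ n * f S) := by ring
        _ ≤ (2:ℝ) ^ δ * f (2 ^ n * S) := h3
        _ ≤ f (2 * (2 ^ n * S)) := key _ h1
        _ = f (2 ^ (n+1) * S) := by rw [h4]
  refine ⟨f S / (2 * S) ^ δ, div_pos hfS (Real.rpow_pos_of_pos (by linarith) δ), S, hS1, ?_⟩
  intro s hs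
  have hspos : 0 < s := lt_of_lt_of_le hSpos hs
  -- find n with 2^n * S ≤ s < 2^(n+1) * S
  have hex : ∃ m : ℕ, s < 2 ^ m * S := by
    obtain ⟨m, hm⟩ := pow_unbounded_of_one_lt (s / S) (one_lt_two (α := ℝ))
    exact ⟨m, by rwa [div_lt_iff₀ hSpos] at hm⟩
  set n₀ := Nat.find hex with hn₀
  have hfind := Nat.find_spec hex
  have hn₀0 : n₀ ≠ 0 := by
    intro h
    rw [hn₀] at h
    have := Nat.find_spec hex
    rw [h] at this
    simp at this
    linarith
  obtain ⟨n, hn⟩ := Nat.exists_eq_succ_of_ne_zero hn₀0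
  have hupper : s < 2 ^ (n+1) * S := by
    have : n + 1 = n₀ := hn.symm
    rw [this]; exact hfind
  have hlower : 2 ^ n * S ≤ s := by
    have := Nat.find_min hex (m := n) (by omega)
    linarith [not_lt.mp this]
  have hfs1 : f (2 ^ n * S) ≤ f s := hmono (by positivity) hlower
  have hfs2 : ((2:ℝ) ^ δ) ^ n * f S ≤ f s := le_trans (step n) hfs1
  have hqn : ((2:ℝ) ^ δ) ^ n = ((2:ℝ) ^ n) ^ δ := by
    rw [← Real.rpow_natCast ((2:ℝ) ^ δ) n, ← Real.rpow_natCast (2:ℝ) n,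
      ← Real.rpow_mul (by norm_num), ← Real.rpow_mul (by norm_num), mul_comm]
  have hdiv : s / (2 * S) ≤ (2:ℝ) ^ n := by
    rw [div_le_iff₀ (by linarith)]
    have : (2:ℝ) ^ (n+1) * S = 2 ^ n * (2 * S) := by ring
    linarith
  have hrp : (s / (2 * S)) ^ δ ≤ ((2:ℝ) ^ n) ^ δ :=
    Real.rpow_le_rpow (by positivity) hdiv hδ0
  have hfinal : (s / (2 * S)) ^ δ * f S ≤ f s := by
    calc (s / (2 * S)) ^ δ * f S ≤ ((2:ℝ) ^ n) ^ δ * f S :=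
          mul_le_mul_of_nonneg_right hrp hfS.le
      _ = ((2:ℝ) ^ δ) ^ n * f S := by rw [hqn]
      _ ≤ f s := hfs2
  have : f S / (2 * S) ^ δ * s ^ δ = (s / (2 * S)) ^ δ * f S := by
    rw [Real.div_rpow hspos.le (by linarith)]
    ring
  linarith [hfinal, this.le, this.ge]

private lemma psi_mono_aux {Ω : Type*} [MeasurableSpace Ω] (P : Measure Ω) [IsProbabilityMeasure P]
    (D₁ : Ω → ℝ) (ψ : ℝ → ℝ) (hmeas : Measurable D₁) (hnn : ∀ ω, 0 ≤ D₁ ω)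
    (hl : ∀ s, 0 < s → ∫ ω, Real.exp (-(s * D₁ ω)) ∂P = Real.exp (-(1 * ψ s))) :
    ∀ ⦃s s' : ℝ⦄, 0 < s → s ≤ s' → ψ s ≤ ψ s' := by
  have hint : ∀ s : ℝ, 0 ≤ s → Integrable (fun ω => Real.exp (-(s * D₁ ω))) P := by
    intro s hs
    refine ⟨(Real.measurable_exp.comp ((hmeas.const_mul s).neg)).aestronglyMeasurable, ?_⟩
    refine HasFiniteIntegral.of_bounded (C := 1) (ae_of_all _ fun ω => ?_)
    rw [Real.norm_eq_abs, abs_of_pos (Real.exp_pos _)]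
    exact Real.exp_le_one_iff.mpr (by nlinarith [hnn ω])
  intro s s' hs hss'
  have hs' : 0 < s' := lt_of_lt_of_le hs hss'
  have hmono : ∫ ω, Real.exp (-(s' * D₁ ω)) ∂P ≤ ∫ ω, Real.exp (-(s * D₁ ω)) ∂P := by
    refine integral_mono (hint s' hs'.le) (hint s hs.le) fun ω => ?_
    exact Real.exp_le_exp.mpr (by nlinarith [hnn ω])
  rw [hl s hs, hl s' hs'] at hmono
  have := Real.exp_le_exp.mp hmono
  linarith

private lemma psi_unbounded_aux (ν : Measure ℝ) (ψ : ℝ → ℝ)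
    (hν : ∫⁻ y in Set.Ioi (0 : ℝ), ENNReal.ofReal (min y 1) ∂ν < ⊤)
    (hνinf : ν (Set.Ioi (0 : ℝ)) = ⊤)
    (hψ : ∀ s, 0 < s → ψ s = ∫ y in Set.Ioi (0 : ℝ), (1 - Real.exp (-(s * y))) ∂ν) :
    ∀ M : ℝ, ∃ s, 0 < s ∧ M ≤ ψ s := by
  have hmin_meas : Measurable fun y : ℝ => min y 1 := measurable_id.min measurable_const
  have hmin_nn : 0 ≤ᶠ[ae (ν.restrict (Ioi 0))] fun y : ℝ => min y 1 := by
    filter_upwards [ae_restrict_mem measurableSet_Ioi] with y hy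
    exact le_min (le_of_lt hy) one_pos.le
  have hmin_int : IntegrableOn (fun y : ℝ => min y 1) (Ioi 0) ν :=
    ⟨hmin_meas.aestronglyMeasurable, (hasFiniteIntegral_iff_ofReal hmin_nn).mpr hν⟩
  have hexp_bound : ∀ s y : ℝ, 0 < s → 0 < y →
      0 ≤ 1 - Real.exp (-(s * y)) ∧ 1 - Real.exp (-(s * y)) ≤ max s 1 * min y 1 := by
    intro s y hs hy
    constructor
    · have : Real.exp (-(s * y)) ≤ 1 := Real.exp_le_one_iff.mpr (by nlinarith)
      linarith
    · have h1 : 1 - Real.exp (-(s * y)) ≤ s * y := by nlinarith [Real.add_one_le_exp (-(s * y))]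
      have h2 : 1 - Real.exp (-(s * y)) ≤ 1 := by linarith [Real.exp_pos (-(s * y))]
      rcases le_total y 1 with h | h
      · calc 1 - Real.exp (-(s * y)) ≤ s * y := h1
          _ ≤ max s 1 * y := by nlinarith [le_max_left s 1]
          _ = max s 1 * min y 1 := by rw [min_eq_left h]
      · calc 1 - Real.exp (-(s * y)) ≤ 1 := h2
          _ ≤ max s 1 * 1 := by nlinarith [le_max_right s 1]
          _ = max s 1 * min y 1 := by rw [min_eq_right h]
  have hint : ∀ s : ℝ, 0 < s → IntegrableOn (fun y => 1 - Real.exp (-(s * y))) (Ioi 0) ν := by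
    intro s hs
    refine Integrable.mono (hmin_int.const_mul (max s 1))
      ((measurable_const.sub (Real.measurable_exp.comp
        (measurable_id.const_mul s).neg)).aestronglyMeasurable) ?_
    filter_upwards [ae_restrict_mem measurableSet_Ioi] with y hy
    obtain ⟨h1, h2⟩ := hexp_bound s y hs hy
    rw [Real.norm_eq_abs, Real.norm_eq_abs, abs_of_nonneg h1]
    have : 0 ≤ max s 1 * min y 1 := by
      have := le_min (le_of_lt (mem_Ioi.mp hy)) one_pos.le
      nlinarith [le_max_right s 1]
    rw [abs_of_nonneg this]
    exact h2
  have hνfin : ∀ ε : ℝ, 0 < ε → ν (Ioi ε) < ⊤ := by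
    intro ε hε
    have hle : ENNReal.ofReal (min ε 1) * ν (Ioi ε) ≤ ∫⁻ y in Ioi (0:ℝ), ENNReal.ofReal (min y 1) ∂ν := by
      calc ENNReal.ofReal (min ε 1) * ν (Ioi ε)
          = ∫⁻ _ in Ioi ε, ENNReal.ofReal (min ε 1) ∂ν := (setLIntegral_const _ _).symm
        _ ≤ ∫⁻ y in Ioi ε, ENNReal.ofReal (min y 1) ∂ν := by
            refine setLIntegral_mono (ENNReal.measurable_ofReal.comp hmin_meas) fun y hy => ?_
            exact ENNReal.ofReal_le_ofReal (min_le_min (le_of_lt hy) le_rfl)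
        _ ≤ ∫⁻ y in Ioi (0:ℝ), ENNReal.ofReal (min y 1) ∂ν :=
            lintegral_mono_set (Ioi_subset_Ioi hε.le)
    by_contra h
    rw [not_lt, top_le_iff] at h
    rw [h, ENNReal.mul_top (by simp [ENNReal.ofReal_eq_zero, not_le.mpr (lt_min hε one_pos), hε])] at hle
    exact hν.not_ge hle
  have htend : Tendsto (fun n : ℕ => ν (Ioi (1 / (n + 1) : ℝ))) atTop (𝓝 ⊤) := by
    have hun : (⋃ n : ℕ, Ioi ((1 : ℝ) / (n + 1))) = Ioi (0:ℝ) := by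
      ext x
      simp only [mem_iUnion, mem_Ioi]
      constructor
      · rintro ⟨n, hn⟩; exact lt_trans (by positivity) hn
      · intro hx
        obtain ⟨n, hn⟩ := exists_nat_one_div_lt hx
        exact ⟨n, hn⟩
    have hmon : Monotone fun n : ℕ => Ioi ((1 : ℝ) / (n + 1)) := by
      intro m n hmn
      apply Ioi_subset_Ioi
      apply div_le_div_of_nonneg_left one_pos.le (by positivity)
      push_cast; linarith [(Nat.cast_le (α := ℝ)).mpr hmn]
    have := tendsto_measure_iUnion_atTop (μ := ν) hmon
    rw [hun, hνinf] at this
    exact this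
  intro M
  set c : ℝ := 1 - Real.exp (-1) with hc
  have hcpos : 0 < c := by
    have : Real.exp (-1) < 1 := Real.exp_lt_one_iff.mpr (by norm_num)
    linarith
  have hKlt : (ENNReal.ofReal (max M 0 / c)) < ⊤ := ENNReal.ofReal_lt_top
  obtain ⟨n, hn⟩ := (htend.eventually (eventually_gt_nhds hKlt)).exists
  set ε : ℝ := 1 / (n + 1) with hε
  have hεpos : 0 < ε := by positivity
  refine ⟨ε⁻¹, by positivity, ?_⟩
  have hνε : ν (Ioi ε) < ⊤ := hνfin ε hεpos
  have htoReal : max M 0 / c < (ν (Ioi ε)).toReal := by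
    rw [← ENNReal.ofReal_lt_iff_lt_toReal (by positivity) hνε.ne]
    exact hn
  have hstep1 : c * (ν (Ioi ε)).toReal ≤ ∫ y in Ioi ε, (1 - Real.exp (-(ε⁻¹ * y))) ∂ν := by
    have hconst : IntegrableOn (fun _ : ℝ => c) (Ioi ε) ν :=
      integrableOn_const hνε.ne
    have hfon : IntegrableOn (fun y => 1 - Real.exp (-(ε⁻¹ * y))) (Ioi ε) ν :=
      (hint ε⁻¹ (by positivity)).mono_set (Ioi_subset_Ioi hεpos.le)
    have := setIntegral_mono_on hconst hfon measurableSet_Ioi (fun y hy => by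
      have h1 : (1:ℝ) ≤ ε⁻¹ * y := by
        rw [← div_le_iff₀' (by positivity : (0:ℝ) < ε⁻¹)]
        simpa using le_of_lt hy
      have : Real.exp (-(ε⁻¹ * y)) ≤ Real.exp (-1) := Real.exp_le_exp.mpr (by linarith)
      simp only [hc]; linarith)
    rwa [setIntegral_const, smul_eq_mul, mul_comm] at this
  have hstep2 : ∫ y in Ioi ε, (1 - Real.exp (-(ε⁻¹ * y))) ∂ν ≤ ψ ε⁻¹ := by
    rw [hψ ε⁻¹ (by positivity)]
    refine setIntegral_mono_set (hint ε⁻¹ (by positivity)) ?_ ?_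
    · filter_upwards [ae_restrict_mem measurableSet_Ioi] with y hy
      exact (hexp_bound ε⁻¹ y (by positivity) hy).1
    · exact HasSubset.Subset.eventuallyLE (Ioi_subset_Ioi hεpos.le)
  have : max M 0 ≤ c * (ν (Ioi ε)).toReal := by
    rw [← div_le_iff₀' hcpos]
    exact htoReal.le
  calc M ≤ max M 0 := le_max_left _ _
    _ ≤ c * (ν (Ioi ε)).toReal := this
    _ ≤ _ := le_trans hstep1 hstep2

private lemma key_choice {ψ : ℝ → ℝ} {β lam t r : ℝ}
    (hmono : ∀ ⦃s s' : ℝ⦄, 0 < s → s ≤ s' → ψ s ≤ ψ s')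
    (hunbdd : ∀ M : ℝ, ∃ s, 0 < s ∧ M ≤ ψ s)
    (hRV2 : Tendsto (fun s => ψ (2 * s) / ψ s) atTop (𝓝 ((2:ℝ) ^ β)))
    (hβ0 : 0 ≤ β) (hβ1 : β < 1) (hlam : 0 < lam) (ht : 0 < t) (hr : 0 < r)
    (hrβ : r < 1 / (1 - β)) :
    ∃ U : ℝ, 1 ≤ U ∧ ∀ u, U ≤ u → ∃ s, 0 < s ∧ lam * (u + 1) ^ r + u ≤ u * ψ s - t * s := by
  have h1β : 0 < 1 - β := by linarith
  have hcomm : ∀ u : ℝ, 1 ≤ u → (u + 1) ^ r ≤ 2 ^ r * u ^ r := by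
    intro u hu
    have h1 : (u + 1) ^ r ≤ (2 * u) ^ r :=
      Real.rpow_le_rpow (by linarith) (by linarith) hr.le
    rwa [Real.mul_rpow (by norm_num) (by linarith)] at h1
  rcases le_or_gt r 1 with hr1 | hr1
  · -- case r ≤ 1 : fixed s works
    obtain ⟨s0, hs0pos, hs0⟩ := hunbdd (lam * 2 ^ r + 2)
    refine ⟨max 1 (t * s0), le_max_left _ _, fun u hu => ?_⟩
    have hu1 : (1:ℝ) ≤ u := le_trans (le_max_left _ _) hu
    have huts : t * s0 ≤ u := le_trans (le_max_right _ _) hu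
    refine ⟨s0, hs0pos, ?_⟩
    have h1 : (u + 1) ^ r ≤ 2 ^ r * u := by
      have h2 : u ^ r ≤ u ^ (1:ℝ) := Real.rpow_le_rpow_of_exponent_le hu1 hr1
      rw [Real.rpow_one] at h2
      have h3 := hcomm u hu1
      nlinarith [Real.rpow_pos_of_pos (two_pos (α := ℝ)) r]
    have h2 : u * (lam * 2 ^ r + 2) ≤ u * ψ s0 :=
      mul_le_mul_of_nonneg_left hs0 (by linarith)
    have h4 : lam * (u + 1) ^ r ≤ lam * (2 ^ r * u) := mul_le_mul_of_nonneg_left h1 hlam.le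
    nlinarith
  · -- case 1 < r : use Potter bound with growing s = u^a
    have hβpos : 0 < β := by
      by_contra h
      push_neg at h
      have hβ0' : β = 0 := le_antisymm h hβ0
      rw [hβ0'] at hrβ
      norm_num at hrβ
      linarith
    have hrb : r * (1 - β) < 1 := by
      rw [lt_div_iff₀ h1β] at hrβ; linarith
    obtain ⟨δ, hδ⟩ : ∃ x : ℝ, x = ((r - 1) / r + β) / 2 := ⟨_, rfl⟩
    have hrpos : (0:ℝ) < r := hr
    have hδ1 : (r - 1) / r < β := by
      rw [div_lt_iff₀ hrpos]; nlinarith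
    have hδr : (r - 1) / r < δ := by rw [hδ]; linarith
    have hδβ : δ < β := by rw [hδ]; linarith
    have hδpos : 0 < δ :=
      lt_trans (div_pos (by linarith) hrpos) hδr
    have hδlt1 : δ < 1 := lt_trans hδβ hβ1
    have h1δ : 0 < 1 - δ := by linarith
    have hr1δ : r - 1 < r * δ := by
      have := (div_lt_iff₀ hrpos).mp hδr; linarith
    have hineq : (r - 1) / δ < 1 / (1 - δ) := by
      rw [div_lt_div_iff₀ hδpos h1δ]; nlinarith
    obtain ⟨a, ha⟩ : ∃ x : ℝ, x = ((r - 1) / δ + 1 / (1 - δ)) / 2 := ⟨_, rfl⟩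
    have ha_lb : (r - 1) / δ < a := by rw [ha]; linarith
    have ha_ub : a < 1 / (1 - δ) := by rw [ha]; linarith
    have hapos : 0 < a := lt_trans (div_pos (by linarith) hδpos) ha_lb
    obtain ⟨γ, hγ⟩ : ∃ x : ℝ, x = 1 + a * δ := ⟨_, rfl⟩
    have hγr : r < γ := by
      have := (div_lt_iff₀ hδpos).mp ha_lb
      rw [hγ]; linarith
    have hγa : a < γ := by
      have := (lt_div_iff₀ h1δ).mp ha_ub
      rw [hγ]; nlinarith
    have hγ1 : 1 < γ := by rw [hγ]; nlinarith
    obtain ⟨s₁, hs₁pos, hs₁⟩ := hunbdd 1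
    have hpos : ∀ s, s₁ ≤ s → 0 < ψ s := fun s hs =>
      lt_of_lt_of_le one_pos (le_trans hs₁ (hmono hs₁pos hs))
    obtain ⟨C, hC, S, hS1, hPotter⟩ := potter_lower hmono hs₁pos hpos hRV2 hδpos.le hδβ
    obtain ⟨L, hL⟩ : ∃ x : ℝ, x = lam * 2 ^ r := ⟨_, rfl⟩
    have hLpos : 0 < L := by
      rw [hL]; exact mul_pos hlam (Real.rpow_pos_of_pos two_pos r)
    set U : ℝ := max (max 1 (S ^ a⁻¹))
      (max ((3 * t / C) ^ (γ - a)⁻¹) (max ((3 * L / C) ^ (γ - r)⁻¹) ((3 * 1 / C) ^ (γ - 1)⁻¹))) with hU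
    refine ⟨U, le_trans (le_max_left _ _) (le_max_left _ _), fun u hu => ?_⟩
    have hu1 : (1:ℝ) ≤ u := le_trans (le_trans (le_max_left _ _) (le_max_left _ _)) hu
    have hu0 : (0:ℝ) < u := lt_of_lt_of_le one_pos hu1
    refine ⟨u ^ a, Real.rpow_pos_of_pos hu0 a, ?_⟩
    -- u^a ≥ S
    have huaS : S ≤ u ^ a := by
      have h1 : S ^ a⁻¹ ≤ u := le_trans (le_trans (le_max_right _ _) (le_max_left _ _)) hu
      have h2 : (S ^ a⁻¹) ^ a ≤ u ^ a :=
        Real.rpow_le_rpow (Real.rpow_nonneg (by linarith) _) h1 hapos.le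
      rwa [Real.rpow_inv_rpow (by linarith) hapos.ne'] at h2
    have hψlb : C * (u ^ a) ^ δ ≤ ψ (u ^ a) := hPotter _ huaS
    have hpow : (u ^ a) ^ δ = u ^ (a * δ) := (Real.rpow_mul hu0.le a δ).symm
    -- u * ψ(u^a) ≥ C * u^γ
    have hmain : C * u ^ γ ≤ u * ψ (u ^ a) := by
      have h1 : u * (C * (u ^ a) ^ δ) ≤ u * ψ (u ^ a) :=
        mul_le_mul_of_nonneg_left hψlb hu0.le
      have h2 : u * (C * (u ^ a) ^ δ) = C * u ^ γ := by
        rw [hpow, hγ, Real.rpow_add hu0, Real.rpow_one]; ring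
      linarith
    -- generic domination helper
    have hgen : ∀ K e : ℝ, 0 < K → 0 < γ - e → (3 * K / C) ^ (γ - e)⁻¹ ≤ u →
        3 * (K * u ^ e) ≤ C * u ^ γ := by
      intro K e hK he hKu
      have h1 : ((3 * K / C) ^ (γ - e)⁻¹) ^ (γ - e) ≤ u ^ (γ - e) :=
        Real.rpow_le_rpow (Real.rpow_nonneg (by positivity) _) hKu he.le
      rw [Real.rpow_inv_rpow (by positivity) he.ne'] at h1
      have h2 : 3 * K ≤ C * u ^ (γ - e) := by
        rw [div_le_iff₀ hC] at h1; linarith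
      have h3 : (3 * K) * u ^ e ≤ (C * u ^ (γ - e)) * u ^ e :=
        mul_le_mul_of_nonneg_right h2 (Real.rpow_nonneg hu0.le e)
      have h4 : C * u ^ (γ - e) * u ^ e = C * u ^ γ := by
        rw [mul_assoc, ← Real.rpow_add hu0, sub_add_cancel]
      linarith
    have hA : 3 * (t * u ^ a) ≤ C * u ^ γ :=
      hgen t a ht (by linarith)
        (le_trans (le_trans (le_max_left _ _) (le_max_right _ _)) hu)
    have hB : 3 * (L * u ^ r) ≤ C * u ^ γ :=
      hgen L r hLpos (by linarith)
        (le_trans (le_trans (le_trans (le_max_left _ _) (le_max_right _ _)) (le_max_right _ _)) hu)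
    have hD : 3 * u ≤ C * u ^ γ := by
      have := hgen 1 1 one_pos (by linarith)
        (le_trans (le_trans (le_trans (le_max_right _ _) (le_max_right _ _)) (le_max_right _ _)) hu)
      rw [Real.rpow_one] at this; linarith
    have hsum : t * u ^ a + L * u ^ r + u ≤ C * u ^ γ := by linarith
    have hfin : lam * (u + 1) ^ r ≤ L * u ^ r := by
      have h1 := mul_le_mul_of_nonneg_left (hcomm u hu1) hlam.le
      rw [hL]; linarith
    linarith

set_option maxHeartbeats 1000000 in
/-- Let `D` be a subordinator (a nondecreasing Lévy process started at `0`,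
with càdlàg paths, stationary independent increments, and Laplace transform
`E[exp (-s D_u)] = exp (-u ψ s)`) whose Lévy measure `ν` is infinite, and whose Laplace
exponent `ψ` is regularly varying at `∞` with index `β ∈ [0,1)`.  Let `E` be the inverse
subordinator `E_t = inf {u > 0 : D_u > t}`.  Fix `λ > 0`, `t > 0`, `r > 0`.
If `r < 1/(1-β)`, then `E[exp (λ E_t ^ r)] < ∞`. -/
theorem exp_moment_inverse_subordinator_finite
    {Ω : Type*} [MeasurableSpace Ω] (P : Measure Ω) [IsProbabilityMeasure P]
    (D : ℝ → Ω → ℝ) (ν : Measure ℝ) (ψ : ℝ → ℝ) (β lam t r : ℝ)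
    (hDmeas : ∀ u, Measurable (D u))
    (hD0 : ∀ ω, D 0 ω = 0)
    (hDmono : ∀ ω, MonotoneOn (fun u => D u ω) (Set.Ici 0))
    (hDrc : ∀ ω, ∀ u, 0 ≤ u → ContinuousWithinAt (fun v => D v ω) (Set.Ici u) u)
    (hstat : ∀ s u : ℝ, 0 ≤ s → 0 ≤ u →
      Measure.map (fun ω => D (s + u) ω - D s ω) P = Measure.map (D u) P)
    (hindep : ∀ (n : ℕ) (τ : Fin (n + 1) → ℝ), (∀ i, 0 ≤ τ i) → Monotone τ →
      ProbabilityTheory.iIndepFun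
        (fun i : Fin n => fun ω => D (τ i.succ) ω - D (τ i.castSucc) ω) P)
    (hν : ∫⁻ y in Set.Ioi (0 : ℝ), ENNReal.ofReal (min y 1) ∂ν < ⊤)
    (hνinf : ν (Set.Ioi (0 : ℝ)) = ⊤)
    (hψ : ∀ s, 0 < s → ψ s = ∫ y in Set.Ioi (0 : ℝ), (1 - Real.exp (-(s * y))) ∂ν)
    (hlaplace : ∀ s, 0 < s → ∀ u, 0 ≤ u →
      ∫ ω, Real.exp (-(s * D u ω)) ∂P = Real.exp (-(u * ψ s)))
    (hβ0 : 0 ≤ β) (hβ1 : β < 1)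
    (hRV : ∀ c, 0 < c → Tendsto (fun s => ψ (c * s) / ψ s) atTop (𝓝 (c ^ β)))
    (hlam : 0 < lam) (ht : 0 < t) (hr : 0 < r) (hrβ : r < 1 / (1 - β)) :
    ∫⁻ ω, ENNReal.ofReal (Real.exp (lam * (sInf {u : ℝ | 0 < u ∧ t < D u ω}) ^ r)) ∂P < ⊤ := by
  classical
  -- nonnegativity of D
  have hDnn : ∀ ω, ∀ u : ℝ, 0 ≤ u → 0 ≤ D u ω := by
    intro ω u hu
    have := hDmono ω (mem_Ici.mpr le_rfl) (mem_Ici.mpr hu) hu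
    simpa [hD0 ω] using this
  -- monotonicity and unboundedness of ψ
  have hψmono : ∀ ⦃s s' : ℝ⦄, 0 < s → s ≤ s' → ψ s ≤ ψ s' :=
    psi_mono_aux P (D 1) ψ (hDmeas 1) (fun ω => hDnn ω 1 one_pos.le)
      (fun s hs => hlaplace s hs 1 one_pos.le)
  have hunbdd : ∀ M : ℝ, ∃ s, 0 < s ∧ M ≤ ψ s := psi_unbounded_aux ν ψ hν hνinf hψ
  obtain ⟨U, hU1, hkey⟩ := key_choice hψmono hunbdd (hRV 2 two_pos) hβ0 hβ1 hlam ht hr hrβ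
  -- a natural threshold
  obtain ⟨N, hNU⟩ := exists_nat_ge U
  have hN1 : (1:ℝ) ≤ (N:ℝ) := le_trans hU1 hNU
  have hNn : ∀ n : ℕ, U ≤ (N:ℝ) + n := fun n =>
    le_trans hNU (le_add_of_nonneg_right (Nat.cast_nonneg n))
  choose s hspos hsineq using fun n : ℕ => hkey ((N:ℝ) + n) (hNn n)
  -- Chernoff bound
  have chernoff : ∀ n : ℕ, P {ω | D ((N:ℝ) + n) ω ≤ t} ≤
      ENNReal.ofReal (Real.exp (-(lam * (((N:ℝ) + n) + 1) ^ r + ((N:ℝ) + n)))) := by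
    intro n
    set u : ℝ := (N:ℝ) + n with hu
    have hu0 : 0 ≤ u := by rw [hu]; positivity
    set σ : ℝ := s n with hσdef
    have hσ : 0 < σ := hspos n
    have hmeasE : Measurable fun ω => Real.exp (-(σ * D u ω)) :=
      Real.measurable_exp.comp ((hDmeas u).const_mul σ).neg
    have hInt : Integrable (fun ω => Real.exp (-(σ * D u ω))) P := by
      refine ⟨hmeasE.aestronglyMeasurable, ?_⟩
      refine HasFiniteIntegral.of_bounded (C := 1) (ae_of_all _ fun ω => ?_)
      rw [Real.norm_eq_abs, abs_of_pos (Real.exp_pos _)]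
      exact Real.exp_le_one_iff.mpr (by nlinarith [hDnn ω u hu0])
    have hlint : ∫⁻ ω, ENNReal.ofReal (Real.exp (-(σ * D u ω))) ∂P
        = ENNReal.ofReal (Real.exp (-(u * ψ σ))) := by
      rw [← ofReal_integral_eq_lintegral_ofReal hInt (ae_of_all _ fun ω => (Real.exp_pos _).le),
        hlaplace σ hσ u hu0]
    set a : ENNReal := ENNReal.ofReal (Real.exp (-(σ * t))) with hadef
    have ha0 : a ≠ 0 := by
      rw [hadef]
      simp [ENNReal.ofReal_eq_zero, not_le, Real.exp_pos]
    have hatop : a ≠ ⊤ := by rw [hadef]; exact ENNReal.ofReal_ne_top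
    have hsubset : {ω | D u ω ≤ t} ⊆
        {ω | a ≤ ENNReal.ofReal (Real.exp (-(σ * D u ω)))} := by
      intro ω hω
      rw [hadef]
      exact ENNReal.ofReal_le_ofReal (Real.exp_le_exp.mpr (by nlinarith [Set.mem_setOf_eq ▸ hω]))
    have hmarkov := mul_meas_ge_le_lintegral₀ (μ := P)
      (f := fun ω => ENNReal.ofReal (Real.exp (-(σ * D u ω))))
      ((ENNReal.measurable_ofReal.comp hmeasE).aemeasurable) a
    rw [hlint] at hmarkov
    have h5 : P {ω | D u ω ≤ t} ≤ a⁻¹ * (a * P {ω | a ≤ ENNReal.ofReal (Real.exp (-(σ * D u ω)))}) := by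
      rw [← mul_assoc, ENNReal.inv_mul_cancel ha0 hatop, one_mul]
      exact measure_mono hsubset
    have h6 : P {ω | D u ω ≤ t} ≤ a⁻¹ * ENNReal.ofReal (Real.exp (-(u * ψ σ))) :=
      le_trans h5 (mul_le_mul_right hmarkov _)
    have hainv : a⁻¹ = ENNReal.ofReal (Real.exp (σ * t)) := by
      rw [hadef, ← ENNReal.ofReal_inv_of_pos (Real.exp_pos _)]
      congr 1
      rw [← Real.exp_neg, neg_neg]
    rw [hainv, ← ENNReal.ofReal_mul (Real.exp_pos _).le, ← Real.exp_add] at h6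
    refine le_trans h6 (ENNReal.ofReal_le_ofReal (Real.exp_le_exp.mpr ?_))
    have := hsineq n
    rw [← hu, ← hσdef] at this
    linarith
  -- covering sets
  set A : ℕ → Set Ω := fun n =>
    {ω | t < D ((N:ℝ) + n) ω ∧ ∀ m : ℕ, m < n → D ((N:ℝ) + m) ω ≤ t} with hA
  set R : Set Ω := {ω | ∀ m : ℕ, D ((N:ℝ) + m) ω ≤ t} with hR
  have hcover : R ∪ ⋃ n, A n = univ := by
    apply eq_univ_of_forall
    intro ω
    by_cases h : ∀ m : ℕ, D ((N:ℝ) + m) ω ≤ t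
    · exact Or.inl h
    · push_neg at h
      have hex : ∃ m : ℕ, t < D ((N:ℝ) + m) ω := h
      refine Or.inr (mem_iUnion.mpr ⟨Nat.find hex, Nat.find_spec hex, fun m hm => ?_⟩)
      exact not_lt.mp (Nat.find_min hex hm)
  -- the inverse subordinator and its bounds
  have hEnn : ∀ ω, 0 ≤ sInf {v : ℝ | 0 < v ∧ t < D v ω} :=
    fun ω => Real.sInf_nonneg fun x hx => hx.1.le
  have hE_A : ∀ (n : ℕ) ω, ω ∈ A n → sInf {v : ℝ | 0 < v ∧ t < D v ω} ≤ (N:ℝ) + n := by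
    intro n ω hω
    refine csInf_le ⟨0, fun x hx => hx.1.le⟩ ⟨by positivity, hω.1⟩
  have hbound_fn : ∀ (n : ℕ) ω, ω ∈ A n →
      ENNReal.ofReal (Real.exp (lam * (sInf {v : ℝ | 0 < v ∧ t < D v ω}) ^ r)) ≤
      ENNReal.ofReal (Real.exp (lam * ((N:ℝ) + n) ^ r)) := by
    intro n ω hω
    refine ENNReal.ofReal_le_ofReal (Real.exp_le_exp.mpr (mul_le_mul_of_nonneg_left ?_ hlam.le))
    exact Real.rpow_le_rpow (hEnn ω) (hE_A n ω hω) hr.le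
  -- piecewise integral bounds
  have hint_A : ∀ n : ℕ,
      ∫⁻ ω in A n, ENNReal.ofReal (Real.exp (lam * (sInf {v : ℝ | 0 < v ∧ t < D v ω}) ^ r)) ∂P ≤
        ENNReal.ofReal (Real.exp (lam * ((N:ℝ) + n) ^ r)) * P (A n) := by
    intro n
    calc ∫⁻ ω in A n, ENNReal.ofReal (Real.exp (lam * (sInf {v : ℝ | 0 < v ∧ t < D v ω}) ^ r)) ∂P
        ≤ ∫⁻ _ in A n, ENNReal.ofReal (Real.exp (lam * ((N:ℝ) + n) ^ r)) ∂P :=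
          setLIntegral_mono measurable_const (hbound_fn n)
      _ = ENNReal.ofReal (Real.exp (lam * ((N:ℝ) + n) ^ r)) * P (A n) := setLIntegral_const _ _
  -- measure bounds for the pieces and the residual set
  have hPA : ∀ n : ℕ, P (A (n + 1)) ≤
      ENNReal.ofReal (Real.exp (-(lam * (((N:ℝ) + n) + 1) ^ r + ((N:ℝ) + n)))) := by
    intro n
    refine le_trans (measure_mono fun ω hω => ?_) (chernoff n)
    exact hω.2 n (Nat.lt_succ_self n)
  have hPR : P R = 0 := by
    have hPRle : ∀ n : ℕ, P R ≤ ENNReal.ofReal (Real.exp (-(n:ℝ))) := by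
      intro n
      refine le_trans (le_trans (measure_mono fun ω hω => hω n) (chernoff n))
        (ENNReal.ofReal_le_ofReal (Real.exp_le_exp.mpr ?_))
      have h1 : 0 ≤ lam * (((N:ℝ) + n) + 1) ^ r :=
        mul_nonneg hlam.le (Real.rpow_nonneg (by positivity) r)
      linarith
    have htend : Tendsto (fun n : ℕ => ENNReal.ofReal (Real.exp (-(n:ℝ)))) atTop (𝓝 0) := by
      have h1 : Tendsto (fun n : ℕ => Real.exp (-(n:ℝ))) atTop (𝓝 0) := by
        have h2 : ∀ n : ℕ, Real.exp (-(n:ℝ)) = Real.exp (-1) ^ n := by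
          intro n; rw [← Real.exp_nat_mul]; congr 1; ring
        simp only [h2]
        exact tendsto_pow_atTop_nhds_zero_of_lt_one (Real.exp_pos _).le
          (Real.exp_lt_one_iff.mpr (by norm_num))
      simpa [ENNReal.ofReal_zero] using ENNReal.tendsto_ofReal h1
    exact le_zero_iff.mp (ge_of_tendsto' htend hPRle)
  -- geometric sum bound
  have hterm : ∀ n : ℕ,
      ENNReal.ofReal (Real.exp (lam * ((N:ℝ) + ((n + 1 : ℕ) : ℝ)) ^ r)) * P (A (n + 1)) ≤
        ENNReal.ofReal (Real.exp (-(n:ℝ))) := by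
    intro n
    have h1 : ((N:ℝ) + ((n:ℝ)+1)) = ((N:ℝ) + n) + 1 := by ring
    calc ENNReal.ofReal (Real.exp (lam * ((N:ℝ) + ((n + 1 : ℕ) : ℝ)) ^ r)) * P (A (n + 1))
        ≤ ENNReal.ofReal (Real.exp (lam * (((N:ℝ) + n) + 1) ^ r)) *
            ENNReal.ofReal (Real.exp (-(lam * (((N:ℝ) + n) + 1) ^ r + ((N:ℝ) + n)))) := by
          refine mul_le_mul' (le_of_eq ?_) (hPA n)
          congr 3
          push_cast
          ring
      _ = ENNReal.ofReal (Real.exp (lam * (((N:ℝ) + n) + 1) ^ r +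
            -(lam * (((N:ℝ) + n) + 1) ^ r + ((N:ℝ) + n)))) := by
          rw [← ENNReal.ofReal_mul (Real.exp_pos _).le, ← Real.exp_add]
      _ ≤ ENNReal.ofReal (Real.exp (-(n:ℝ))) := by
          refine ENNReal.ofReal_le_ofReal (Real.exp_le_exp.mpr ?_)
          have : (0:ℝ) ≤ (N:ℝ) := by positivity
          linarith
  have hgeo : ∑' n : ℕ, ENNReal.ofReal (Real.exp (-(n:ℝ))) < ⊤ := by
    have h2 : ∀ n : ℕ, ENNReal.ofReal (Real.exp (-(n:ℝ))) = ENNReal.ofReal (Real.exp (-1)) ^ n := by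
      intro n
      rw [← ENNReal.ofReal_pow (Real.exp_pos _).le, ← Real.exp_nat_mul]
      congr 2; ring
    simp only [h2]
    rw [ENNReal.tsum_geometric]
    refine ENNReal.inv_lt_top.mpr (tsub_pos_iff_lt.mpr ?_)
    exact ENNReal.ofReal_lt_one.mpr (Real.exp_lt_one_iff.mpr (by norm_num))
  -- final assembly
  have hmain : ∫⁻ ω, ENNReal.ofReal (Real.exp (lam * (sInf {v : ℝ | 0 < v ∧ t < D v ω}) ^ r)) ∂P ≤
      0 + (ENNReal.ofReal (Real.exp (lam * ((N:ℝ) + (0:ℕ)) ^ r)) * P (A 0) +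
        ∑' n : ℕ, ENNReal.ofReal (Real.exp (-(n:ℝ)))) := by
    calc ∫⁻ ω, ENNReal.ofReal (Real.exp (lam * (sInf {v : ℝ | 0 < v ∧ t < D v ω}) ^ r)) ∂P
        = ∫⁻ ω in R ∪ ⋃ n, A n,
            ENNReal.ofReal (Real.exp (lam * (sInf {v : ℝ | 0 < v ∧ t < D v ω}) ^ r)) ∂P := by
          rw [hcover, setLIntegral_univ]
      _ ≤ (∫⁻ ω in R, ENNReal.ofReal (Real.exp (lam * (sInf {v : ℝ | 0 < v ∧ t < D v ω}) ^ r)) ∂P) +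
          ∫⁻ ω in ⋃ n, A n,
            ENNReal.ofReal (Real.exp (lam * (sInf {v : ℝ | 0 < v ∧ t < D v ω}) ^ r)) ∂P :=
          lintegral_union_le _ _ _
      _ ≤ 0 + ∑' n : ℕ, ∫⁻ ω in A n,
            ENNReal.ofReal (Real.exp (lam * (sInf {v : ℝ | 0 < v ∧ t < D v ω}) ^ r)) ∂P := by
          gcongr
          · rw [setLIntegral_measure_zero _ _ hPR]
          · exact lintegral_iUnion_le _ _
      _ ≤ 0 + (ENNReal.ofReal (Real.exp (lam * ((N:ℝ) + (0:ℕ)) ^ r)) * P (A 0) +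
            ∑' n : ℕ, ENNReal.ofReal (Real.exp (-(n:ℝ)))) := by
          gcongr
          rw [tsum_eq_zero_add' ENNReal.summable]
          exact add_le_add (hint_A 0)
            (Summable.tsum_le_tsum (fun n => le_trans (hint_A (n+1)) (hterm n))
              ENNReal.summable ENNReal.summable)
  refine lt_of_le_of_lt hmain ?_
  rw [zero_add]
  exact ENNReal.add_lt_top.mpr
    ⟨ENNReal.mul_lt_top ENNReal.ofReal_lt_top (measure_lt_top P _), hgeo⟩
end

section
/- Let D be a subordinator with infinite Lévy measure whose Laplace exponent ψ is regularly varying at ∞ with index β ∈ [0,1), and let E be its inverse subordinator. Fix λ > 0, t > 0 and r > 0. If r > 1/(1−β), then E[exp(λ E_t^r)] = ∞. -/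
open MeasureTheory Filter Topology Set

lemma rv_growth (ψ : ℝ → ℝ) (β : ℝ) (hβ0 : 0 ≤ β)
    (hpos : ∀ s, 0 < s → 0 < ψ s)
    (hmono : ∀ s1 s2, 0 < s1 → s1 ≤ s2 → ψ s1 ≤ ψ s2)
    (hRV : ∀ c, 0 < c → Tendsto (fun s => ψ (c * s) / ψ s) atTop (𝓝 (c ^ β)))
    {α : ℝ} (hα : β < α) : Tendsto (fun s => ψ s / s ^ α) atTop (𝓝 0) := by
  set ε := (α - β) / 2 with hε
  have hεpos : 0 < ε := by rw [hε]; linarith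
  have hβε : β + ε < α := by rw [hε]; linarith
  set K : ℝ := (2:ℝ) ^ (β + ε) with hK
  have hKgt : (2:ℝ) ^ β < K := by
    apply Real.rpow_lt_rpow_left_iff (by norm_num : (1:ℝ) < 2) |>.2
    linarith
  -- eventually ψ(2s) ≤ K ψ(s)
  have hev : ∀ᶠ s in atTop, ψ (2 * s) / ψ s < K :=
    (hRV 2 (by norm_num)).eventually_lt_const hKgt
  obtain ⟨s1, hs1⟩ := hev.exists_forall_of_atTop
  set s0 : ℝ := max s1 1 with hs0
  have hs0pos : (0:ℝ) < s0 := lt_of_lt_of_le one_pos (le_max_right _ _)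
  have hs01 : (1:ℝ) ≤ s0 := le_max_right _ _
  have hstep : ∀ s, s0 ≤ s → ψ (2 * s) ≤ K * ψ s := by
    intro s hs
    have hspos : 0 < s := lt_of_lt_of_le hs0pos hs
    have h1 := hs1 s (le_trans (le_max_left _ _) hs)
    have := (div_lt_iff₀ (hpos s hspos)).1 h1
    linarith
  have hiter : ∀ n : ℕ, ψ (2 ^ n * s0) ≤ K ^ n * ψ s0 := by
    intro n
    induction n with
    | zero => simp
    | succ n ih =>
      have h2n : s0 ≤ 2 ^ n * s0 := by
        have h1 : (1:ℝ) ≤ 2 ^ n := one_le_pow₀ (by norm_num)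
        nlinarith [hs0pos]
      calc ψ (2 ^ (n+1) * s0) = ψ (2 * (2 ^ n * s0)) := by ring_nf
        _ ≤ K * ψ (2 ^ n * s0) := hstep _ h2n
        _ ≤ K * (K ^ n * ψ s0) := by
            have hKpos : 0 < K := Real.rpow_pos_of_pos (by norm_num) _
            nlinarith [hKpos]
        _ = K ^ (n+1) * ψ s0 := by ring
  -- main bound: for s ≥ s0, ψ s ≤ C * s ^ (β+ε)
  set C : ℝ := ψ s0 * (2 / s0) ^ (β + ε) with hC
  have hbound : ∀ s, s0 ≤ s → ψ s ≤ C * s ^ (β + ε) := by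
    intro s hs
    have hspos : 0 < s := lt_of_lt_of_le hs0pos hs
    have hds : (1:ℝ) ≤ s / s0 := (one_le_div hs0pos).2 hs
    set n : ℕ := ⌈Real.logb 2 (s / s0)⌉₊ with hn
    have hlb0 : 0 ≤ Real.logb 2 (s / s0) := Real.logb_nonneg (by norm_num) hds
    have h2n_ge : s / s0 ≤ 2 ^ n := by
      have h1 : Real.logb 2 (s / s0) ≤ (n : ℝ) := Nat.le_ceil _
      have := Real.rpow_le_rpow_left_iff (x := (2:ℝ)) (by norm_num : (1:ℝ) < 2) |>.2 h1
      rwa [Real.rpow_logb (by norm_num) (by norm_num) (by positivity),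
        Real.rpow_natCast] at this
    have h2n_le : (2:ℝ) ^ n ≤ 2 * (s / s0) := by
      have h1 : (n : ℝ) ≤ Real.logb 2 (s / s0) + 1 := le_of_lt (Nat.ceil_lt_add_one hlb0)
      have := Real.rpow_le_rpow_left_iff (x := (2:ℝ)) (by norm_num : (1:ℝ) < 2) |>.2 h1
      rwa [Real.rpow_natCast, Real.rpow_add (by norm_num), Real.rpow_logb (by norm_num)
        (by norm_num) (by positivity), Real.rpow_one, mul_comm] at this
    have hle1 : ψ s ≤ ψ (2 ^ n * s0) := by
      apply hmono s _ hspos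
      rw [← div_le_iff₀ hs0pos] at *
      exact h2n_ge
    have hle2 : ψ (2 ^ n * s0) ≤ K ^ n * ψ s0 := hiter n
    have hKn : K ^ n = ((2:ℝ) ^ n) ^ (β + ε) := by
      rw [hK, ← Real.rpow_natCast ((2:ℝ) ^ (β+ε)) n, ← Real.rpow_natCast (2:ℝ) n,
        ← Real.rpow_mul (by norm_num), ← Real.rpow_mul (by norm_num), mul_comm]
    have hKn_le : K ^ n ≤ (2 * (s / s0)) ^ (β + ε) := by
      rw [hKn]
      exact Real.rpow_le_rpow (by positivity) h2n_le (by linarith)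
    have hfin : (2 * (s / s0)) ^ (β + ε) = (2 / s0) ^ (β + ε) * s ^ (β + ε) := by
      rw [← Real.mul_rpow (by positivity) (le_of_lt hspos)]
      ring_nf
    have hψs0 : 0 < ψ s0 := hpos s0 hs0pos
    calc ψ s ≤ K ^ n * ψ s0 := le_trans hle1 hle2
      _ ≤ (2 * (s / s0)) ^ (β + ε) * ψ s0 := by nlinarith
      _ = C * s ^ (β + ε) := by rw [hfin, hC]; ring
  -- conclude by squeeze
  have hCpos : 0 < C := by
    have := hpos s0 hs0pos
    rw [hC]; positivity
  clear_value C
  apply squeeze_zero' (f := fun s => ψ s / s ^ α) (g := fun s => C * s ^ (β + ε - α))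
  · filter_upwards [eventually_ge_atTop (max s0 1)] with s hs
    have hspos : (0:ℝ) < s := lt_of_lt_of_le one_pos (le_trans (le_max_right _ _) hs)
    have hψ := (hpos s hspos).le
    positivity
  · filter_upwards [eventually_ge_atTop (max s0 1)] with s hs
    have hspos : (0:ℝ) < s := lt_of_lt_of_le one_pos (le_trans (le_max_right _ _) hs)
    have hb := hbound s (le_trans (le_max_left _ _) hs)
    rw [div_le_iff₀ (Real.rpow_pos_of_pos hspos α)]
    calc ψ s ≤ C * s ^ (β + ε) := hb
      _ = C * s ^ (β + ε - α) * s ^ α := by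
          rw [mul_assoc, ← Real.rpow_add hspos, sub_add_cancel]
  · have : Tendsto (fun s : ℝ => s ^ (β + ε - α)) atTop (𝓝 0) := by
      have := tendsto_rpow_neg_atTop (y := α - (β + ε)) (by linarith)
      convert this using 2 with s
      ring_nf
    have := this.const_mul C
    simpa using this

set_option maxHeartbeats 1000000

/-- Let `D` be a subordinator (a nondecreasing Lévy process started at `0`,
with càdlàg paths, stationary independent increments, and Laplace transform
`E[exp (-s D_u)] = exp (-u ψ s)`) whose Lévy measure `ν` is infinite, and whose Laplace
exponent `ψ` is regularly varying at `∞` with index `β ∈ [0,1)`.  Let `E` be the inverse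
subordinator `E_t = inf {u > 0 : D_u > t}`.  Fix `λ > 0`, `t > 0`, `r > 0`.
If `r > 1/(1-β)`, then `E[exp (λ E_t ^ r)] = ∞`. -/
theorem exp_moment_inverse_subordinator_infinite
    {Ω : Type*} [MeasurableSpace Ω] (P : Measure Ω) [IsProbabilityMeasure P]
    (D : ℝ → Ω → ℝ) (ν : Measure ℝ) (ψ : ℝ → ℝ) (β lam t r : ℝ)
    (hDmeas : ∀ u, Measurable (D u))
    (hD0 : ∀ ω, D 0 ω = 0)
    (hDmono : ∀ ω, MonotoneOn (fun u => D u ω) (Set.Ici 0))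
    (hDrc : ∀ ω, ∀ u, 0 ≤ u → ContinuousWithinAt (fun v => D v ω) (Set.Ici u) u)
    (hstat : ∀ s u : ℝ, 0 ≤ s → 0 ≤ u →
      Measure.map (fun ω => D (s + u) ω - D s ω) P = Measure.map (D u) P)
    (hindep : ∀ (n : ℕ) (τ : Fin (n + 1) → ℝ), (∀ i, 0 ≤ τ i) → Monotone τ →
      ProbabilityTheory.iIndepFun
        (fun i : Fin n => fun ω => D (τ i.succ) ω - D (τ i.castSucc) ω) P)
    (hν : ∫⁻ y in Set.Ioi (0 : ℝ), ENNReal.ofReal (min y 1) ∂ν < ⊤)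
    (hνinf : ν (Set.Ioi (0 : ℝ)) = ⊤)
    (hψ : ∀ s, 0 < s → ψ s = ∫ y in Set.Ioi (0 : ℝ), (1 - Real.exp (-(s * y))) ∂ν)
    (hlaplace : ∀ s, 0 < s → ∀ u, 0 ≤ u →
      ∫ ω, Real.exp (-(s * D u ω)) ∂P = Real.exp (-(u * ψ s)))
    (hβ0 : 0 ≤ β) (hβ1 : β < 1)
    (hRV : ∀ c, 0 < c → Tendsto (fun s => ψ (c * s) / ψ s) atTop (𝓝 (c ^ β)))
    (hlam : 0 < lam) (ht : 0 < t) (hr : 0 < r) (hrβ : 1 / (1 - β) < r) :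
    ∫⁻ ω, ENNReal.ofReal (Real.exp (lam * (sInf {u : ℝ | 0 < u ∧ t < D u ω}) ^ r)) ∂P = ⊤ := by
  -- nonnegativity of D
  have hDnn : ∀ u, 0 ≤ u → ∀ ω, 0 ≤ D u ω := by
    intro u hu ω
    have := hDmono ω (Set.mem_Ici.2 le_rfl) (Set.mem_Ici.2 hu) hu
    simpa [hD0 ω] using this
  -- integrability of the Lévy integrand
  have hInt : ∀ s, 0 < s → IntegrableOn (fun y => 1 - Real.exp (-(s * y))) (Set.Ioi 0) ν := by
    intro s hs
    have hgInt : IntegrableOn (fun y => max s 1 * min y 1) (Set.Ioi 0) ν := by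
      constructor
      · exact ((measurable_const.mul ((measurable_id.min measurable_const))).aestronglyMeasurable)
      · rw [hasFiniteIntegral_iff_norm]
        calc ∫⁻ y in Set.Ioi 0, ENNReal.ofReal ‖max s 1 * min y 1‖ ∂ν
            ≤ ∫⁻ y in Set.Ioi 0, ENNReal.ofReal (max s 1) * ENNReal.ofReal (min y 1) ∂ν := by
              apply lintegral_mono_ae
              filter_upwards [ae_restrict_mem measurableSet_Ioi] with y hy
              rw [← ENNReal.ofReal_mul (le_max_of_le_right zero_le_one)]
              apply ENNReal.ofReal_le_ofReal
              rw [Real.norm_eq_abs, abs_mul, abs_of_nonneg (le_max_of_le_right zero_le_one),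
                abs_of_nonneg (le_min (le_of_lt hy) zero_le_one)]
          _ = ENNReal.ofReal (max s 1) * ∫⁻ y in Set.Ioi 0, ENNReal.ofReal (min y 1) ∂ν :=
              lintegral_const_mul' _ _ ENNReal.ofReal_ne_top
          _ < ⊤ := ENNReal.mul_lt_top ENNReal.ofReal_lt_top hν
    apply hgInt.mono'
    · exact ((measurable_const.sub ((measurable_id.const_mul s).neg.exp)).aestronglyMeasurable)
    · filter_upwards [ae_restrict_mem measurableSet_Ioi] with y hy
      have hy0 : (0:ℝ) < y := hy
      rw [Real.norm_eq_abs, abs_of_nonneg]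
      · rcases le_or_gt y 1 with h1 | h1
        · have : 1 - Real.exp (-(s * y)) ≤ s * y := by
            nlinarith [Real.add_one_le_exp (-(s * y))]
          calc 1 - Real.exp (-(s * y)) ≤ s * y := this
            _ ≤ max s 1 * min y 1 := by
                rw [min_eq_left h1]
                exact mul_le_mul_of_nonneg_right (le_max_left _ _) hy0.le
        · have : 1 - Real.exp (-(s * y)) ≤ 1 := by
            nlinarith [Real.exp_pos (-(s * y))]
          calc 1 - Real.exp (-(s * y)) ≤ 1 := this
            _ ≤ max s 1 * min y 1 := by
                rw [min_eq_right h1.le]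
                simpa using le_max_right s 1
      · nlinarith [Real.exp_le_one_iff.2 (by nlinarith : -(s*y) ≤ 0)]
  -- positivity of ψ
  have hψpos : ∀ s, 0 < s → 0 < ψ s := by
    intro s hs
    have hnn : 0 ≤ ψ s := by
      rw [hψ s hs]
      apply setIntegral_nonneg measurableSet_Ioi
      intro y hy
      nlinarith [Real.exp_le_one_iff.2 (by nlinarith [Set.mem_Ioi.1 hy] : -(s*y) ≤ 0)]
    rcases hnn.lt_or_eq with h | h
    · exact h
    · exfalso
      have h0 : ∫ y in Set.Ioi (0:ℝ), (1 - Real.exp (-(s * y))) ∂ν = 0 := by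
        rw [← hψ s hs]; exact h.symm
      have hae : (fun y => 1 - Real.exp (-(s * y))) =ᵐ[ν.restrict (Set.Ioi 0)] 0 := by
        rw [← integral_eq_zero_iff_of_nonneg_ae _ (hInt s hs)]
        · exact h0
        · filter_upwards [ae_restrict_mem measurableSet_Ioi] with y hy
          simp only [Pi.zero_apply]
          nlinarith [Real.exp_le_one_iff.2 (by nlinarith [Set.mem_Ioi.1 hy] : -(s*y) ≤ 0)]
      have hsub : Set.Ioi (0:ℝ) ⊆ {y | ¬ (1 - Real.exp (-(s * y)) = 0)} := by
        intro y hy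
        have hy0 : (0:ℝ) < y := hy
        have : Real.exp (-(s * y)) < 1 := by
          rw [Real.exp_lt_one_iff]; nlinarith
        simp only [Set.mem_setOf_eq]
        intro hcontra; nlinarith
      have hz := hae
      rw [Filter.EventuallyEq, ae_iff] at hz
      have : (ν.restrict (Set.Ioi 0)) (Set.Ioi 0) = 0 := by
        apply measure_mono_null hsub
        simpa using hz
      rw [Measure.restrict_apply measurableSet_Ioi, Set.inter_self, hνinf] at this
      exact ENNReal.top_ne_zero this
  -- monotonicity of ψ
  have hψmono : ∀ s1 s2, 0 < s1 → s1 ≤ s2 → ψ s1 ≤ ψ s2 := by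
    intro s1 s2 hs1 hs12
    have hs2 : 0 < s2 := lt_of_lt_of_le hs1 hs12
    rw [hψ s1 hs1, hψ s2 hs2]
    apply setIntegral_mono_on (hInt s1 hs1) (hInt s2 hs2) measurableSet_Ioi
    intro y hy
    have hy0 : (0:ℝ) < y := hy
    have : Real.exp (-(s2 * y)) ≤ Real.exp (-(s1 * y)) := by
      apply Real.exp_le_exp.2; nlinarith
    linarith
  -- the events
  set A : ℝ → Set Ω := fun u => {ω | D u ω ≤ t} with hA
  have hAmeas : ∀ u, MeasurableSet (A u) := fun u => (hDmeas u) measurableSet_Iic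
  have hAdef : ∀ v (ω : Ω), ω ∈ A v ↔ D v ω ≤ t := fun _ _ => Iff.rfl
  clear_value A
  -- integrability of Laplace functional
  have hIntLap : ∀ s, 0 < s → ∀ u, 0 ≤ u →
      Integrable (fun ω => Real.exp (-(s * D u ω))) P := by
    intro s hs u hu
    by_contra h
    have h0 := integral_undef h
    rw [hlaplace s hs u hu] at h0
    exact (Real.exp_pos _).ne' h0
  -- Chernoff upper bound
  have hUpper : ∀ s, 0 < s → ∀ u, 0 ≤ u →
      (P (A u)).toReal ≤ Real.exp (s * t) * Real.exp (-(u * ψ s)) := by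
    intro s hs u hu
    have hpt : ∀ ω, Set.indicator (A u) (fun _ => (1:ℝ)) ω ≤ Real.exp (s * t) * Real.exp (-(s * D u ω)) := by
      intro ω
      by_cases hω : ω ∈ A u
      · rw [Set.indicator_of_mem hω, ← Real.exp_add]
        have hDt : D u ω ≤ t := (hAdef u ω).1 hω
        apply Real.one_le_exp
        nlinarith
      · rw [Set.indicator_of_notMem hω]
        positivity
    calc (P (A u)).toReal = ∫ ω, Set.indicator (A u) (fun _ => (1:ℝ)) ω ∂P := by
          rw [integral_indicator_const (1:ℝ) (hAmeas u), smul_eq_mul, mul_one, measureReal_def]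
      _ ≤ ∫ ω, Real.exp (s * t) * Real.exp (-(s * D u ω)) ∂P := by
          apply integral_mono ((integrable_const (1:ℝ)).indicator (hAmeas u))
            ((hIntLap s hs u hu).const_mul _) hpt
      _ = Real.exp (s * t) * Real.exp (-(u * ψ s)) := by
          rw [integral_const_mul, hlaplace s hs u hu]
  -- Chernoff lower bound
  have hLower : ∀ s, 0 < s → ∀ u, 0 ≤ u →
      Real.exp (-(u * ψ s)) ≤ (P (A u)).toReal + Real.exp (-(s * t)) := by
    intro s hs u hu
    have hpt : ∀ ω, Real.exp (-(s * D u ω)) ≤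
        Set.indicator (A u) (fun _ => (1:ℝ)) ω + Real.exp (-(s * t)) := by
      intro ω
      by_cases hω : ω ∈ A u
      · rw [Set.indicator_of_mem hω]
        have h1 : Real.exp (-(s * D u ω)) ≤ 1 := by
          rw [Real.exp_le_one_iff]
          nlinarith [hDnn u hu ω]
        nlinarith [Real.exp_pos (-(s * t))]
      · rw [Set.indicator_of_notMem hω]
        have hDt : t < D u ω := not_le.1 (fun h => hω ((hAdef u ω).2 h))
        have : Real.exp (-(s * D u ω)) ≤ Real.exp (-(s * t)) := by
          apply Real.exp_le_exp.2; nlinarith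
        linarith
    calc Real.exp (-(u * ψ s)) = ∫ ω, Real.exp (-(s * D u ω)) ∂P :=
          (hlaplace s hs u hu).symm
      _ ≤ ∫ ω, (Set.indicator (A u) (fun _ => (1:ℝ)) ω + Real.exp (-(s * t))) ∂P :=
          integral_mono (hIntLap s hs u hu)
            (((integrable_const (1:ℝ)).indicator (hAmeas u)).add (integrable_const _)) hpt
      _ = (P (A u)).toReal + Real.exp (-(s * t)) := by
          rw [integral_add ((integrable_const (1:ℝ)).indicator (hAmeas u)) (integrable_const _),
            integral_indicator_const (1:ℝ) (hAmeas u), integral_const]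
          simp
          rfl
  -- exponents
  have h1β : 0 < 1 - β := by linarith
  have hβr : 1 ≤ 1 / (1 - β) := by
    rw [le_div_iff₀ h1β]; nlinarith
  set γ : ℝ := (1 / (1 - β) + r) / 2 with hγ
  have hγ1 : 1 < γ := by
    rw [hγ]; nlinarith
  have hγr : γ < r := by rw [hγ]; linarith
  have hγβ : 1 / (1 - β) < γ := by rw [hγ]; linarith
  set α : ℝ := (β + (γ - 1) / γ) / 2 with hα
  have hγpos : (0:ℝ) < γ := by linarith
  have hβα : β < α := by
    have h2 : β < (γ - 1) / γ := by
      rw [lt_div_iff₀ hγpos]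
      have := (div_lt_iff₀ h1β).1 hγβ
      nlinarith
    rw [hα]; linarith
  have hαγ : 1 + γ * α < γ := by
    have h2 : α < (γ - 1) / γ := by
      have h3 : β < (γ - 1) / γ := by
        rw [lt_div_iff₀ hγpos]
        have := (div_lt_iff₀ h1β).1 hγβ
        nlinarith
      rw [hα]; linarith
    nlinarith [(lt_div_iff₀ hγpos).1 h2]
  have hαr : 1 + γ * α < r := by linarith
  have hαpos : 0 < α := lt_of_le_of_lt hβ0 hβα
  clear_value γ α
  -- growth control
  have hGrow := rv_growth ψ β hβ0 hψpos hψmono hRV hβα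
  -- g u := u * ψ (u ^ γ)
  set g : ℝ → ℝ := fun u => u * ψ (u ^ γ) with hg
  have hgdef : ∀ v : ℝ, g v = v * ψ (v ^ γ) := fun _ => rfl
  clear_value g
  -- by contradiction
  by_contra hcon
  set c : ℝ := (∫⁻ ω, ENNReal.ofReal
      (Real.exp (lam * (sInf {u : ℝ | 0 < u ∧ t < D u ω}) ^ r)) ∂P).toReal with hc
  clear_value c
  -- eventual bounds
  have hev : ∀ᶠ u in atTop, (1:ℝ) ≤ u ∧ g u + Real.log 2 ≤ t * u ^ γ ∧
      g u ≤ (lam / 2) * u ^ r ∧ Real.exp ((lam / 2) * u ^ r) / 4 > c + 1 := by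
    have htend : Tendsto (fun u : ℝ => u ^ γ) atTop atTop := tendsto_rpow_atTop hγpos
    set δ : ℝ := min (t / 2) (lam / 2) with hδ
    have hδpos : 0 < δ := lt_min (by positivity) (by positivity)
    have hsmall : ∀ᶠ u in atTop, ψ (u ^ γ) / (u ^ γ) ^ α < δ :=
      (hGrow.comp htend).eventually_lt_const hδpos
    have hlog : ∀ᶠ u in atTop, Real.log 2 ≤ t / 2 * u ^ γ :=
      (htend.const_mul_atTop (show (0:ℝ) < t / 2 by positivity)).eventually_ge_atTop _
    have hbig : Tendsto (fun u : ℝ => Real.exp (lam / 2 * u ^ r) / 4) atTop atTop := by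
      apply Tendsto.atTop_div_const (by norm_num : (0:ℝ) < 4)
      exact Real.tendsto_exp_atTop.comp
        ((tendsto_rpow_atTop hr).const_mul_atTop (by positivity))
    filter_upwards [hsmall, eventually_ge_atTop (1:ℝ), hlog,
      hbig.eventually_gt_atTop (c + 1)] with u h1 h2 h3 h4
    have hupos : (0:ℝ) < u := lt_of_lt_of_le one_pos h2
    have hsp : (0:ℝ) < u ^ γ := Real.rpow_pos_of_pos hupos γ
    have hψu : ψ (u ^ γ) ≤ δ * (u ^ γ) ^ α := by
      have := (div_lt_iff₀ (Real.rpow_pos_of_pos hsp α)).1 h1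
      linarith
    have e1 : (u ^ γ) ^ α = u ^ (γ * α) := (Real.rpow_mul hupos.le γ α).symm
    have e2 : u ^ (1 + γ * α) = u * u ^ (γ * α) := by
      rw [Real.rpow_add hupos, Real.rpow_one]
    have hkey : g u ≤ δ * u ^ (1 + γ * α) := by
      have hg1 : g u = u * ψ (u ^ γ) := hgdef u
      rw [hg1, e2]
      calc u * ψ (u ^ γ) ≤ u * (δ * (u ^ γ) ^ α) :=
            mul_le_mul_of_nonneg_left hψu hupos.le
        _ = δ * (u * u ^ (γ * α)) := by rw [e1]; ring
    have hm1 : u ^ (1 + γ * α) ≤ u ^ γ := Real.rpow_le_rpow_of_exponent_le h2 hαγ.le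
    have hm2 : u ^ (1 + γ * α) ≤ u ^ r := Real.rpow_le_rpow_of_exponent_le h2 hαr.le
    have hδ1 : δ ≤ t / 2 := min_le_left _ _
    have hδ2 : δ ≤ lam / 2 := min_le_right _ _
    have hup1 : (0:ℝ) ≤ u ^ (1 + γ * α) := (Real.rpow_pos_of_pos hupos _).le
    have p1 : δ * u ^ (1 + γ * α) ≤ δ * u ^ γ := mul_le_mul_of_nonneg_left hm1 hδpos.le
    have p2 : δ * u ^ γ ≤ t / 2 * u ^ γ := mul_le_mul_of_nonneg_right hδ1 hsp.le
    have q1 : δ * u ^ (1 + γ * α) ≤ δ * u ^ r := mul_le_mul_of_nonneg_left hm2 hδpos.le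
    have q2 : δ * u ^ r ≤ lam / 2 * u ^ r :=
      mul_le_mul_of_nonneg_right hδ2 (Real.rpow_nonneg hupos.le r)
    exact ⟨h2, by linarith, by linarith, h4⟩
  obtain ⟨u, hu1, huE1, huE2, huE3⟩ := hev.exists
  have hupos : (0:ℝ) < u := lt_of_lt_of_le one_pos hu1
  have hspos : (0:ℝ) < u ^ γ := Real.rpow_pos_of_pos hupos γ
  have hgnn : 0 ≤ g u := by
    rw [hgdef u]; exact mul_nonneg hupos.le (hψpos _ hspos).le
  -- lower bound for P (A u)
  have hPAu : Real.exp (-(g u)) / 2 ≤ (P (A u)).toReal := by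
    have h1 := hLower (u ^ γ) hspos u hupos.le
    have hgu : g u = u * ψ (u ^ γ) := hgdef u
    have h2 : Real.exp (-(u ^ γ * t)) ≤ Real.exp (-(g u)) / 2 := by
      have h3 : Real.exp (-(u ^ γ * t)) ≤ Real.exp (-(g u + Real.log 2)) := by
        apply Real.exp_le_exp.2
        nlinarith
      have h4 : Real.exp (-(g u + Real.log 2)) = Real.exp (-(g u)) / 2 := by
        rw [neg_add, Real.exp_add, Real.exp_neg (Real.log 2), Real.exp_log two_pos]
        ring
      linarith
    rw [← hgu] at h1
    linarith
  -- choice of u'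
  set u' : ℝ := (t + g u + Real.log 4) / ψ 1 with hu'
  clear_value u'
  have hu'pos : 0 < u' := by
    have h4 : (0:ℝ) < Real.log 4 := Real.log_pos (by norm_num)
    rw [hu']
    exact div_pos (by linarith) (hψpos 1 one_pos)
  have hPAu' : (P (A u')).toReal ≤ Real.exp (-(g u)) / 4 := by
    have h1 := hUpper 1 one_pos u' hu'pos.le
    have hψ1 : (0:ℝ) < ψ 1 := hψpos 1 one_pos
    have hu'val : u' * ψ 1 = t + g u + Real.log 4 := by
      rw [hu']; field_simp
    have h2 : Real.exp (1 * t) * Real.exp (-(u' * ψ 1)) = Real.exp (-(g u)) / 4 := by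
      rw [← Real.exp_add, hu'val,
        show 1 * t + -(t + g u + Real.log 4) = -(g u) + -Real.log 4 by ring,
        Real.exp_add, Real.exp_neg (Real.log 4), Real.exp_log (by norm_num : (0:ℝ) < 4)]
      ring
    linarith
  -- the good event
  set B : Set Ω := A u \ A u' with hB
  have hBdef : ∀ ω : Ω, ω ∈ B ↔ ω ∈ A u ∧ ω ∉ A u' := fun _ => Iff.rfl
  have hBmeas : MeasurableSet B := (hAmeas u).diff (hAmeas u')
  clear_value B
  have hPB : Real.exp (-(g u)) / 4 ≤ (P B).toReal := by
    have hsub : A u ⊆ B ∪ A u' := by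
      intro ω hω
      by_cases h : ω ∈ A u'
      · exact Or.inr h
      · exact Or.inl ((hBdef ω).2 ⟨hω, h⟩)
    have hle : P (A u) ≤ P B + P (A u') :=
      le_trans (measure_mono hsub) (measure_union_le B (A u'))
    have hfin : P B + P (A u') ≠ ⊤ :=
      ENNReal.add_ne_top.2 ⟨measure_ne_top P B, measure_ne_top P (A u')⟩
    have htr : (P (A u)).toReal ≤ (P B).toReal + (P (A u')).toReal := by
      have := ENNReal.toReal_mono hfin hle
      rwa [ENNReal.toReal_add (measure_ne_top P B) (measure_ne_top P (A u'))] at this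
    linarith
  -- pointwise bound on B
  have hpoint : ∀ ω ∈ B, Real.exp (lam * u ^ r) ≤
      Real.exp (lam * (sInf {v : ℝ | 0 < v ∧ t < D v ω}) ^ r) := by
    intro ω hω
    obtain ⟨hω1, hω2⟩ := (hBdef ω).1 hω
    have hD1 : D u ω ≤ t := (hAdef u ω).1 hω1
    have hD2 : t < D u' ω := not_le.1 (fun h => hω2 ((hAdef u' ω).2 h))
    have hne : {v : ℝ | 0 < v ∧ t < D v ω}.Nonempty := ⟨u', hu'pos, hD2⟩
    have hlb : ∀ v ∈ {v : ℝ | 0 < v ∧ t < D v ω}, u ≤ v := by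
      rintro v ⟨hv0, hvt⟩
      by_contra hvu
      have hvu' : v ≤ u := (lt_of_not_ge hvu).le
      have : D v ω ≤ D u ω :=
        hDmono ω (Set.mem_Ici.2 hv0.le) (Set.mem_Ici.2 hupos.le) hvu'
      linarith
    have hInf : u ≤ sInf {v : ℝ | 0 < v ∧ t < D v ω} := le_csInf hne hlb
    apply Real.exp_le_exp.2
    apply mul_le_mul_of_nonneg_left _ hlam.le
    exact Real.rpow_le_rpow hupos.le hInf hr.le
  -- lintegral lower bound
  have hmain : ENNReal.ofReal (Real.exp (lam * u ^ r) * (Real.exp (-(g u)) / 4)) ≤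
      ∫⁻ ω, ENNReal.ofReal (Real.exp (lam * (sInf {v : ℝ | 0 < v ∧ t < D v ω}) ^ r)) ∂P := by
    have hind : ∀ ω, B.indicator (fun _ => ENNReal.ofReal (Real.exp (lam * u ^ r))) ω ≤
        ENNReal.ofReal (Real.exp (lam * (sInf {v : ℝ | 0 < v ∧ t < D v ω}) ^ r)) := by
      intro ω
      by_cases hω : ω ∈ B
      · rw [Set.indicator_of_mem hω]
        exact ENNReal.ofReal_le_ofReal (hpoint ω hω)
      · rw [Set.indicator_of_notMem hω]
        exact zero_le
    calc ENNReal.ofReal (Real.exp (lam * u ^ r) * (Real.exp (-(g u)) / 4))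
        = ENNReal.ofReal (Real.exp (lam * u ^ r)) * ENNReal.ofReal (Real.exp (-(g u)) / 4) :=
          ENNReal.ofReal_mul (Real.exp_pos _).le
      _ ≤ ENNReal.ofReal (Real.exp (lam * u ^ r)) * P B := by
          apply mul_le_mul_right
          calc ENNReal.ofReal (Real.exp (-(g u)) / 4) ≤ ENNReal.ofReal ((P B).toReal) :=
                ENNReal.ofReal_le_ofReal hPB
            _ = P B := ENNReal.ofReal_toReal (measure_ne_top P B)
      _ = ∫⁻ ω, B.indicator (fun _ => ENNReal.ofReal (Real.exp (lam * u ^ r))) ω ∂P :=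
          (lintegral_indicator_const hBmeas _).symm
      _ ≤ ∫⁻ ω, ENNReal.ofReal
            (Real.exp (lam * (sInf {v : ℝ | 0 < v ∧ t < D v ω}) ^ r)) ∂P :=
          lintegral_mono hind
  -- contradiction
  have heq : (∫⁻ ω, ENNReal.ofReal
      (Real.exp (lam * (sInf {v : ℝ | 0 < v ∧ t < D v ω}) ^ r)) ∂P) = ENNReal.ofReal c := by
    rw [hc, ENNReal.ofReal_toReal hcon]
  rw [heq] at hmain
  have hc0 : 0 ≤ c := hc ▸ ENNReal.toReal_nonneg
  have hle : Real.exp (lam * u ^ r) * (Real.exp (-(g u)) / 4) ≤ c :=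
    (ENNReal.ofReal_le_ofReal_iff hc0).1 hmain
  have ha : Real.exp (lam * u ^ r) * (Real.exp (-(g u)) / 4) =
      Real.exp (lam * u ^ r + -(g u)) / 4 := by
    rw [Real.exp_add]; ring
  have hge : lam / 2 * u ^ r ≤ lam * u ^ r + -(g u) := by linarith
  have hexp : Real.exp (lam / 2 * u ^ r) ≤ Real.exp (lam * u ^ r + -(g u)) :=
    Real.exp_le_exp.2 hge
  rw [ha] at hle
  linarith
end

section
/- Let D be a subordinator with infinite Lévy measure ν and Laplace exponent ψ, let E be its inverse subordinator, and set g(s) = ψ'(s), R(s) = ψ(s) − sψ'(s). Fix λ > 0, t > 0 and r > 0. If there exist a constant ε > 0, a constant M > 0, and a function x : [M,∞) → (g(∞), g(0+)) such that s·x(s) > t and R(g^{−1}(x(s)))/s^{r−1} ≥ λ + ε for all s ≥ M, then E[exp(λ E_t^r)] < ∞. -/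
open MeasureTheory Filter Topology Set

set_option maxHeartbeats 1000000 in
lemma aux_summable_w (lam ε M r : ℝ) (hlam : 0 < lam) (hε : 0 < ε) (hM : 0 < M) (hr : 0 < r) :
    Summable (fun n : ℕ => Real.exp (lam * (M + n + 2) ^ r - (lam + ε) * (M + n) ^ r)) := by
  have hbase : Summable (fun n : ℕ => 1 / (n : ℝ) ^ (2 : ℝ)) :=
    Real.summable_one_div_nat_rpow.mpr (by norm_num)
  have hMn : Tendsto (fun n : ℕ => M + (n : ℝ)) atTop atTop :=
    tendsto_atTop_add_const_left _ _ tendsto_natCast_atTop_atTop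
  have hA : ∀ᶠ n : ℕ in atTop, (1 + 2 / (M + (n : ℝ))) ^ r ≤ 1 + ε / (2 * lam) := by
    have h0 : Tendsto (fun n : ℕ => 1 + 2 / (M + (n : ℝ))) atTop (𝓝 1) := by
      have h2 : Tendsto (fun n : ℕ => 2 / (M + (n : ℝ))) atTop (𝓝 0) :=
        Tendsto.div_atTop tendsto_const_nhds hMn
      simpa using (tendsto_const_nhds.add h2 :
        Tendsto (fun n : ℕ => 1 + 2 / (M + (n : ℝ))) atTop (𝓝 (1 + 0)))
    have hcont : ContinuousAt (fun y : ℝ => y ^ r) 1 :=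
      Real.continuousAt_rpow_const 1 r (Or.inl one_ne_zero)
    have h1 : Tendsto (fun n : ℕ => (1 + 2 / (M + (n : ℝ))) ^ r) atTop (𝓝 (1 ^ r)) :=
      (hcont.tendsto.comp h0)
    rw [Real.one_rpow] at h1
    exact h1.eventually_le_const (by
      have h' : 0 < ε / (2 * lam) := by positivity
      linarith)
  have hB : ∀ᶠ n : ℕ in atTop, 2 * Real.log (M + (n : ℝ)) ≤ (ε / 2) * (M + (n : ℝ)) ^ r := by
    have h := (isLittleO_log_rpow_atTop hr).bound (by positivity : (0:ℝ) < ε / 4)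
    filter_upwards [hMn.eventually (h.and (eventually_ge_atTop 1))] with n hn
    obtain ⟨hn1, hn2⟩ := hn
    have hpos : (0:ℝ) < M + n := by positivity
    have : |Real.log (M + (n:ℝ))| ≤ ε / 4 * |(M + (n:ℝ)) ^ r| := by simpa using hn1
    have h3 : Real.log (M + (n:ℝ)) ≤ ε / 4 * (M + (n:ℝ)) ^ r := by
      calc Real.log (M + (n:ℝ)) ≤ |Real.log (M + (n:ℝ))| := le_abs_self _
        _ ≤ ε / 4 * |(M + (n:ℝ)) ^ r| := this
        _ = ε / 4 * (M + (n:ℝ)) ^ r := by rw [abs_of_nonneg (Real.rpow_nonneg hpos.le r)]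
    linarith
  have key : ∀ᶠ n : ℕ in atTop,
      Real.exp (lam * (M + n + 2) ^ r - (lam + ε) * (M + n) ^ r) ≤ 1 / (n : ℝ) ^ (2 : ℝ) := by
    filter_upwards [hA, hB, eventually_ge_atTop 1] with n hA hB hn1
    have hn1' : (1:ℝ) ≤ (n:ℝ) := by exact_mod_cast hn1
    have hpos : (0:ℝ) < M + n := by positivity
    have hsplit : (M + (n:ℝ) + 2) = (M + n) * (1 + 2 / (M + (n:ℝ))) := by
      field_simp
    have hmul : (M + (n:ℝ) + 2) ^ r = (M + n) ^ r * (1 + 2 / (M + (n:ℝ))) ^ r := by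
      rw [hsplit, Real.mul_rpow hpos.le (by positivity)]
    have hlogn : Real.log (n:ℝ) ≤ Real.log (M + n) :=
      Real.log_le_log (by linarith) (by linarith)
    have hexp : lam * (M + n + 2) ^ r - (lam + ε) * (M + n) ^ r ≤ -(2 * Real.log n) := by
      have h1 : lam * (M + n + 2) ^ r ≤ (lam + ε / 2) * (M + n) ^ r := by
        rw [hmul]
        have := mul_le_mul_of_nonneg_left hA
          (by positivity : (0:ℝ) ≤ lam * (M + n) ^ r)
        calc lam * ((M + n) ^ r * (1 + 2 / (M + (n:ℝ))) ^ r)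
            = lam * (M + n) ^ r * (1 + 2 / (M + (n:ℝ))) ^ r := by ring
          _ ≤ lam * (M + n) ^ r * (1 + ε / (2 * lam)) := this
          _ = (lam + ε / 2) * (M + n) ^ r := by field_simp
      have h2 : 2 * Real.log n ≤ (ε / 2) * (M + n) ^ r := by
        have : 2 * Real.log (n:ℝ) ≤ 2 * Real.log (M + n) := by linarith
        linarith
      linarith
    calc Real.exp (lam * (M + n + 2) ^ r - (lam + ε) * (M + n) ^ r)
        ≤ Real.exp (-(2 * Real.log n)) := Real.exp_le_exp.mpr hexp
      _ = 1 / (n : ℝ) ^ (2 : ℝ) := by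
          rw [Real.exp_neg, Real.rpow_def_of_pos (by linarith : (0:ℝ) < (n:ℝ))]
          rw [one_div, mul_comm]
  obtain ⟨N, hN⟩ := eventually_atTop.mp key
  rw [← summable_nat_add_iff N]
  exact Summable.of_nonneg_of_le (fun n => (Real.exp_pos _).le)
    (fun n => hN (n + N) (Nat.le_add_left _ _))
    ((summable_nat_add_iff N).mpr hbase)

/-- Let `D` be a subordinator with infinite Lévy measure `ν` and Laplace
exponent `ψ`, let `E_t = inf {u > 0 : D_u > t}` be its inverse, and set `g = ψ'`,
`R s = ψ s - s ψ' s`.  Fix `λ > 0`, `t > 0`, `r > 0`.  If there exist `ε > 0`, `M > 0` and a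
function `x : [M,∞) → (g(∞), g(0+))` (encoded by a positive preimage function `xinv` with
`g (xinv s) = x s`, i.e. `x s = g (g⁻¹ (x s))` lies in the range of `g` on `(0,∞)`) such that
`s * x s > t` and `R (g⁻¹ (x s)) / s ^ (r-1) ≥ λ + ε` for all `s ≥ M`, then
`E[exp (λ E_t ^ r)] < ∞`. -/
theorem exp_moment_inverse_subordinator_finite_of_tail_criterion
    {Ω : Type*} [MeasurableSpace Ω] (P : Measure Ω) [IsProbabilityMeasure P]
    (D : ℝ → Ω → ℝ) (ν : Measure ℝ) (ψ : ℝ → ℝ) (lam t r : ℝ)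
    (hDmeas : ∀ u, Measurable (D u))
    (hD0 : ∀ ω, D 0 ω = 0)
    (hDmono : ∀ ω, MonotoneOn (fun u => D u ω) (Set.Ici 0))
    (hDrc : ∀ ω, ∀ u, 0 ≤ u → ContinuousWithinAt (fun v => D v ω) (Set.Ici u) u)
    (hstat : ∀ s u : ℝ, 0 ≤ s → 0 ≤ u →
      Measure.map (fun ω => D (s + u) ω - D s ω) P = Measure.map (D u) P)
    (hindep : ∀ (n : ℕ) (τ : Fin (n + 1) → ℝ), (∀ i, 0 ≤ τ i) → Monotone τ →
      ProbabilityTheory.iIndepFun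
        (fun i : Fin n => fun ω => D (τ i.succ) ω - D (τ i.castSucc) ω) P)
    (hν : ∫⁻ y in Set.Ioi (0 : ℝ), ENNReal.ofReal (min y 1) ∂ν < ⊤)
    (hνinf : ν (Set.Ioi (0 : ℝ)) = ⊤)
    (hψ : ∀ s, 0 < s → ψ s = ∫ y in Set.Ioi (0 : ℝ), (1 - Real.exp (-(s * y))) ∂ν)
    (hlaplace : ∀ s, 0 < s → ∀ u, 0 ≤ u →
      ∫ ω, Real.exp (-(s * D u ω)) ∂P = Real.exp (-(u * ψ s)))
    (hlam : 0 < lam) (ht : 0 < t) (hr : 0 < r)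
    (ε M : ℝ) (x xinv : ℝ → ℝ) (hε : 0 < ε) (hM : 0 < M)
    (hxrange : ∀ s, M ≤ s → 0 < xinv s ∧ deriv ψ (xinv s) = x s)
    (hxt : ∀ s, M ≤ s → t < s * x s)
    (hxR : ∀ s, M ≤ s →
      lam + ε ≤ (ψ (xinv s) - xinv s * deriv ψ (xinv s)) / s ^ (r - 1)) :
    ∫⁻ ω, ENNReal.ofReal (Real.exp (lam * (sInf {u : ℝ | 0 < u ∧ t < D u ω}) ^ r)) ∂P < ⊤ := by
  set E : Ω → ℝ := fun ω => sInf {u : ℝ | 0 < u ∧ t < D u ω} with hE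
  have hEnonneg : ∀ ω, 0 ≤ E ω := fun ω => Real.sInf_nonneg (fun v hv => hv.1.le)
  have hEle : ∀ ω v, 0 < v → t < D v ω → E ω ≤ v := fun ω v hv hDv =>
    csInf_le ⟨0, fun u hu => hu.1.le⟩ ⟨hv, hDv⟩
  have hDle : ∀ ω v, 0 < v → v < E ω → D v ω ≤ t := by
    intro ω v hv hvE
    by_contra h
    push_neg at h
    exact absurd (hEle ω v hv h) (not_le.mpr hvE)
  -- the events
  set B : ℕ → Set Ω := fun n => {ω | D (M + n) ω ≤ t} with hB
  have hBmeas : ∀ n, MeasurableSet (B n) := fun n =>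
    measurableSet_le (hDmeas _) measurable_const
  -- Chernoff bound
  have hChern : ∀ n : ℕ, P (B n) ≤ ENNReal.ofReal (Real.exp (-((lam + ε) * (M + n) ^ r))) := by
    intro n
    set u : ℝ := M + n with hu
    have huM : M ≤ u := le_add_of_nonneg_right (Nat.cast_nonneg n)
    have hu0 : 0 < u := lt_of_lt_of_le hM huM
    obtain ⟨hs0, hxd⟩ := hxrange u huM
    set s : ℝ := xinv u with hsdef
    -- integrability
    have hInt : Integrable (fun ω => Real.exp (-(s * D u ω))) P := by
      by_contra h
      have h0 := integral_undef h
      rw [hlaplace s hs0 u hu0.le] at h0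
      exact (Real.exp_pos _).ne' h0
    have hlin : ∫⁻ ω, ENNReal.ofReal (Real.exp (-(s * D u ω))) ∂P
        = ENNReal.ofReal (Real.exp (-(u * ψ s))) := by
      rw [← ofReal_integral_eq_lintegral_ofReal hInt
        (Filter.Eventually.of_forall fun ω => (Real.exp_pos _).le), hlaplace s hs0 u hu0.le]
    have hgmeas : Measurable (fun ω => ENNReal.ofReal (Real.exp (-(s * D u ω)))) :=
      (((hDmeas u).const_mul s).neg.exp).ennreal_ofReal
    have hmarkov : ENNReal.ofReal (Real.exp (-(s * t))) * P (B n)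
        ≤ ENNReal.ofReal (Real.exp (-(u * ψ s))) := by
      rw [← hlin]
      calc ENNReal.ofReal (Real.exp (-(s * t))) * P (B n)
          = ∫⁻ _ω in B n, ENNReal.ofReal (Real.exp (-(s * t))) ∂P := by
            rw [setLIntegral_const, mul_comm]
        _ ≤ ∫⁻ ω in B n, ENNReal.ofReal (Real.exp (-(s * D u ω))) ∂P := by
            refine setLIntegral_mono hgmeas ?_
            intro ω hω
            have : s * D u ω ≤ s * t := mul_le_mul_of_nonneg_left hω hs0.le
            exact ENNReal.ofReal_le_ofReal (Real.exp_le_exp.mpr (by linarith))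
        _ ≤ ∫⁻ ω, ENNReal.ofReal (Real.exp (-(s * D u ω))) ∂P :=
            setLIntegral_le_lintegral _ _
    -- real exponent bound
    have hreal : s * t - u * ψ s ≤ -((lam + ε) * u ^ r) := by
      have h1 : t < u * x u := hxt u huM
      rw [← hxd] at h1
      have hstlt : s * t < s * (u * deriv ψ (xinv u)) := by
        exact mul_lt_mul_of_pos_left h1 hs0
      have hur1 : (0:ℝ) < u ^ (r - 1) := Real.rpow_pos_of_pos hu0 _
      have hRge : (lam + ε) * u ^ (r - 1) ≤ ψ s - s * deriv ψ (xinv u) := by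
        have h' := hxR u huM
        rw [le_div_iff₀ hur1] at h'
        exact h'
      have hpow : u ^ (r - 1) * u = u ^ r := by
        rw [Real.rpow_sub_one hu0.ne']
        field_simp
      nlinarith [mul_le_mul_of_nonneg_left hRge hu0.le]
    -- conclude
    have hne0 : ENNReal.ofReal (Real.exp (-(s * t))) ≠ 0 := by
      simp [ENNReal.ofReal_eq_zero, not_le, Real.exp_pos]
    have hnetop : ENNReal.ofReal (Real.exp (-(s * t))) ≠ ⊤ := ENNReal.ofReal_ne_top
    rw [← ENNReal.mul_le_mul_iff_right hne0 hnetop]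
    calc ENNReal.ofReal (Real.exp (-(s * t))) * P (B n)
        ≤ ENNReal.ofReal (Real.exp (-(u * ψ s))) := hmarkov
      _ ≤ ENNReal.ofReal (Real.exp (-(s * t))) *
            ENNReal.ofReal (Real.exp (-((lam + ε) * (M + n) ^ r))) := by
          rw [← ENNReal.ofReal_mul (Real.exp_pos _).le, ← Real.exp_add]
          apply ENNReal.ofReal_le_ofReal
          apply Real.exp_le_exp.mpr
          rw [← hu]
          linarith
  -- pointwise bound
  have hpt : ∀ ω, ENNReal.ofReal (Real.exp (lam * (E ω) ^ r))
      ≤ ENNReal.ofReal (Real.exp (lam * (M + 1) ^ r)) +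
        ∑' n : ℕ, (B n).indicator
          (fun _ => ENNReal.ofReal (Real.exp (lam * (M + n + 2) ^ r))) ω := by
    intro ω
    by_cases hcase : E ω ≤ M + 1
    · refine le_trans ?_ le_self_add
      apply ENNReal.ofReal_le_ofReal
      apply Real.exp_le_exp.mpr
      exact mul_le_mul_of_nonneg_left
        (Real.rpow_le_rpow (hEnonneg ω) hcase hr.le) hlam.le
    · push_neg at hcase
      set k : ℕ := Nat.floor (E ω - M) with hk
      have hk1 : 1 ≤ k := Nat.le_floor (by push_cast; linarith)
      have hfl : (k : ℝ) ≤ E ω - M := Nat.floor_le (by linarith)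
      have hfl2 : E ω - M < k + 1 := Nat.lt_floor_add_one _
      have hcast : ((k - 1 : ℕ) : ℝ) = (k : ℝ) - 1 := by
        push_cast [Nat.cast_sub hk1]; ring
      have hv : M + ((k - 1 : ℕ) : ℝ) < E ω := by rw [hcast]; linarith
      have hv0 : (0:ℝ) < M + ((k - 1 : ℕ) : ℝ) := by positivity
      have hmem : ω ∈ B (k - 1) := hDle ω _ hv0 hv
      refine le_trans ?_ le_add_self
      have hineq : E ω ≤ M + ((k - 1 : ℕ) : ℝ) + 2 := by rw [hcast]; linarith
      calc ENNReal.ofReal (Real.exp (lam * (E ω) ^ r))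
          ≤ ENNReal.ofReal (Real.exp (lam * (M + ((k - 1 : ℕ) : ℝ) + 2) ^ r)) := by
            apply ENNReal.ofReal_le_ofReal
            apply Real.exp_le_exp.mpr
            exact mul_le_mul_of_nonneg_left
              (Real.rpow_le_rpow (hEnonneg ω) hineq hr.le) hlam.le
        _ = (B (k - 1)).indicator
              (fun _ => ENNReal.ofReal (Real.exp (lam * (M + ((k - 1 : ℕ) : ℝ) + 2) ^ r))) ω := by
            rw [Set.indicator_of_mem hmem]
        _ ≤ ∑' n : ℕ, (B n).indicator
              (fun _ => ENNReal.ofReal (Real.exp (lam * (M + n + 2) ^ r))) ω :=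
            ENNReal.le_tsum (k - 1)
  -- put it together
  calc ∫⁻ ω, ENNReal.ofReal (Real.exp (lam * (E ω) ^ r)) ∂P
      ≤ ∫⁻ ω, (ENNReal.ofReal (Real.exp (lam * (M + 1) ^ r)) +
          ∑' n : ℕ, (B n).indicator
            (fun _ => ENNReal.ofReal (Real.exp (lam * (M + n + 2) ^ r))) ω) ∂P :=
        lintegral_mono hpt
    _ = ENNReal.ofReal (Real.exp (lam * (M + 1) ^ r)) +
        ∑' n : ℕ, ENNReal.ofReal (Real.exp (lam * (M + n + 2) ^ r)) * P (B n) := by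
        rw [lintegral_add_left measurable_const, lintegral_const, measure_univ, mul_one]
        rw [lintegral_tsum (fun n => (measurable_const.indicator (hBmeas n)).aemeasurable)]
        congr 1
        exact tsum_congr fun n => by
          rw [lintegral_indicator (hBmeas n) _, setLIntegral_const]
    _ ≤ ENNReal.ofReal (Real.exp (lam * (M + 1) ^ r)) +
        ∑' n : ℕ, ENNReal.ofReal
          (Real.exp (lam * (M + n + 2) ^ r - (lam + ε) * (M + n) ^ r)) := by
        refine add_le_add le_rfl (ENNReal.tsum_le_tsum fun n => ?_)
        calc ENNReal.ofReal (Real.exp (lam * (M + n + 2) ^ r)) * P (B n)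
            ≤ ENNReal.ofReal (Real.exp (lam * (M + n + 2) ^ r)) *
                ENNReal.ofReal (Real.exp (-((lam + ε) * (M + n) ^ r))) :=
              mul_le_mul_right (hChern n) _
          _ = ENNReal.ofReal
                (Real.exp (lam * (M + n + 2) ^ r - (lam + ε) * (M + n) ^ r)) := by
              rw [← ENNReal.ofReal_mul (Real.exp_pos _).le, ← Real.exp_add]
              ring_nf
    _ < ⊤ := by
        rw [← ENNReal.ofReal_tsum_of_nonneg (fun n => (Real.exp_pos _).le)
          (aux_summable_w lam ε M r hlam hε hM hr)]
        exact ENNReal.add_lt_top.mpr ⟨ENNReal.ofReal_lt_top, ENNReal.ofReal_lt_top⟩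
end

section
/- Let D be a subordinator with infinite Lévy measure ν and Laplace exponent ψ, let E be its inverse subordinator, and set g(s) = ψ'(s), R(s) = ψ(s) − sψ'(s). Fix λ > 0, t > 0 and r > 0. If there exist a constant ε ∈ (0, λ), a constant M > 0, and a decreasing function x : [M,∞) → (g(∞), g(0+)) such that s·x(s) < t and R(g^{−1}(x(s)))/s^{r−1} ≤ λ − ε for all s ≥ M, then E[exp(λ E_t^r)] = ∞. -/
open MeasureTheory Filter Topology Set ENNReal

noncomputable def hfun (u : ℝ) : ℝ := 1 - Real.exp (-u) - u * Real.exp (-u)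

lemma exp_neg_hasDerivAt (y c : ℝ) :
    HasDerivAt (fun c : ℝ => Real.exp (-(c * y))) (-(y * Real.exp (-(c * y)))) c := by
  have h1 : HasDerivAt (fun c : ℝ => -(c * y)) (-y) c := by
    simpa using ((hasDerivAt_id c).mul_const y).fun_neg
  have := h1.exp
  simpa [mul_comm] using this

lemma exp_inv_mul (u : ℝ) : Real.exp (-u) * Real.exp u = 1 := by
  rw [← Real.exp_add]; simp

lemma hfun_nonneg {u : ℝ} (hu : 0 ≤ u) : 0 ≤ hfun u := by
  have h := Real.add_one_le_exp u
  have he := exp_inv_mul u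
  have hp : (0:ℝ) < Real.exp (-u) := Real.exp_pos _
  simp only [hfun]
  nlinarith

lemma one_sub_exp_le {u : ℝ} (hu : 0 ≤ u) : 1 - Real.exp (-u) ≤ u := by
  have h := Real.add_one_le_exp (-u)
  linarith

lemma one_sub_exp_le_one (u : ℝ) : 1 - Real.exp (-u) ≤ 1 := by
  have := Real.exp_nonneg (-u); linarith

lemma hfun_le_one_sub {u : ℝ} (hu : 0 ≤ u) : hfun u ≤ 1 - Real.exp (-u) := by
  have hp : (0:ℝ) ≤ Real.exp (-u) := Real.exp_nonneg _
  simp only [hfun]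
  nlinarith

lemma hfun_le_one {u : ℝ} (hu : 0 ≤ u) : hfun u ≤ 1 :=
  (hfun_le_one_sub hu).trans (one_sub_exp_le_one u)

lemma mul_exp_neg_le_one {u : ℝ} (hu : 0 ≤ u) : u * Real.exp (-u) ≤ 1 := by
  have h := Real.add_one_le_exp u
  have he := exp_inv_mul u
  have hp : (0:ℝ) < Real.exp (-u) := Real.exp_pos _
  nlinarith

lemma sq_mul_exp_neg_le_one {u : ℝ} (hu : 0 ≤ u) : u ^ 2 * Real.exp (-u) ≤ 1 := by
  have h4 : Real.exp (u / 4) ^ 4 = Real.exp u := by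
    rw [← Real.exp_nat_mul]; ring_nf
  have h1 : (1 + u / 4) ^ 4 ≤ Real.exp (u / 4) ^ 4 := by
    apply pow_le_pow_left₀ (by positivity) (by have := Real.add_one_le_exp (u/4); linarith)
  have h2 : u ^ 2 ≤ (1 + u / 4) ^ 4 := by nlinarith [sq_nonneg (u/4 - 1), sq_nonneg u]
  have h3 : u ^ 2 ≤ Real.exp u := by rw [← h4]; linarith
  have he := exp_inv_mul u
  have hp : (0:ℝ) < Real.exp (-u) := Real.exp_pos _
  nlinarith

lemma exp_diff_ge {u v : ℝ} (h : u ≤ v) :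
    (v - u) * Real.exp (-v) ≤ Real.exp (-u) - Real.exp (-v) := by
  have h1 := Real.add_one_le_exp (v - u)
  have h2 : Real.exp (v - u) * Real.exp (-v) = Real.exp (-u) := by
    rw [← Real.exp_add]; ring_nf
  have hp : (0:ℝ) < Real.exp (-v) := Real.exp_pos _
  nlinarith

lemma exp_diff_le {u v : ℝ} (h : u ≤ v) :
    Real.exp (-u) - Real.exp (-v) ≤ (v - u) * Real.exp (-u) := by
  have h1 := Real.add_one_le_exp (-(v - u))
  have h2 : Real.exp (-(v - u)) * Real.exp (-u) = Real.exp (-v) := by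
    rw [← Real.exp_add]; ring_nf
  have hp : (0:ℝ) < Real.exp (-u) := Real.exp_pos _
  nlinarith

lemma exp_neg_self_hasDerivAt (u : ℝ) :
    HasDerivAt (fun u : ℝ => Real.exp (-u)) (-Real.exp (-u)) u := by
  simpa using (exp_neg_hasDerivAt 1 u)

lemma sq_exp_le_two_hfun {u : ℝ} (hu : 0 ≤ u) : u ^ 2 * Real.exp (-u) ≤ 2 * hfun u := by
  set φ : ℝ → ℝ := fun u => 2 * hfun u - u ^ 2 * Real.exp (-u) with hφdef
  have hderiv : ∀ v : ℝ, HasDerivAt φ (v ^ 2 * Real.exp (-v)) v := by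
    intro v
    have he : HasDerivAt (fun v : ℝ => Real.exp (-v)) (-Real.exp (-v)) v :=
      exp_neg_self_hasDerivAt v
    have hue : HasDerivAt (fun v : ℝ => v * Real.exp (-v))
        (Real.exp (-v) + v * -Real.exp (-v)) v := by
      simpa using (hasDerivAt_id v).fun_mul he
    have hu2e : HasDerivAt (fun v : ℝ => v ^ 2 * Real.exp (-v))
        ((2 : ℕ) * v ^ 1 * Real.exp (-v) + v ^ 2 * -Real.exp (-v)) v :=
      (hasDerivAt_pow 2 v).mul he
    have hh : HasDerivAt (fun v : ℝ => hfun v)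
        (-(-Real.exp (-v)) - (Real.exp (-v) + v * -Real.exp (-v))) v := by
      have := ((hasDerivAt_const v (1:ℝ)).fun_sub he).fun_sub hue
      simpa [hfun] using this
    have := (hh.const_mul 2).fun_sub hu2e
    refine this.congr_deriv ?_
    push_cast
    ring
  have hmono : Monotone φ :=
    monotone_of_deriv_nonneg (fun v => (hderiv v).differentiableAt)
      (fun v => by rw [(hderiv v).deriv]; positivity)
  have h0 : φ 0 = 0 := by simp [hφdef, hfun]
  have := hmono hu
  rw [h0] at this
  simpa [hφdef] using this

lemma hfun_scale {u c : ℝ} (hu : 0 ≤ u) (hc : 1 ≤ c) : hfun (c * u) ≤ c ^ 2 * hfun u := by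
  set F : ℝ → ℝ := fun c => c ^ 2 * hfun u - hfun (c * u) with hFdef
  have hderiv : ∀ v : ℝ, HasDerivAt F
      ((2:ℕ) * v ^ 1 * hfun u - v * u ^ 2 * Real.exp (-(v * u))) v := by
    intro v
    have he : HasDerivAt (fun v : ℝ => Real.exp (-(v * u))) (-(u * Real.exp (-(v * u)))) v :=
      exp_neg_hasDerivAt u v
    have hue : HasDerivAt (fun v : ℝ => (v * u) * Real.exp (-(v * u)))
        (u * Real.exp (-(v * u)) + (v * u) * -(u * Real.exp (-(v * u)))) v :=
      by simpa using ((hasDerivAt_id v).mul_const u).fun_mul he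
    have hh : HasDerivAt (fun v : ℝ => hfun (v * u))
        (-(-(u * Real.exp (-(v * u)))) -
          (u * Real.exp (-(v * u)) + (v * u) * -(u * Real.exp (-(v * u))))) v := by
      have := ((hasDerivAt_const v (1:ℝ)).fun_sub he).fun_sub hue
      simpa [hfun] using this
    have := ((hasDerivAt_pow 2 v).mul_const (hfun u)).fun_sub hh
    refine this.congr_deriv ?_
    push_cast
    ring
  have hmono : MonotoneOn F (Ici 1) := by
    apply monotoneOn_of_deriv_nonneg (convex_Ici 1)
    · have : Continuous F := by
        simp only [hFdef, hfun]
        continuity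
      exact this.continuousOn
    · intro v hv
      exact ((hderiv v).differentiableAt).differentiableWithinAt
    · intro v hv
      rw [interior_Ici] at hv
      have hv1 : (1:ℝ) < v := hv
      rw [(hderiv v).deriv]
      have h1 : u ^ 2 * Real.exp (-(v * u)) ≤ u ^ 2 * Real.exp (-u) := by
        apply mul_le_mul_of_nonneg_left _ (sq_nonneg u)
        apply Real.exp_le_exp.2
        nlinarith
      have h2 := sq_exp_le_two_hfun hu
      push_cast
      nlinarith
  have h1 : F 1 = 0 := by simp [hFdef]
  have := hmono (self_mem_Ici) (show c ∈ Ici (1:ℝ) from hc) hc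
  rw [h1] at this
  simpa [hFdef] using this

noncomputable def Pf (ν : Measure ℝ) (x : ℝ) : ℝ :=
  ∫ y in Ioi (0:ℝ), (1 - Real.exp (-(x * y))) ∂ν
noncomputable def Gf (ν : Measure ℝ) (x : ℝ) : ℝ :=
  ∫ y in Ioi (0:ℝ), y * Real.exp (-(x * y)) ∂ν
noncomputable def Rf (ν : Measure ℝ) (x : ℝ) : ℝ :=
  ∫ y in Ioi (0:ℝ), hfun (x * y) ∂ν

lemma integrable_of_min_bound {ν : Measure ℝ}
    (hν : ∫⁻ y in Ioi (0:ℝ), ENNReal.ofReal (min y 1) ∂ν < ⊤)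
    {f : ℝ → ℝ} (hf : Continuous f) {C : ℝ} (hC : 0 ≤ C)
    (h0 : ∀ y ∈ Ioi (0:ℝ), 0 ≤ f y) (hb : ∀ y ∈ Ioi (0:ℝ), f y ≤ C * min y 1) :
    IntegrableOn f (Ioi 0) ν := by
  refine ⟨hf.aestronglyMeasurable, ?_⟩
  have hae : ∀ᵐ y ∂ν.restrict (Ioi 0),
      ‖f y‖ₑ ≤ ENNReal.ofReal C * ENNReal.ofReal (min y 1) := by
    rw [ae_restrict_iff' measurableSet_Ioi]
    filter_upwards with y hy
    rw [← ENNReal.ofReal_mul hC]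
    rw [Real.enorm_eq_ofReal (h0 y hy)]
    exact ENNReal.ofReal_le_ofReal (hb y hy)
  calc ∫⁻ y, ‖f y‖ₑ ∂ν.restrict (Ioi 0)
      ≤ ∫⁻ y, ENNReal.ofReal C * ENNReal.ofReal (min y 1) ∂ν.restrict (Ioi 0) :=
        lintegral_mono_ae hae
    _ = ENNReal.ofReal C * ∫⁻ y in Ioi (0:ℝ), ENNReal.ofReal (min y 1) ∂ν := by
        rw [lintegral_const_mul]
        exact (measurable_id.min measurable_const).ennreal_ofReal
    _ < ⊤ := ENNReal.mul_lt_top ENNReal.ofReal_lt_top hν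

section NuLemmas

variable {ν : Measure ℝ} (hν : ∫⁻ y in Ioi (0:ℝ), ENNReal.ofReal (min y 1) ∂ν < ⊤)

include hν

lemma integrableP {x : ℝ} (hx : 0 < x) :
    IntegrableOn (fun y => 1 - Real.exp (-(x * y))) (Ioi 0) ν := by
  apply integrable_of_min_bound hν (by continuity) (le_trans zero_le_one (le_max_right x 1))
  · intro y hy
    have hy0 : (0:ℝ) < y := hy
    have : x * y ≥ 0 := by positivity
    have := Real.exp_le_one_iff.2 (by linarith : -(x*y) ≤ 0)
    linarith
  · intro y hy
    have hy0 : (0:ℝ) < y := hy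
    rcases le_total y 1 with h | h
    · rw [min_eq_left h]
      have h1 : 1 - Real.exp (-(x * y)) ≤ x * y := one_sub_exp_le (by positivity)
      have : x * y ≤ max x 1 * y := by
        apply mul_le_mul_of_nonneg_right (le_max_left x 1) hy0.le
      linarith
    · rw [min_eq_right h]
      have := one_sub_exp_le_one (x * y)
      have : (1:ℝ) ≤ max x 1 := le_max_right x 1
      have h2 := one_sub_exp_le_one (x * y)
      linarith

lemma integrableG {x : ℝ} (hx : 0 < x) :
    IntegrableOn (fun y => y * Real.exp (-(x * y))) (Ioi 0) ν := by
  apply integrable_of_min_bound hν (by continuity) (le_trans zero_le_one (le_max_right (1/x) 1))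
  · intro y hy
    have hy0 : (0:ℝ) < y := hy
    positivity
  · intro y hy
    have hy0 : (0:ℝ) < y := hy
    rcases le_total y 1 with h | h
    · rw [min_eq_left h]
      have h1 : Real.exp (-(x * y)) ≤ 1 := Real.exp_le_one_iff.2 (by nlinarith)
      have : y * Real.exp (-(x * y)) ≤ y := by nlinarith [Real.exp_pos (-(x*y))]
      have h2 : y ≤ max (1/x) 1 * y := le_mul_of_one_le_left hy0.le (le_max_right _ _)
      linarith
    · rw [min_eq_right h]
      have h1 : (x * y) * Real.exp (-(x * y)) ≤ 1 := mul_exp_neg_le_one (by positivity)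
      have h2 : y * Real.exp (-(x * y)) ≤ 1 / x := by
        rw [div_eq_inv_mul, ← mul_le_mul_iff_right₀ hx]
        calc x * (y * Real.exp (-(x*y))) = (x * y) * Real.exp (-(x*y)) := by ring
          _ ≤ 1 := h1
          _ = x * (x⁻¹ * 1) := by field_simp
      have : (1/x) ≤ max (1/x) 1 * 1 := by simpa using le_max_left (1/x) 1
      linarith

lemma integrableH {x : ℝ} (hx : 0 < x) :
    IntegrableOn (fun y => hfun (x * y)) (Ioi 0) ν := by
  apply integrable_of_min_bound hν (by simp only [hfun]; continuity) (le_trans zero_le_one (le_max_right x 1))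
  · intro y hy
    have hy0 : (0:ℝ) < y := hy
    exact hfun_nonneg (by positivity)
  · intro y hy
    have hy0 : (0:ℝ) < y := hy
    rcases le_total y 1 with h | h
    · rw [min_eq_left h]
      have h1 := hfun_le_one_sub (show (0:ℝ) ≤ x*y by positivity)
      have h2 : 1 - Real.exp (-(x * y)) ≤ x * y := one_sub_exp_le (by positivity)
      have : x * y ≤ max x 1 * y := mul_le_mul_of_nonneg_right (le_max_left x 1) hy0.le
      linarith
    · rw [min_eq_right h]
      have h1 := hfun_le_one (show (0:ℝ) ≤ x*y by positivity)
      have : (1:ℝ) ≤ max x 1 := le_max_right x 1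
      linarith

lemma integrableSq {x : ℝ} (hx : 0 < x) :
    IntegrableOn (fun y => y ^ 2 * Real.exp (-(x * y))) (Ioi 0) ν := by
  apply integrable_of_min_bound hν (by continuity)
    (le_trans zero_le_one (le_max_right (1/x^2) 1))
  · intro y hy
    have hy0 : (0:ℝ) < y := hy
    positivity
  · intro y hy
    have hy0 : (0:ℝ) < y := hy
    rcases le_total y 1 with h | h
    · rw [min_eq_left h]
      have h1 : Real.exp (-(x * y)) ≤ 1 := Real.exp_le_one_iff.2 (by nlinarith)
      have h2 : y^2 ≤ y := by nlinarith
      have : y^2 * Real.exp (-(x * y)) ≤ y := by nlinarith [Real.exp_pos (-(x*y))]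
      have h3 : y ≤ max (1/x^2) 1 * y := le_mul_of_one_le_left hy0.le (le_max_right _ _)
      linarith
    · rw [min_eq_right h]
      have h1 : (x * y)^2 * Real.exp (-(x * y)) ≤ 1 := sq_mul_exp_neg_le_one (by positivity)
      have h2 : y^2 * Real.exp (-(x * y)) ≤ 1 / x^2 := by
        rw [div_eq_inv_mul, ← mul_le_mul_iff_right₀ (show (0:ℝ) < x^2 by positivity)]
        calc x^2 * (y^2 * Real.exp (-(x*y))) = (x * y)^2 * Real.exp (-(x*y)) := by ring
          _ ≤ 1 := h1
          _ = x^2 * ((x^2)⁻¹ * 1) := by field_simp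
      have : (1/x^2) ≤ max (1/x^2) 1 * 1 := by simpa using le_max_left (1/x^2) 1
      linarith

lemma Rf_eq {x : ℝ} (hx : 0 < x) : Rf ν x = Pf ν x - x * Gf ν x := by
  have h1 : Rf ν x = ∫ y in Ioi (0:ℝ),
      ((1 - Real.exp (-(x * y))) - x * (y * Real.exp (-(x * y)))) ∂ν := by
    apply integral_congr_ae (ae_of_all _ fun y => ?_)
    simp only [hfun]; ring
  rw [h1, integral_sub (integrableP hν hx) ((integrableG hν hx).const_mul x),
    integral_const_mul]
  rfl

lemma Pf_nonneg {x : ℝ} (hx : 0 < x) : 0 ≤ Pf ν x := by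
  apply setIntegral_nonneg measurableSet_Ioi
  intro y hy
  have hy0 : (0:ℝ) < y := hy
  have : x * y ≥ 0 := by positivity
  have := Real.exp_le_one_iff.2 (by linarith : -(x*y) ≤ 0)
  linarith

lemma Gf_nonneg {x : ℝ} (hx : 0 < x) : 0 ≤ Gf ν x := by
  apply setIntegral_nonneg measurableSet_Ioi
  intro y hy
  have hy0 : (0:ℝ) < y := hy
  positivity

lemma Rf_nonneg {x : ℝ} (hx : 0 < x) : 0 ≤ Rf ν x := by
  apply setIntegral_nonneg measurableSet_Ioi
  intro y hy
  have hy0 : (0:ℝ) < y := hy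
  exact hfun_nonneg (by positivity)

lemma Gf_antitone {x₁ x₂ : ℝ} (hx₁ : 0 < x₁) (hle : x₁ ≤ x₂) : Gf ν x₂ ≤ Gf ν x₁ := by
  have hx₂ : 0 < x₂ := lt_of_lt_of_le hx₁ hle
  apply setIntegral_mono_on (integrableG hν hx₂) (integrableG hν hx₁) measurableSet_Ioi
  intro y hy
  have hy0 : (0:ℝ) < y := hy
  have : Real.exp (-(x₂ * y)) ≤ Real.exp (-(x₁ * y)) := by
    apply Real.exp_le_exp.2; nlinarith
  nlinarith

lemma Pf_sub_le {x' x : ℝ} (hx' : 0 < x') (hle : x' ≤ x) :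
    Pf ν x - Pf ν x' ≤ (x - x') * Gf ν x' := by
  have hx : 0 < x := lt_of_lt_of_le hx' hle
  have hint : IntegrableOn (fun y => Real.exp (-(x' * y)) - Real.exp (-(x * y))) (Ioi 0) ν := by
    refine ((integrableP hν hx).sub (integrableP hν hx')).congr (ae_of_all _ fun y => by (try simp only [Pi.sub_apply]); ring)
  have h1 : Pf ν x - Pf ν x' = ∫ y in Ioi (0:ℝ),
      (Real.exp (-(x' * y)) - Real.exp (-(x * y))) ∂ν := by
    rw [Pf, Pf, ← integral_sub (integrableP hν hx) (integrableP hν hx')]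
    apply integral_congr_ae (ae_of_all _ fun y => by (try simp only [Pi.sub_apply]); ring)
  rw [h1]
  calc ∫ y in Ioi (0:ℝ), (Real.exp (-(x' * y)) - Real.exp (-(x * y))) ∂ν
      ≤ ∫ y in Ioi (0:ℝ), ((x - x') * (y * Real.exp (-(x' * y)))) ∂ν := by
        apply setIntegral_mono_on hint ((integrableG hν hx').const_mul _) measurableSet_Ioi
        intro y hy
        have hy0 : (0:ℝ) < y := hy
        have h2 := exp_diff_le (show x' * y ≤ x * y by nlinarith)
        calc Real.exp (-(x' * y)) - Real.exp (-(x * y))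
            ≤ (x * y - x' * y) * Real.exp (-(x' * y)) := h2
          _ = (x - x') * (y * Real.exp (-(x' * y))) := by ring
    _ = (x - x') * Gf ν x' := integral_const_mul _ _

lemma Pf_sub_ge {x θ : ℝ} (hx : 0 < x) (hθ : 0 ≤ θ) :
    θ * Gf ν (x + θ) ≤ Pf ν (x + θ) - Pf ν x := by
  have hxθ : 0 < x + θ := by linarith
  have hint : IntegrableOn (fun y => Real.exp (-(x * y)) - Real.exp (-((x + θ) * y))) (Ioi 0) ν := by
    refine ((integrableP hν hxθ).sub (integrableP hν hx)).congr (ae_of_all _ fun y => by (try simp only [Pi.sub_apply]); ring)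
  have h1 : Pf ν (x + θ) - Pf ν x = ∫ y in Ioi (0:ℝ),
      (Real.exp (-(x * y)) - Real.exp (-((x + θ) * y))) ∂ν := by
    rw [Pf, Pf, ← integral_sub (integrableP hν hxθ) (integrableP hν hx)]
    apply integral_congr_ae (ae_of_all _ fun y => by (try simp only [Pi.sub_apply]); ring)
  rw [h1]
  calc θ * Gf ν (x + θ) = ∫ y in Ioi (0:ℝ), (θ * (y * Real.exp (-((x + θ) * y)))) ∂ν :=
        (integral_const_mul _ _).symm
    _ ≤ ∫ y in Ioi (0:ℝ), (Real.exp (-(x * y)) - Real.exp (-((x + θ) * y))) ∂ν := by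
        apply setIntegral_mono_on ((integrableG hν hxθ).const_mul _) hint measurableSet_Ioi
        intro y hy
        have hy0 : (0:ℝ) < y := hy
        have h2 := exp_diff_ge (show x * y ≤ (x + θ) * y by nlinarith)
        calc θ * (y * Real.exp (-((x + θ) * y)))
            = ((x + θ) * y - x * y) * Real.exp (-((x + θ) * y)) := by ring
          _ ≤ Real.exp (-(x * y)) - Real.exp (-((x + θ) * y)) := h2

lemma Gf_sub_le {x θ : ℝ} (hx : 0 < x) (hθ : 0 ≤ θ) :
    Gf ν x - Gf ν (x + θ) ≤ θ * (2 / x ^ 2 * Rf ν x) := by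
  have hxθ : 0 < x + θ := by linarith
  have h1 : Gf ν x - Gf ν (x + θ) = ∫ y in Ioi (0:ℝ),
      (y * Real.exp (-(x * y)) - y * Real.exp (-((x + θ) * y))) ∂ν := by
    rw [Gf, Gf, ← integral_sub (integrableG hν hx) (integrableG hν hxθ)]
  have h2 : ∫ y in Ioi (0:ℝ), (y * Real.exp (-(x * y)) - y * Real.exp (-((x + θ) * y))) ∂ν
      ≤ ∫ y in Ioi (0:ℝ), (θ * (y ^ 2 * Real.exp (-(x * y)))) ∂ν := by
    have hint : IntegrableOn
        (fun y => y * Real.exp (-(x * y)) - y * Real.exp (-((x + θ) * y))) (Ioi 0) ν :=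
      (integrableG hν hx).sub (integrableG hν hxθ)
    apply setIntegral_mono_on hint ((integrableSq hν hx).const_mul _) measurableSet_Ioi
    intro y hy
    have hy0 : (0:ℝ) < y := hy
    have h3 := exp_diff_le (show x * y ≤ (x + θ) * y by nlinarith)
    calc y * Real.exp (-(x * y)) - y * Real.exp (-((x + θ) * y))
        = y * (Real.exp (-(x * y)) - Real.exp (-((x + θ) * y))) := by ring
      _ ≤ y * (((x + θ) * y - x * y) * Real.exp (-(x * y))) := by
          apply mul_le_mul_of_nonneg_left h3 hy0.le
      _ = θ * (y ^ 2 * Real.exp (-(x * y))) := by ring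
  have h4 : ∫ y in Ioi (0:ℝ), (θ * (y ^ 2 * Real.exp (-(x * y)))) ∂ν
      ≤ θ * (2 / x ^ 2 * Rf ν x) := by
    rw [integral_const_mul]
    apply mul_le_mul_of_nonneg_left _ hθ
    have h5 : ∫ y in Ioi (0:ℝ), (y ^ 2 * Real.exp (-(x * y))) ∂ν
        ≤ ∫ y in Ioi (0:ℝ), (2 / x ^ 2 * hfun (x * y)) ∂ν := by
      apply setIntegral_mono_on (integrableSq hν hx) ((integrableH hν hx).const_mul _)
        measurableSet_Ioi
      intro y hy
      have hy0 : (0:ℝ) < y := hy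
      have h6 := sq_exp_le_two_hfun (show (0:ℝ) ≤ x * y by positivity)
      have hx2 : (0:ℝ) < x ^ 2 := by positivity
      rw [div_mul_eq_mul_div, le_div_iff₀ hx2]
      nlinarith
    rw [integral_const_mul] at h5
    exact h5
  rw [h1]; exact le_trans h2 h4

lemma Rf_scale {x c : ℝ} (hx : 0 < x) (hc : 1 ≤ c) : Rf ν (c * x) ≤ c ^ 2 * Rf ν x := by
  have hcx : 0 < c * x := by nlinarith
  calc Rf ν (c * x) = ∫ y in Ioi (0:ℝ), hfun (c * x * y) ∂ν := rfl
    _ ≤ ∫ y in Ioi (0:ℝ), (c ^ 2 * hfun (x * y)) ∂ν := by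
        apply setIntegral_mono_on (integrableH hν hcx) ((integrableH hν hx).const_mul _)
          measurableSet_Ioi
        intro y hy
        have hy0 : (0:ℝ) < y := hy
        have := hfun_scale (show (0:ℝ) ≤ x * y by positivity) hc
        calc hfun (c * x * y) = hfun (c * (x * y)) := by rw [mul_assoc]
          _ ≤ c ^ 2 * hfun (x * y) := this
    _ = c ^ 2 * Rf ν x := integral_const_mul _ _

lemma hasDerivAt_Pf {x : ℝ} (hx : 0 < x) : HasDerivAt (Pf ν) (Gf ν x) x := by
  have hb : ∀ᵐ y ∂ν.restrict (Ioi 0), ∀ c ∈ Metric.ball x (x / 2),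
      ‖y * Real.exp (-(c * y))‖ ≤ y * Real.exp (-(x / 2 * y)) := by
    rw [ae_restrict_iff' measurableSet_Ioi]
    filter_upwards with y hy
    intro c hc
    have hy0 : (0:ℝ) < y := hy
    have hc2 : x / 2 ≤ c := by
      have := abs_lt.1 (mem_ball_iff_norm.1 hc)
      linarith [this.1]
    have hpos : (0:ℝ) ≤ y * Real.exp (-(c * y)) := by positivity
    rw [Real.norm_eq_abs, abs_of_nonneg hpos]
    have : Real.exp (-(c * y)) ≤ Real.exp (-(x / 2 * y)) := by
      apply Real.exp_le_exp.2; nlinarith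
    nlinarith
  have hd : ∀ᵐ y ∂ν.restrict (Ioi 0), ∀ c ∈ Metric.ball x (x / 2),
      HasDerivAt (fun c => 1 - Real.exp (-(c * y))) (y * Real.exp (-(c * y))) c := by
    filter_upwards with y
    intro c _
    have := (hasDerivAt_const c (1:ℝ)).fun_sub (exp_neg_hasDerivAt y c)
    simpa using this
  have key := hasDerivAt_integral_of_dominated_loc_of_deriv_le (μ := ν.restrict (Ioi 0))
    (F := fun c y => 1 - Real.exp (-(c * y)))
    (F' := fun c y => y * Real.exp (-(c * y)))
    (x₀ := x) (bound := fun y => y * Real.exp (-(x / 2 * y)))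
    (Metric.ball_mem_nhds x (show (0:ℝ) < x / 2 by linarith))
    (Eventually.of_forall fun c => (by continuity : Continuous fun y : ℝ =>
      1 - Real.exp (-(c * y))).aestronglyMeasurable)
    (integrableP hν hx)
    ((by continuity : Continuous fun y : ℝ => y * Real.exp (-(x * y))).aestronglyMeasurable)
    hb (integrableG hν (by linarith : (0:ℝ) < x / 2)) hd
  exact key.2

lemma exists_slice (hνinf : ν (Ioi (0:ℝ)) = ⊤) :
    ∃ e K : ℝ, 0 < e ∧ 0 < ν (Ioc e K) ∧ ν (Ioc e K) ≠ ⊤ := by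
  -- first find e > 0 with ν (Ioi e) ≠ 0
  have h1 : ∃ n : ℕ, ν (Ioi (1 / (n + 1) : ℝ)) ≠ 0 := by
    by_contra hcon
    push_neg at hcon
    have hsub : Ioi (0:ℝ) ⊆ ⋃ n : ℕ, Ioi (1 / (n + 1) : ℝ) := by
      intro y hy
      obtain ⟨n, hn⟩ := exists_nat_one_div_lt (show (0:ℝ) < y from hy)
      exact mem_iUnion.2 ⟨n, hn⟩
    have : ν (Ioi (0:ℝ)) = 0 :=
      measure_mono_null hsub (measure_iUnion_null fun n => hcon n)
    rw [hνinf] at this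
    exact top_ne_zero this
  obtain ⟨n, hn⟩ := h1
  set e : ℝ := 1 / (n + 1) with he_def
  have he : 0 < e := by positivity
  have h2 : ∃ m : ℕ, ν (Ioc e (e + m + 1)) ≠ 0 := by
    by_contra hcon
    push_neg at hcon
    have hsub : Ioi e ⊆ ⋃ m : ℕ, Ioc e (e + m + 1) := by
      intro y hy
      have hy' : e < y := hy
      obtain ⟨m, hm⟩ := exists_nat_gt (y - e)
      exact mem_iUnion.2 ⟨m, ⟨hy', by push_cast; linarith⟩⟩
    exact hn (measure_mono_null hsub (measure_iUnion_null fun m => hcon m))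
  obtain ⟨m, hm⟩ := h2
  refine ⟨e, e + m + 1, he, pos_iff_ne_zero.2 hm, ?_⟩
  -- finiteness from hν
  intro htop
  have hmin : 0 < min e 1 := lt_min he one_pos
  have hle : ENNReal.ofReal (min e 1) * ν (Ioc e (e + m + 1))
      ≤ ∫⁻ y in Ioi (0:ℝ), ENNReal.ofReal (min y 1) ∂ν := by
    have hsub : Ioc e (e + m + 1) ⊆ Ioi (0:ℝ) := fun y hy => lt_trans he hy.1
    calc ENNReal.ofReal (min e 1) * ν (Ioc e (e + m + 1))
        = ∫⁻ _ in Ioc e (e + m + 1), ENNReal.ofReal (min e 1) ∂ν := by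
          rw [setLIntegral_const]
      _ ≤ ∫⁻ y in Ioc e (e + m + 1), ENNReal.ofReal (min y 1) ∂ν := by
          apply setLIntegral_mono' measurableSet_Ioc
          intro y hy
          exact ENNReal.ofReal_le_ofReal (min_le_min hy.1.le le_rfl)
      _ ≤ ∫⁻ y in Ioi (0:ℝ), ENNReal.ofReal (min y 1) ∂ν := by
          apply lintegral_mono_set hsub
  rw [htop, ENNReal.mul_top (ENNReal.ofReal_pos.2 hmin).ne'] at hle
  exact (lt_irrefl _ (lt_of_le_of_lt hle hν)).elim

lemma Gf_pos (hνinf : ν (Ioi (0:ℝ)) = ⊤) {x : ℝ} (hx : 0 < x) : 0 < Gf ν x := by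
  obtain ⟨e, K, he, h0, hfin⟩ := exists_slice hν hνinf
  have hsub : Ioc e K ⊆ Ioi (0:ℝ) := fun y hy => lt_trans he hy.1
  have heK : e < K := by
    by_contra hcon
    push_neg at hcon
    rw [Ioc_eq_empty (by exact fun h => absurd hcon (not_le.2 h))] at h0
    simp at h0
  have hconst : (0:ℝ) < e * Real.exp (-(x * K)) := by positivity
  have step1 : e * Real.exp (-(x * K)) * (ν (Ioc e K)).toReal
      ≤ ∫ y in Ioc e K, y * Real.exp (-(x * y)) ∂ν := by
    have : ∫ y in Ioc e K, (e * Real.exp (-(x * K))) ∂ν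
        = (ν (Ioc e K)).toReal * (e * Real.exp (-(x * K))) := by
      rw [setIntegral_const]; simp [smul_eq_mul, measureReal_def]
    rw [show e * Real.exp (-(x * K)) * (ν (Ioc e K)).toReal
        = (ν (Ioc e K)).toReal * (e * Real.exp (-(x * K))) by ring, ← this]
    apply setIntegral_mono_on
    · exact integrableOn_const hfin
    · exact (integrableG hν hx).mono_set hsub
    · exact measurableSet_Ioc
    · intro y hy
      have h1 : e ≤ y := hy.1.le
      have h2 : Real.exp (-(x * K)) ≤ Real.exp (-(x * y)) := by
        apply Real.exp_le_exp.2
        have := hy.2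
        nlinarith
      have := Real.exp_pos (-(x * K))
      nlinarith
  have step2 : ∫ y in Ioc e K, y * Real.exp (-(x * y)) ∂ν ≤ Gf ν x := by
    apply setIntegral_mono_set (integrableG hν hx)
    · filter_upwards [ae_restrict_mem measurableSet_Ioi] with y hy
      have hy0 : (0:ℝ) < y := hy
      simp only [Pi.zero_apply]
      positivity
    · exact HasSubset.Subset.eventuallyLE hsub
  have htoReal : 0 < (ν (Ioc e K)).toReal := ENNReal.toReal_pos h0.ne' hfin
  nlinarith

lemma Pf_pos (hνinf : ν (Ioi (0:ℝ)) = ⊤) {x : ℝ} (hx : 0 < x) : 0 < Pf ν x := by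
  obtain ⟨e, K, he, h0, hfin⟩ := exists_slice hν hνinf
  have hsub : Ioc e K ⊆ Ioi (0:ℝ) := fun y hy => lt_trans he hy.1
  have hconst : (0:ℝ) < 1 - Real.exp (-(x * e)) := by
    have : Real.exp (-(x * e)) < 1 := by
      apply Real.exp_lt_one_iff.2
      nlinarith
    linarith
  have step1 : (1 - Real.exp (-(x * e))) * (ν (Ioc e K)).toReal
      ≤ ∫ y in Ioc e K, (1 - Real.exp (-(x * y))) ∂ν := by
    have : ∫ y in Ioc e K, (1 - Real.exp (-(x * e))) ∂ν
        = (ν (Ioc e K)).toReal * (1 - Real.exp (-(x * e))) := by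
      rw [setIntegral_const]; simp [smul_eq_mul, measureReal_def]
    rw [show (1 - Real.exp (-(x * e))) * (ν (Ioc e K)).toReal
        = (ν (Ioc e K)).toReal * (1 - Real.exp (-(x * e))) by ring, ← this]
    apply setIntegral_mono_on
    · exact integrableOn_const hfin
    · exact (integrableP hν hx).mono_set hsub
    · exact measurableSet_Ioc
    · intro y hy
      have h2 : Real.exp (-(x * y)) ≤ Real.exp (-(x * e)) := by
        apply Real.exp_le_exp.2
        have := hy.1
        nlinarith
      linarith
  have step2 : ∫ y in Ioc e K, (1 - Real.exp (-(x * y))) ∂ν ≤ Pf ν x := by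
    apply setIntegral_mono_set (integrableP hν hx)
    · filter_upwards [ae_restrict_mem measurableSet_Ioi] with y hy
      have hy0 : (0:ℝ) < y := hy
      have hxy : (0:ℝ) ≤ x * y := by positivity
      have := Real.exp_le_one_iff.2 (by linarith : -(x*y) ≤ 0)
      simp only [Pi.zero_apply]
      linarith
    · exact HasSubset.Subset.eventuallyLE hsub
  have htoReal : 0 < (ν (Ioc e K)).toReal := ENNReal.toReal_pos h0.ne' hfin
  nlinarith

end NuLemmas


lemma arith1 {w d R : ℝ} (hw : w ≠ 0) : w * ((d*w) * (2 / w ^ 2 * R)) = 2*d*R := by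
  field_simp

lemma arith2 {w d L : ℝ} (hw : w ≠ 0) (hd : d ≠ 0) : w * (L/(d*w)) = L/d := by
  field_simp

lemma arith3 {d A w' : ℝ} (hd : 0 < d) (h : 3*A/d < w') : A ≤ d/3*w' := by
  rw [div_lt_iff₀ hd] at h
  nlinarith

lemma arith4 {c d : ℝ} (h1 : 1 ≤ c) (h2 : c ≤ 1+d/3) (h3 : 0 < d) (h4 : d ≤ 1) :
    c^2 ≤ 1+d := by nlinarith

set_option maxHeartbeats 1000000 in
theorem exp_moment_inverse_subordinator_infinite_of_tail_criterion
    {Ω : Type*} [MeasurableSpace Ω] (P : Measure Ω) [IsProbabilityMeasure P]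
    (D : ℝ → Ω → ℝ) (ν : Measure ℝ) (ψ : ℝ → ℝ) (lam t r : ℝ)
    (hDmeas : ∀ u, Measurable (D u))
    (hD0 : ∀ ω, D 0 ω = 0)
    (hDmono : ∀ ω, MonotoneOn (fun u => D u ω) (Set.Ici 0))
    (hDrc : ∀ ω, ∀ u, 0 ≤ u → ContinuousWithinAt (fun v => D v ω) (Set.Ici u) u)
    (hstat : ∀ s u : ℝ, 0 ≤ s → 0 ≤ u →
      Measure.map (fun ω => D (s + u) ω - D s ω) P = Measure.map (D u) P)
    (hindep : ∀ (n : ℕ) (τ : Fin (n + 1) → ℝ), (∀ i, 0 ≤ τ i) → Monotone τ →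
      ProbabilityTheory.iIndepFun
        (fun i : Fin n => fun ω => D (τ i.succ) ω - D (τ i.castSucc) ω) P)
    (hν : ∫⁻ y in Set.Ioi (0 : ℝ), ENNReal.ofReal (min y 1) ∂ν < ⊤)
    (hνinf : ν (Set.Ioi (0 : ℝ)) = ⊤)
    (hψ : ∀ s, 0 < s → ψ s = ∫ y in Set.Ioi (0 : ℝ), (1 - Real.exp (-(s * y))) ∂ν)
    (hlaplace : ∀ s, 0 < s → ∀ u, 0 ≤ u →
      ∫ ω, Real.exp (-(s * D u ω)) ∂P = Real.exp (-(u * ψ s)))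
    (hlam : 0 < lam) (ht : 0 < t) (hr : 0 < r)
    (ε M : ℝ) (x xinv : ℝ → ℝ) (hε : 0 < ε) (hεlam : ε < lam) (hM : 0 < M)
    (hxrange : ∀ s, M ≤ s → 0 < xinv s ∧ deriv ψ (xinv s) = x s)
    (hxanti : ∀ s₁ s₂, M ≤ s₁ → s₁ ≤ s₂ → x s₂ ≤ x s₁)
    (hxt : ∀ s, M ≤ s → s * x s < t)
    (hxR : ∀ s, M ≤ s →
      (ψ (xinv s) - xinv s * deriv ψ (xinv s)) / s ^ (r - 1) ≤ lam - ε) :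
    ∫⁻ ω, ENNReal.ofReal (Real.exp (lam * (sInf {u : ℝ | 0 < u ∧ t < D u ω}) ^ r)) ∂P = ⊤ := by
  -- basic facts
  have hψeq : ∀ {z : ℝ}, 0 < z → ψ z = Pf ν z := fun {z} hz => hψ z hz
  have hderiv : ∀ {z : ℝ}, 0 < z → deriv ψ z = Gf ν z := by
    intro z hz
    have h1 : ψ =ᶠ[𝓝 z] Pf ν :=
      eventually_of_mem (Ioi_mem_nhds hz) (fun y hy => hψ y hy)
    exact ((hasDerivAt_Pf hν hz).congr_of_eventuallyEq h1).deriv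
  have hGpos : ∀ {z : ℝ}, 0 < z → 0 < Gf ν z := fun {z} hz => Gf_pos hν hνinf hz
  have hD0' : ∀ u, 0 ≤ u → ∀ ω, 0 ≤ D u ω := by
    intro u hu ω
    have := hDmono ω (le_refl (0:ℝ)) (hu : u ∈ Ici (0:ℝ)) hu
    simpa [hD0 ω] using this
  have hexpint : ∀ z, 0 < z → ∀ u, 0 ≤ u →
      Integrable (fun ω => Real.exp (-(z * D u ω))) P := by
    intro z hz u hu
    have hmeas : Measurable fun ω => Real.exp (-(z * D u ω)) :=
      Real.measurable_exp.comp (((hDmeas u).const_mul z).neg)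
    apply Integrable.mono' (integrable_const (1:ℝ)) hmeas.aestronglyMeasurable
    apply ae_of_all
    intro ω
    rw [Real.norm_eq_abs, abs_of_pos (Real.exp_pos _)]
    apply Real.exp_le_one_iff.2
    exact neg_nonpos.2 (mul_nonneg hz.le (hD0' u hu ω))
  -- Chebyshev bound
  have hcheb : ∀ z, 0 < z → ∀ u, 0 ≤ u →
      (P {ω | D u ω ≤ t}).toReal ≤ Real.exp (z * t - u * ψ z) := by
    intro z hz u hu
    have hAmeas : MeasurableSet {ω | D u ω ≤ t} :=
      measurableSet_le (hDmeas u) measurable_const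
    have hint := hexpint z hz u hu
    have h1 : (P {ω | D u ω ≤ t}).toReal
        = ∫ ω in {ω | D u ω ≤ t}, (1:ℝ) ∂P := by
      rw [setIntegral_const]; simp [measureReal_def]
    rw [h1]
    calc ∫ ω in {ω | D u ω ≤ t}, (1:ℝ) ∂P
        ≤ ∫ ω in {ω | D u ω ≤ t},
            Real.exp (z * t) * Real.exp (-(z * D u ω)) ∂P := by
          apply setIntegral_mono_on
          · exact integrableOn_const
          · exact (hint.const_mul _).integrableOn
          · exact hAmeas
          · intro ω hω
            rw [← Real.exp_add]
            apply Real.one_le_exp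
            have hω' : D u ω ≤ t := hω
            have := mul_le_mul_of_nonneg_left hω' hz.le
            linarith
      _ ≤ ∫ ω, Real.exp (z * t) * Real.exp (-(z * D u ω)) ∂P := by
          apply setIntegral_le_integral (hint.const_mul _)
          apply ae_of_all
          intro ω
          positivity
      _ = Real.exp (z * t) * Real.exp (-(u * ψ z)) := by
          rw [integral_const_mul, hlaplace z hz u hu]
      _ = Real.exp (z * t - u * ψ z) := by rw [← Real.exp_add]; ring_nf
  -- the null set where D never exceeds t
  set N : Set Ω := ⋂ (q : ℚ) (_ : 0 < (q:ℝ)), {ω | D (q:ℝ) ω ≤ t} with hNdef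
  have hNmeas : MeasurableSet N :=
    MeasurableSet.iInter fun q => MeasurableSet.iInter fun _ =>
      measurableSet_le (hDmeas _) measurable_const
  have hψ1 : 0 < ψ 1 := by rw [hψeq one_pos]; exact Pf_pos hν hνinf one_pos
  have hN0 : P N = 0 := by
    have hsub : ∀ n : ℕ, N ⊆ {ω | D ((n:ℝ)+1) ω ≤ t} := by
      intro n ω hω
      have h1 : ω ∈ {ω | D (((n+1 : ℚ)):ℝ) ω ≤ t} := by
        have := mem_iInter.1 hω (n+1 : ℚ)
        exact mem_iInter.1 this (by push_cast; positivity)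
      simpa using h1
    have hbound : ∀ n : ℕ, (P N).toReal ≤ Real.exp (1 * t - ((n:ℝ)+1) * ψ 1) := by
      intro n
      have h2 : (P N).toReal ≤ (P {ω | D ((n:ℝ)+1) ω ≤ t}).toReal :=
        ENNReal.toReal_mono (measure_ne_top P _) (measure_mono (hsub n))
      exact h2.trans (hcheb 1 one_pos ((n:ℝ)+1) (by positivity))
    have hlim : Tendsto (fun n : ℕ => Real.exp (1 * t - ((n:ℝ)+1) * ψ 1)) atTop (𝓝 0) := by
      apply Real.tendsto_exp_atBot.comp
      have h1 : Tendsto (fun n : ℕ => ((n:ℝ)+1) * ψ 1) atTop atTop := by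
        apply Tendsto.atTop_mul_const hψ1
        exact tendsto_atTop_add_const_right _ _ tendsto_natCast_atTop_atTop
      have h2 := tendsto_neg_atTop_atBot.comp h1
      have h3 := tendsto_atBot_add_const_left atTop (1*t) h2
      simpa [Function.comp, sub_eq_add_neg] using h3
    have h4 : (P N).toReal ≤ 0 := ge_of_tendsto' hlim hbound
    have h5 : (P N).toReal = 0 := le_antisymm h4 ENNReal.toReal_nonneg
    rcases (ENNReal.toReal_eq_zero_iff _).1 h5 with h | h
    · exact h
    · exact absurd h (measure_ne_top P N)
  -- choose δ
  obtain ⟨δ, hδmem, hδkey⟩ : ∃ δ : ℝ, δ ∈ Ioc (0:ℝ) 1 ∧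
      (1+2*δ)*(1+δ)^r*(lam-ε) ≤ lam - ε/2 := by
    have hval : (1+2*(0:ℝ))*(1+(0:ℝ))^r*(lam-ε) < lam - ε/2 := by
      rw [show (1:ℝ)+(0:ℝ) = 1 by ring, Real.one_rpow]
      norm_num
      linarith
    have hcont : ContinuousAt (fun δ : ℝ => (1+2*δ)*(1+δ)^r*(lam-ε)) 0 := by
      apply ContinuousAt.mul _ continuousAt_const
      apply ContinuousAt.mul
      · exact (continuous_const.add (continuous_const.mul continuous_id)).continuousAt
      · have h1 : ContinuousAt (fun y : ℝ => y ^ r) ((1:ℝ)+(0:ℝ)) :=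
          Real.continuousAt_rpow_const _ _ (Or.inl (by norm_num))
        exact h1.comp (continuous_const.add continuous_id).continuousAt
    have hev : ∀ᶠ d in 𝓝 (0:ℝ), (1+2*d)*(1+d)^r*(lam-ε) < lam - ε/2 :=
      hcont (Iio_mem_nhds hval)
    have hev2 : ∀ᶠ d in 𝓝[>] (0:ℝ), (1+2*d)*(1+d)^r*(lam-ε) < lam - ε/2 :=
      nhdsWithin_le_nhds hev
    have hev3 : ∀ᶠ d in 𝓝[>] (0:ℝ), d ∈ Ioc (0:ℝ) 1 :=
      Ioc_mem_nhdsGT_of_mem (show (0:ℝ) ∈ Ico (0:ℝ) 1 by constructor <;> norm_num)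
    obtain ⟨δ, h1, h2⟩ := (hev3.and hev2).exists
    exact ⟨δ, h1, h2.le⟩
  obtain ⟨hδ0, hδ1⟩ := hδmem
  have h1δ : (0:ℝ) < 1 + δ := by linarith
  set Δ : ℝ := (1+δ)*Real.log 2/(t*δ) with hΔdef
  have hlog2 : (0:ℝ) < Real.log 2 := Real.log_pos (by norm_num)
  have hlog4 : (0:ℝ) < Real.log 4 := Real.log_pos (by norm_num)
  have hΔpos : 0 < Δ := div_pos (mul_pos h1δ hlog2) (mul_pos ht hδ0)
  set X₀ : ℝ := 3*Δ/δ with hX₀def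
  have hX₀pos : 0 < X₀ := by positivity
  set S₀ : ℝ := max M (t / Gf ν X₀) with hS₀def
  have hS₀M : M ≤ S₀ := le_max_left _ _
  have hS₀pos : 0 < S₀ := lt_of_lt_of_le hM hS₀M
  clear_value Δ X₀ S₀
  -- main lower bound on P(D_s ≤ t)
  have hmain : ∀ s, S₀ ≤ s →
      1/4 * Real.exp (-((lam - ε/2)*s^r) - Real.log 4/δ)
        ≤ (P {ω | D s ω ≤ t}).toReal := by
    intro s hs
    have hsM : M ≤ s := le_trans hS₀M hs
    have hs0 : 0 < s := lt_of_lt_of_le hM hsM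
    set σ : ℝ := (1+δ)*s with hσdef
    have hsσ : s < σ := by
      have := mul_lt_mul_of_pos_right (show (1:ℝ) < 1+δ by linarith) hs0
      simpa [hσdef] using this
    have hσM : M ≤ σ := le_trans hsM hsσ.le
    have hσ0 : 0 < σ := mul_pos h1δ hs0
    obtain ⟨hw0, hwG⟩ := hxrange σ hσM
    set w' : ℝ := xinv σ with hw'def
    have hGw' : Gf ν w' = x σ := by rw [← hderiv hw0]; exact hwG
    have hxt' := hxt σ hσM
    have hsx : s * Gf ν w' ≤ t/(1+δ) := by
      rw [hGw', le_div_iff₀ h1δ]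
      calc s * x σ * (1+δ) = σ * x σ := by rw [hσdef]; ring
        _ ≤ t := (hxt σ hσM).le
    -- w' is large
    have hw'X : X₀ < w' := by
      by_contra hcon
      push_neg at hcon
      have h1 : Gf ν X₀ ≤ Gf ν w' := Gf_antitone hν hw0 hcon
      have h2 : x σ < t/σ := by
        rw [lt_div_iff₀ hσ0, mul_comm]
        exact hxt σ hσM
      have h3 : t/σ < t/s := div_lt_div_of_pos_left ht hs0 hsσ
      have h4 : t/s ≤ t/S₀ := by gcongr
      have h5 : t/S₀ ≤ Gf ν X₀ := by
        rw [div_le_iff₀ hS₀pos]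
        have h6 : t / Gf ν X₀ ≤ S₀ := by rw [hS₀def]; exact le_max_right _ _
        have h7 : 0 < Gf ν X₀ := hGpos hX₀pos
        rw [div_le_iff₀ h7] at h6
        calc t ≤ S₀ * Gf ν X₀ := h6
          _ = Gf ν X₀ * S₀ := mul_comm _ _
      rw [← hGw'] at h2
      linarith
    set w : ℝ := w' + Δ with hwdef
    have hw : 0 < w := by linarith
    set θ : ℝ := δ * w with hθdef
    have hθpos : 0 < θ := mul_pos hδ0 hw
    have hwθ : 0 < w + θ := by linarith
    set a : ℝ := s * Gf ν (w+θ) - Real.log 4/θ with hadef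
    clear_value a θ w w' σ
    -- a ≤ t
    have hGwθ : Gf ν (w+θ) ≤ Gf ν w' := Gf_antitone hν hw0 (by linarith)
    have hat : a ≤ t := by
      have h1 : s * Gf ν (w+θ) ≤ t/(1+δ) :=
        le_trans (mul_le_mul_of_nonneg_left hGwθ hs0.le) hsx
      have h2 : t/(1+δ) ≤ t := div_le_self ht.le (by linarith)
      have h3 : 0 < Real.log 4/θ := div_pos hlog4 hθpos
      simp only [hadef]
      linarith
    -- events
    have hA1meas : MeasurableSet {ω | D s ω < a} :=
      measurableSet_lt (hDmeas s) measurable_const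
    have hA3meas : MeasurableSet {ω | t < D s ω} :=
      measurableSet_lt measurable_const (hDmeas s)
    have hfint := hexpint w hw s hs0.le
    have hL := hlaplace w hw s hs0.le
    have hdisj : Disjoint {ω | D s ω < a} {ω | t < D s ω} := by
      rw [Set.disjoint_left]
      intro ω h1 h3
      have h1' : D s ω < a := h1
      have h3' : t < D s ω := h3
      linarith
    -- T1
    have hT1 : ∫ ω in {ω | D s ω < a}, Real.exp (-(w * D s ω)) ∂P
        ≤ Real.exp (θ*a - s*ψ (w+θ)) := by
      have hint2 := hexpint (w+θ) hwθ s hs0.le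
      calc ∫ ω in {ω | D s ω < a}, Real.exp (-(w * D s ω)) ∂P
          ≤ ∫ ω in {ω | D s ω < a},
              Real.exp (θ*a) * Real.exp (-((w+θ) * D s ω)) ∂P := by
            apply setIntegral_mono_on hfint.integrableOn
              (hint2.const_mul _).integrableOn hA1meas
            intro ω hω
            have hω' : D s ω < a := hω
            rw [← Real.exp_add]
            apply Real.exp_le_exp.2
            have hexpand : (w+θ) * D s ω = w * D s ω + θ * D s ω := by ring
            have := mul_le_mul_of_nonneg_left hω'.le hθpos.le
            linarith
        _ ≤ ∫ ω, Real.exp (θ*a) * Real.exp (-((w+θ) * D s ω)) ∂P := by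
            apply setIntegral_le_integral (hint2.const_mul _)
            apply ae_of_all
            intro ω
            positivity
        _ = Real.exp (θ*a) * Real.exp (-(s * ψ (w+θ))) := by
            rw [integral_const_mul, hlaplace (w+θ) hwθ s hs0.le]
        _ = Real.exp (θ*a - s*ψ (w+θ)) := by rw [← Real.exp_add]; ring_nf
    have hT1' : Real.exp (θ*a - s*ψ (w+θ)) ≤ 1/4 * Real.exp (-(s * ψ w)) := by
      have hPge : θ * Gf ν (w+θ) ≤ Pf ν (w+θ) - Pf ν w := Pf_sub_ge hν hw hθpos.le
      rw [hψeq hwθ, hψeq hw]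
      have h4 : (1:ℝ)/4 = Real.exp (-(Real.log 4)) := by
        rw [Real.exp_neg, Real.exp_log (by norm_num : (0:ℝ) < 4)]
        norm_num
      rw [h4, ← Real.exp_add]
      apply Real.exp_le_exp.2
      have hθa : θ * a = s * (θ * Gf ν (w+θ)) - Real.log 4 := by
        have hc : Real.log 4/θ*θ = Real.log 4 := div_mul_cancel₀ _ hθpos.ne'
        calc θ * a = θ * (s * Gf ν (w+θ)) - Real.log 4/θ*θ := by
              rw [hadef]; ring
          _ = s * (θ * Gf ν (w+θ)) - Real.log 4 := by rw [hc]; ring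
      have h5 : s * (θ * Gf ν (w+θ)) ≤ s * (Pf ν (w+θ) - Pf ν w) :=
        mul_le_mul_of_nonneg_left hPge hs0.le
      have h6 : s * (Pf ν (w+θ) - Pf ν w) = s * Pf ν (w+θ) - s * Pf ν w := by ring
      linarith
    -- T3
    have hT3 : ∫ ω in {ω | t < D s ω}, Real.exp (-(w * D s ω)) ∂P
        ≤ Real.exp (-(Δ*t) - s*ψ w') := by
      have hint2 := hexpint w' hw0 s hs0.le
      calc ∫ ω in {ω | t < D s ω}, Real.exp (-(w * D s ω)) ∂P
          ≤ ∫ ω in {ω | t < D s ω},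
              Real.exp (-(Δ*t)) * Real.exp (-(w' * D s ω)) ∂P := by
            apply setIntegral_mono_on hfint.integrableOn
              (hint2.const_mul _).integrableOn hA3meas
            intro ω hω
            have hω' : t < D s ω := hω
            rw [← Real.exp_add]
            apply Real.exp_le_exp.2
            have hexpand : w * D s ω = w' * D s ω + Δ * D s ω := by
              rw [hwdef]; ring
            have := mul_le_mul_of_nonneg_left hω'.le hΔpos.le
            linarith
        _ ≤ ∫ ω, Real.exp (-(Δ*t)) * Real.exp (-(w' * D s ω)) ∂P := by
            apply setIntegral_le_integral (hint2.const_mul _)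
            apply ae_of_all
            intro ω
            positivity
        _ = Real.exp (-(Δ*t)) * Real.exp (-(s * ψ w')) := by
            rw [integral_const_mul, hlaplace w' hw0 s hs0.le]
        _ = Real.exp (-(Δ*t) - s*ψ w') := by rw [← Real.exp_add]; ring_nf
    have hT3' : Real.exp (-(Δ*t) - s*ψ w') ≤ 1/2 * Real.exp (-(s * ψ w)) := by
      have hPle : Pf ν w - Pf ν w' ≤ (w - w') * Gf ν w' :=
        Pf_sub_le hν hw0 (show w' ≤ w by rw [hwdef]; linarith)
      have hww' : w - w' = Δ := by rw [hwdef]; ring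
      rw [hww'] at hPle
      rw [hψeq hw0, hψeq hw]
      have h4 : (1:ℝ)/2 = Real.exp (-(Real.log 2)) := by
        rw [Real.exp_neg, Real.exp_log (by norm_num : (0:ℝ) < 2)]
        norm_num
      rw [h4, ← Real.exp_add]
      apply Real.exp_le_exp.2
      have hΔt : Δ * t = (1+δ)*Real.log 2/δ := by
        have htδ : t * δ ≠ 0 := (mul_pos ht hδ0).ne'
        rw [hΔdef, div_mul_eq_mul_div, div_eq_div_iff htδ hδ0.ne']
        ring
      have h5 : s * (Pf ν w - Pf ν w') ≤ Δ * (t/(1+δ)) := by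
        have h6 : s * (Pf ν w - Pf ν w') ≤ s * (Δ * Gf ν w') :=
          mul_le_mul_of_nonneg_left hPle hs0.le
        have h7 : s * (Δ * Gf ν w') = Δ * (s * Gf ν w') := by ring
        have h8 : Δ * (s * Gf ν w') ≤ Δ * (t/(1+δ)) :=
          mul_le_mul_of_nonneg_left hsx hΔpos.le
        linarith
      have h9 : Δ * (t/(1+δ)) = Δ*t - Real.log 2 := by
        have e1 : Δ * (t/(1+δ)) = Δ * t / (1+δ) := by ring
        have e3 : (1+δ)*Real.log 2/δ = Real.log 2/δ + Real.log 2 := by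
          rw [div_eq_iff hδ0.ne', add_mul (Real.log 2 / δ) (Real.log 2) δ,
            div_mul_cancel₀ _ hδ0.ne']
          ring
        have e2 : Δ * t / (1+δ) = Real.log 2 / δ := by
          rw [hΔt, div_div, mul_comm δ (1+δ), mul_div_mul_left _ _ h1δ.ne']
        rw [e1, e2, hΔt, e3]
        ring
      have h10 : s * (Pf ν w - Pf ν w') = s * Pf ν w - s * Pf ν w' := by ring
      linarith
    -- splitting
    have hsplit1 : ∫ ω in {ω | D s ω < a} ∪ {ω | t < D s ω}, Real.exp (-(w * D s ω)) ∂P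
        + ∫ ω in ({ω | D s ω < a} ∪ {ω | t < D s ω})ᶜ, Real.exp (-(w * D s ω)) ∂P
        = ∫ ω, Real.exp (-(w * D s ω)) ∂P :=
      integral_add_compl (hA1meas.union hA3meas) hfint
    have hsplit2 : ∫ ω in {ω | D s ω < a} ∪ {ω | t < D s ω}, Real.exp (-(w * D s ω)) ∂P
        = ∫ ω in {ω | D s ω < a}, Real.exp (-(w * D s ω)) ∂P
          + ∫ ω in {ω | t < D s ω}, Real.exp (-(w * D s ω)) ∂P :=
      setIntegral_union hdisj hA3meas hfint.integrableOn hfint.integrableOn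
    have hT2 : 1/4 * Real.exp (-(s * ψ w))
        ≤ ∫ ω in ({ω | D s ω < a} ∪ {ω | t < D s ω})ᶜ, Real.exp (-(w * D s ω)) ∂P := by
      have hu1 := hT1.trans hT1'
      have hu3 := hT3.trans hT3'
      rw [hL] at hsplit1
      linarith
    have hT2' : ∫ ω in ({ω | D s ω < a} ∪ {ω | t < D s ω})ᶜ, Real.exp (-(w * D s ω)) ∂P
        ≤ Real.exp (-(w*a)) * (P {ω | D s ω ≤ t}).toReal := by
      have hA2meas : MeasurableSet (({ω | D s ω < a} ∪ {ω | t < D s ω})ᶜ) :=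
        (hA1meas.union hA3meas).compl
      calc ∫ ω in ({ω | D s ω < a} ∪ {ω | t < D s ω})ᶜ, Real.exp (-(w * D s ω)) ∂P
          ≤ ∫ _ in ({ω | D s ω < a} ∪ {ω | t < D s ω})ᶜ, Real.exp (-(w*a)) ∂P := by
            apply setIntegral_mono_on hfint.integrableOn
              (integrableOn_const) hA2meas
            intro ω hω
            simp only [mem_compl_iff, mem_union, mem_setOf_eq, not_or, not_lt] at hω
            apply Real.exp_le_exp.2
            have := mul_le_mul_of_nonneg_left hω.1 hw.le
            linarith
        _ = (P (({ω | D s ω < a} ∪ {ω | t < D s ω})ᶜ)).toReal * Real.exp (-(w*a)) := by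
            rw [setIntegral_const]; simp [smul_eq_mul, measureReal_def]
        _ ≤ (P {ω | D s ω ≤ t}).toReal * Real.exp (-(w*a)) := by
            apply mul_le_mul_of_nonneg_right _ (Real.exp_nonneg _)
            apply ENNReal.toReal_mono (measure_ne_top P _)
            apply measure_mono
            intro ω hω
            simp only [mem_compl_iff, mem_union, mem_setOf_eq, not_or, not_lt] at hω
            exact hω.2
        _ = Real.exp (-(w*a)) * (P {ω | D s ω ≤ t}).toReal := by ring
    have hkey : 1/4 * Real.exp (w*a - s * ψ w) ≤ (P {ω | D s ω ≤ t}).toReal := by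
      have h1 := le_trans hT2 hT2'
      have h2 : Real.exp (w*a) * (1/4 * Real.exp (-(s * ψ w)))
          ≤ Real.exp (w*a) * (Real.exp (-(w*a)) * (P {ω | D s ω ≤ t}).toReal) :=
        mul_le_mul_of_nonneg_left h1 (Real.exp_nonneg _)
      have h3 : Real.exp (w*a) * Real.exp (-(w*a)) = 1 := by
        rw [← Real.exp_add]; simp
      calc 1/4 * Real.exp (w*a - s * ψ w)
          = Real.exp (w*a) * (1/4 * Real.exp (-(s * ψ w))) := by
            rw [show w*a - s*ψ w = w*a + -(s*ψ w) by ring, Real.exp_add]; ring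
        _ ≤ Real.exp (w*a) * (Real.exp (-(w*a)) * (P {ω | D s ω ≤ t}).toReal) := h2
        _ = (P {ω | D s ω ≤ t}).toReal := by rw [← mul_assoc, h3, one_mul]
    -- exponent estimate
    have hexp : -((lam - ε/2)*s^r) - Real.log 4/δ ≤ w*a - s * ψ w := by
      have hwa : w * a = s * (w * Gf ν (w+θ)) - Real.log 4/δ := by
        have hc : w * (Real.log 4/θ) = Real.log 4/δ := by
          rw [hθdef]; exact arith2 hw.ne' hδ0.ne'
        calc w * a = w * (s * Gf ν (w+θ)) - w * (Real.log 4/θ) := by rw [hadef]; ring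
          _ = s * (w * Gf ν (w+θ)) - Real.log 4/δ := by rw [hc]; ring
      have hψw : ψ w = Rf ν w + w * Gf ν w := by
        have := Rf_eq hν hw
        rw [hψeq hw]; linarith
      have hGd0 : w * (Gf ν w - Gf ν (w+θ)) ≤ 2*δ*Rf ν w := by
        have h1 := Gf_sub_le hν hw hθpos.le
        have h2 := mul_le_mul_of_nonneg_left h1 hw.le
        have h3 : w * (θ * (2 / w ^ 2 * Rf ν w)) = 2*δ*Rf ν w := by
          rw [hθdef]; exact arith1 hw.ne'
        exact h2.trans_eq h3
      have hGd : s*(w*Gf ν w) - s*(w*Gf ν (w+θ)) ≤ s*(2*δ*Rf ν w) := by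
        have h1 := mul_le_mul_of_nonneg_left hGd0 hs0.le
        have e : s*(w*Gf ν w) - s*(w*Gf ν (w+θ)) = s * (w * (Gf ν w - Gf ν (w+θ))) := by
          ring
        rw [e]
        exact h1
      have hRfw : Rf ν w ≤ (1+δ) * Rf ν w' := by
        have hc1 : 1 ≤ w/w' := (one_le_div hw0).2 (by rw [hwdef]; linarith)
        have hcw : w/w' * w' = w := div_mul_cancel₀ _ hw0.ne'
        have hscale := Rf_scale hν hw0 hc1
        rw [hcw] at hscale
        have hΔw' : Δ ≤ δ/3*w' := arith3 hδ0 (by rw [← hX₀def]; exact hw'X)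
        have hc2 : w/w' ≤ 1 + δ/3 := by
          rw [div_le_iff₀ hw0]
          have e : (1+δ/3)*w' = w' + δ/3*w' := by ring
          rw [e, hwdef]
          linarith
        have hc4 : (w/w')^2 ≤ 1+δ := arith4 hc1 hc2 hδ0 hδ1
        have hRnn := Rf_nonneg hν hw0
        calc Rf ν w ≤ (w/w')^2 * Rf ν w' := hscale
          _ ≤ (1+δ) * Rf ν w' := mul_le_mul_of_nonneg_right hc4 hRnn
      have hσr : (0:ℝ) < σ^(r-1) := Real.rpow_pos_of_pos hσ0 _
      have hRfw' : Rf ν w' ≤ (lam-ε) * σ^(r-1) := by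
        have h1 := hxR σ hσM
        rw [← hw'def] at h1
        rw [hψeq hw0, hderiv hw0] at h1
        have h2 : Pf ν w' - w' * Gf ν w' = Rf ν w' := (Rf_eq hν hw0).symm
        rw [h2, div_le_iff₀ hσr] at h1
        exact h1
      have hsr : s * σ^(r-1) = (1+δ)^(r-1) * s^r := by
        rw [hσdef, Real.mul_rpow h1δ.le hs0.le]
        have e : s^r = s^(1:ℝ) * s^(r-1) := by
          rw [← Real.rpow_add hs0]
          congr 1
          ring
        rw [e, Real.rpow_one]
        ring
      have hpow : (1+δ) * (1+δ)^(r-1) = (1+δ)^r := by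
        have e : ((1:ℝ)+δ)^r = (1+δ)^(1:ℝ) * (1+δ)^(r-1) := by
          rw [← Real.rpow_add h1δ]
          congr 1
          ring
        rw [e, Real.rpow_one]
      have hsrnn : (0:ℝ) ≤ s^r := Real.rpow_nonneg hs0.le r
      have hfin2 : (1+2*δ)*(s*Rf ν w) ≤ (lam - ε/2)*s^r := by
        have hs1 : s * Rf ν w ≤ s * ((1+δ)*Rf ν w') := mul_le_mul_of_nonneg_left hRfw hs0.le
        have hs3 : s * Rf ν w' ≤ s * ((lam-ε)*σ^(r-1)) := mul_le_mul_of_nonneg_left hRfw' hs0.le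
        have hB : s * Rf ν w ≤ (1+δ)*(lam-ε)*((1+δ)^(r-1)*s^r) := by
          calc s * Rf ν w ≤ s * ((1+δ)*Rf ν w') := hs1
            _ = (1+δ)*(s * Rf ν w') := by ring
            _ ≤ (1+δ)*(s*((lam-ε)*σ^(r-1))) := mul_le_mul_of_nonneg_left hs3 h1δ.le
            _ = (1+δ)*(lam-ε)*(s*σ^(r-1)) := by ring
            _ = (1+δ)*(lam-ε)*((1+δ)^(r-1)*s^r) := by rw [hsr]
        calc (1+2*δ)*(s*Rf ν w) ≤ (1+2*δ)*((1+δ)*(lam-ε)*((1+δ)^(r-1)*s^r)) :=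
              mul_le_mul_of_nonneg_left hB (by linarith)
          _ = ((1+2*δ)*((1+δ)*(1+δ)^(r-1))*(lam-ε))*s^r := by ring
          _ = ((1+2*δ)*(1+δ)^r*(lam-ε))*s^r := by rw [hpow]
          _ ≤ (lam - ε/2)*s^r := mul_le_mul_of_nonneg_right hδkey hsrnn
      have hsψ : s * ψ w = s * Rf ν w + s * (w * Gf ν w) := by rw [hψw]; ring
      have goal' : -((1+2*δ)*(s*Rf ν w)) - Real.log 4/δ ≤ w*a - s*ψ w := by
        rw [hwa, hsψ]
        linarith
      exact le_trans (sub_le_sub_right (neg_le_neg hfin2) _) goal'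
    refine le_trans ?_ hkey
    exact mul_le_mul_of_nonneg_left (Real.exp_le_exp.2 hexp) (by norm_num)
  -- conclusion
  by_contra hfin
  have hne : (∫⁻ ω, ENNReal.ofReal
      (Real.exp (lam * (sInf {u : ℝ | 0 < u ∧ t < D u ω}) ^ r)) ∂P) ≠ ⊤ := hfin
  set I : ℝ≥0∞ := ∫⁻ ω, ENNReal.ofReal
      (Real.exp (lam * (sInf {u : ℝ | 0 < u ∧ t < D u ω}) ^ r)) ∂P with hIdef
  have hlb : ∀ s, S₀ ≤ s →
      ENNReal.ofReal (Real.exp (lam * s^r)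
        * (1/4 * Real.exp (-((lam - ε/2)*s^r) - Real.log 4/δ))) ≤ I := by
    intro s hs
    have hs0 : 0 < s := lt_of_lt_of_le hS₀pos hs
    have hAmeas : MeasurableSet {ω | D s ω ≤ t} :=
      measurableSet_le (hDmeas s) measurable_const
    have hBmeas : MeasurableSet ({ω | D s ω ≤ t} \ N) := hAmeas.diff hNmeas
    have hPB : P ({ω | D s ω ≤ t} \ N) = P {ω | D s ω ≤ t} := measure_diff_null hN0
    have hptwise : ∀ ω, ({ω | D s ω ≤ t} \ N).indicator
        (fun _ => ENNReal.ofReal (Real.exp (lam * s^r))) ω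
        ≤ ENNReal.ofReal (Real.exp (lam * (sInf {u : ℝ | 0 < u ∧ t < D u ω}) ^ r)) := by
      intro ω
      rcases em (ω ∈ {ω | D s ω ≤ t} \ N) with hω | hω
      · rw [indicator_of_mem hω]
        obtain ⟨hω1, hω2⟩ := hω
        have hω1' : D s ω ≤ t := hω1
        have hSne : {u : ℝ | 0 < u ∧ t < D u ω}.Nonempty := by
          have hq : ∃ q : ℚ, 0 < (q:ℝ) ∧ ¬ (D (q:ℝ) ω ≤ t) := by
            by_contra hcon
            push_neg at hcon
            exact hω2 (mem_iInter.2 fun q => mem_iInter.2 fun hq => hcon q hq)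
          obtain ⟨q, hq1, hq2⟩ := hq
          exact ⟨(q:ℝ), hq1, lt_of_not_ge hq2⟩
        have hSlb : ∀ u ∈ {u : ℝ | 0 < u ∧ t < D u ω}, s ≤ u := by
          intro u hu
          by_contra hcon
          push_neg at hcon
          have h1 : D u ω ≤ D s ω := hDmono ω (le_of_lt hu.1) hs0.le hcon.le
          exact absurd (lt_of_lt_of_le hu.2 (h1.trans hω1')) (lt_irrefl t)
        have hsInf : s ≤ sInf {u : ℝ | 0 < u ∧ t < D u ω} := le_csInf hSne hSlb
        apply ENNReal.ofReal_le_ofReal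
        apply Real.exp_le_exp.2
        exact mul_le_mul_of_nonneg_left
          (Real.rpow_le_rpow hs0.le hsInf hr.le) hlam.le
      · rw [indicator_of_notMem hω]
        exact zero_le
    calc ENNReal.ofReal (Real.exp (lam * s^r)
          * (1/4 * Real.exp (-((lam - ε/2)*s^r) - Real.log 4/δ)))
        = ENNReal.ofReal (Real.exp (lam * s^r))
            * ENNReal.ofReal (1/4 * Real.exp (-((lam - ε/2)*s^r) - Real.log 4/δ)) :=
          ENNReal.ofReal_mul (Real.exp_nonneg _)
      _ ≤ ENNReal.ofReal (Real.exp (lam * s^r)) * P ({ω | D s ω ≤ t} \ N) := by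
          apply mul_le_mul_right
          rw [hPB]
          calc ENNReal.ofReal (1/4 * Real.exp (-((lam - ε/2)*s^r) - Real.log 4/δ))
              ≤ ENNReal.ofReal ((P {ω | D s ω ≤ t}).toReal) :=
                ENNReal.ofReal_le_ofReal (hmain s hs)
            _ = P {ω | D s ω ≤ t} := ENNReal.ofReal_toReal (measure_ne_top P _)
      _ = ∫⁻ ω, ({ω | D s ω ≤ t} \ N).indicator
            (fun _ => ENNReal.ofReal (Real.exp (lam * s^r))) ω ∂P := by
          rw [lintegral_indicator hBmeas, setLIntegral_const, mul_comm]
      _ ≤ I := lintegral_mono hptwise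
  have heq : ∀ s : ℝ, Real.exp (lam * s^r)
      * (1/4 * Real.exp (-((lam - ε/2)*s^r) - Real.log 4/δ))
      = 1/4 * Real.exp ((ε/2) * s^r - Real.log 4/δ) := by
    intro s
    calc Real.exp (lam * s^r) * (1/4 * Real.exp (-((lam - ε/2)*s^r) - Real.log 4/δ))
        = 1/4 * (Real.exp (lam * s^r) * Real.exp (-((lam - ε/2)*s^r) - Real.log 4/δ)) := by
          ring
      _ = 1/4 * Real.exp (lam * s^r + (-((lam - ε/2)*s^r) - Real.log 4/δ)) := by
          rw [Real.exp_add]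
      _ = 1/4 * Real.exp ((ε/2) * s^r - Real.log 4/δ) := by
          rw [show lam * s^r + (-((lam - ε/2)*s^r) - Real.log 4/δ)
            = (ε/2) * s^r - Real.log 4/δ by ring]
  have htend : Tendsto (fun s : ℝ => 1/4 * Real.exp ((ε/2) * s^r - Real.log 4/δ))
      atTop atTop := by
    have h1 : Tendsto (fun s : ℝ => s^r) atTop atTop := tendsto_rpow_atTop hr
    have h2 : Tendsto (fun s : ℝ => (ε/2) * s^r - Real.log 4/δ) atTop atTop := by
      apply tendsto_atTop_add_const_right
      exact h1.const_mul_atTop (by positivity)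
    have h3 := Real.tendsto_exp_atTop.comp h2
    exact h3.const_mul_atTop (by norm_num)
  obtain ⟨s, hs1, hs2⟩ :=
    ((htend.eventually_ge_atTop (I.toReal + 1)).and (eventually_ge_atTop S₀)).exists
  have h5 := hlb s hs2
  rw [heq s] at h5
  have h6 : ENNReal.ofReal (I.toReal + 1) ≤ I :=
    le_trans (ENNReal.ofReal_le_ofReal hs1) h5
  have h7 : I < ENNReal.ofReal (I.toReal + 1) := by
    conv_lhs => rw [← ENNReal.ofReal_toReal hne]
    exact (ENNReal.ofReal_lt_ofReal_iff (by positivity)).2 (by linarith)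
  exact absurd h6 (not_le.2 h7)
end

section
/- Let D be a subordinator with infinite Lévy measure ν and Laplace exponent ψ, let E be its inverse subordinator, and set g(s) = ψ'(s), R(s) = ψ(s) − sψ'(s). Fix λ > 0, t > 0 and r > 0. If there exist a constant M > 0 and a function x : [M,∞) → (g(∞), g(0+)) such that s·x(s) → ∞ and R(g^{−1}(x(s)))/s^{r−1} → ∞ as s → ∞, then E[exp(λ E_t^r)] < ∞. -/
open MeasureTheory Filter Topology Set

lemma aux_summable_exp_neg_mul_rpow {c r : ℝ} (hc : 0 < c) (hr : 0 < r) :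
    Summable fun n : ℕ => Real.exp (-(c * (n : ℝ) ^ r)) := by
  have hlog := isLittleO_log_rpow_atTop hr
  have h1 : ∀ᶠ x : ℝ in atTop, ‖Real.log x‖ ≤ (c / 2) * ‖x ^ r‖ :=
    hlog.def (by positivity)
  have h2 : ∀ᶠ n : ℕ in atTop, ‖Real.log (n : ℝ)‖ ≤ (c / 2) * ‖(n : ℝ) ^ r‖ :=
    tendsto_natCast_atTop_atTop.eventually h1
  apply summable_of_isBigO_nat
    (Real.summable_nat_rpow.mpr (by norm_num : (-2 : ℝ) < -1))
  apply Asymptotics.IsBigO.of_bound 1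
  filter_upwards [h2, eventually_ge_atTop 1] with n hn hn1
  have hn0 : (0 : ℝ) < n := by exact_mod_cast hn1
  have hrp : (0 : ℝ) ≤ (n : ℝ) ^ r := Real.rpow_nonneg hn0.le r
  have hlogn : 2 * Real.log n ≤ c * (n : ℝ) ^ r := by
    have h3 : Real.log n ≤ (c / 2) * (n : ℝ) ^ r := by
      calc Real.log n ≤ ‖Real.log (n : ℝ)‖ := (Real.norm_eq_abs _ ▸ le_abs_self _)
        _ ≤ (c / 2) * ‖(n : ℝ) ^ r‖ := hn
        _ = (c / 2) * (n : ℝ) ^ r := by rw [Real.norm_eq_abs, abs_of_nonneg hrp]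
    linarith
  have hkey : Real.exp (-(c * (n : ℝ) ^ r)) ≤ (n : ℝ) ^ (-2 : ℝ) := by
    rw [Real.rpow_def_of_pos hn0 (-2 : ℝ)]
    exact Real.exp_le_exp.mpr (by nlinarith)
  rw [Real.norm_eq_abs, abs_of_nonneg (Real.exp_pos _).le, Real.norm_eq_abs,
    abs_of_nonneg (Real.rpow_nonneg hn0.le _), one_mul]
  exact hkey


/-- Let `D` be a subordinator with infinite Lévy measure `ν` and Laplace
exponent `ψ`, let `E_t = inf {u > 0 : D_u > t}` be its inverse, and set `g = ψ'`,
`R s = ψ s - s ψ' s`.  Fix `λ > 0`, `t > 0`, `r > 0`.  If there exist `M > 0` and a function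
`x : [M,∞) → (g(∞), g(0+))` (encoded by a positive preimage function `xinv` with
`g (xinv s) = x s`) such that `s * x s → ∞` and `R (g⁻¹ (x s)) / s ^ (r-1) → ∞` as `s → ∞`,
then `E[exp (λ E_t ^ r)] < ∞`. -/
theorem exp_moment_inverse_subordinator_finite_of_tail_limit
    {Ω : Type*} [MeasurableSpace Ω] (P : Measure Ω) [IsProbabilityMeasure P]
    (D : ℝ → Ω → ℝ) (ν : Measure ℝ) (ψ : ℝ → ℝ) (lam t r : ℝ)
    (hDmeas : ∀ u, Measurable (D u))
    (hD0 : ∀ ω, D 0 ω = 0)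
    (hDmono : ∀ ω, MonotoneOn (fun u => D u ω) (Set.Ici 0))
    (hDrc : ∀ ω, ∀ u, 0 ≤ u → ContinuousWithinAt (fun v => D v ω) (Set.Ici u) u)
    (hstat : ∀ s u : ℝ, 0 ≤ s → 0 ≤ u →
      Measure.map (fun ω => D (s + u) ω - D s ω) P = Measure.map (D u) P)
    (hindep : ∀ (n : ℕ) (τ : Fin (n + 1) → ℝ), (∀ i, 0 ≤ τ i) → Monotone τ →
      ProbabilityTheory.iIndepFun
        (fun i : Fin n => fun ω => D (τ i.succ) ω - D (τ i.castSucc) ω) P)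
    (hν : ∫⁻ y in Set.Ioi (0 : ℝ), ENNReal.ofReal (min y 1) ∂ν < ⊤)
    (hνinf : ν (Set.Ioi (0 : ℝ)) = ⊤)
    (hψ : ∀ s, 0 < s → ψ s = ∫ y in Set.Ioi (0 : ℝ), (1 - Real.exp (-(s * y))) ∂ν)
    (hlaplace : ∀ s, 0 < s → ∀ u, 0 ≤ u →
      ∫ ω, Real.exp (-(s * D u ω)) ∂P = Real.exp (-(u * ψ s)))
    (hlam : 0 < lam) (ht : 0 < t) (hr : 0 < r)
    (M : ℝ) (x xinv : ℝ → ℝ) (hM : 0 < M)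
    (hxrange : ∀ s, M ≤ s → 0 < xinv s ∧ deriv ψ (xinv s) = x s)
    (hxtop : Tendsto (fun s => s * x s) atTop atTop)
    (hRtop : Tendsto
      (fun s => (ψ (xinv s) - xinv s * deriv ψ (xinv s)) / s ^ (r - 1)) atTop atTop) :
    ∫⁻ ω, ENNReal.ofReal (Real.exp (lam * (sInf {u : ℝ | 0 < u ∧ t < D u ω}) ^ r)) ∂P < ⊤ := by
  classical
  set Einf : Ω → ℝ := fun ω => sInf {u : ℝ | 0 < u ∧ t < D u ω} with hEinf
  -- D is nonnegative
  have hDnn : ∀ ω, ∀ u : ℝ, 0 ≤ u → 0 ≤ D u ω := by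
    intro ω u hu
    have h := hDmono ω (Set.mem_Ici.mpr le_rfl) (Set.mem_Ici.mpr hu) hu
    simpa [hD0 ω] using h
  -- Einf is nonnegative
  have hEnn : ∀ ω, 0 ≤ Einf ω := fun ω =>
    Real.sInf_nonneg fun v hv => hv.1.le
  -- tail inclusion
  have htail : ∀ u : ℝ, 0 < u → ∀ ω, u < Einf ω → D u ω ≤ t := by
    intro u hu ω h
    by_contra hco
    push_neg at hco
    have hmem : u ∈ {v : ℝ | 0 < v ∧ t < D v ω} := ⟨hu, hco⟩
    have : Einf ω ≤ u := csInf_le ⟨0, fun v hv => hv.1.le⟩ hmem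
    linarith
  -- Chernoff bound
  have hchern : ∀ u s : ℝ, 0 < u → 0 < s →
      P {ω | D u ω ≤ t} ≤ ENNReal.ofReal (Real.exp (s * t - u * ψ s)) := by
    intro u s hu hs
    set B := {ω | D u ω ≤ t} with hB
    have hBmeas : MeasurableSet B := measurableSet_le (hDmeas u) measurable_const
    have hfmeas : Measurable fun ω => Real.exp (-(s * D u ω)) :=
      (((hDmeas u).const_mul s).neg).exp
    have hfnn : ∀ ω, (0 : ℝ) ≤ Real.exp (-(s * D u ω)) := fun ω => (Real.exp_pos _).le
    have hfint : Integrable (fun ω => Real.exp (-(s * D u ω))) P := by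
      refine Integrable.mono' (integrable_const 1) hfmeas.aestronglyMeasurable ?_
      refine ae_of_all _ fun ω => ?_
      rw [Real.norm_eq_abs, abs_of_nonneg (hfnn ω), Real.exp_le_one_iff]
      have := hDnn ω u hu.le
      nlinarith
    have h3 : ∫ ω in B, Real.exp (-(s * t)) ∂P = (P B).toReal * Real.exp (-(s * t)) := by
      rw [setIntegral_const, smul_eq_mul]
      rfl
    have h1 : ∫ ω in B, Real.exp (-(s * t)) ∂P ≤ ∫ ω in B, Real.exp (-(s * D u ω)) ∂P := by
      refine setIntegral_mono_on
        (integrableOn_const (measure_ne_top P B)) hfint.integrableOn hBmeas ?_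
      intro ω hω
      have hω' : D u ω ≤ t := hω
      exact Real.exp_le_exp.mpr (by nlinarith)
    have h2 : ∫ ω in B, Real.exp (-(s * D u ω)) ∂P ≤ ∫ ω, Real.exp (-(s * D u ω)) ∂P :=
      setIntegral_le_integral hfint (ae_of_all _ hfnn)
    have hkey : (P B).toReal * Real.exp (-(s * t)) ≤ Real.exp (-(u * ψ s)) := by
      rw [← h3, ← hlaplace s hs u hu.le]
      exact h1.trans h2
    have hkey2 : (P B).toReal ≤ Real.exp (s * t - u * ψ s) := by
      have hmul := mul_le_mul_of_nonneg_right hkey (Real.exp_pos (s * t)).le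
      rw [mul_assoc, ← Real.exp_add, ← Real.exp_add] at hmul
      simpa [neg_add_cancel, Real.exp_zero, add_comm, sub_eq_add_neg] using hmul
    calc P B = ENNReal.ofReal (P B).toReal := (ENNReal.ofReal_toReal (measure_ne_top P B)).symm
      _ ≤ ENNReal.ofReal (Real.exp (s * t - u * ψ s)) := ENNReal.ofReal_le_ofReal hkey2
  -- constants
  set Cc : ℝ := lam * (2 : ℝ) ^ (r : ℝ) + lam with hCc
  have h2r : (0 : ℝ) < (2 : ℝ) ^ (r : ℝ) := Real.rpow_pos_of_pos (by norm_num) r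
  have hCc0 : 0 < Cc := by positivity
  set c : ℝ := lam / (2 : ℝ) ^ (r : ℝ) with hc
  have hc0 : 0 < c := by positivity
  -- eventual bound
  have hev : ∀ᶠ u : ℝ in atTop, t ≤ u * x u ∧
      Cc ≤ (ψ (xinv u) - xinv u * deriv ψ (xinv u)) / u ^ (r - 1) ∧ M ≤ u ∧ 1 ≤ u := by
    filter_upwards [hxtop.eventually_ge_atTop t, hRtop.eventually_ge_atTop Cc,
      eventually_ge_atTop M, eventually_ge_atTop 1] with u h1 h2 h3 h4
    exact ⟨h1, h2, h3, h4⟩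
  obtain ⟨A, hA⟩ := eventually_atTop.mp hev
  have hgood : ∀ u : ℝ, A ≤ u →
      P {ω | D u ω ≤ t} ≤ ENNReal.ofReal (Real.exp (-(Cc * u ^ r))) := by
    intro u hu
    obtain ⟨h1, h2, h3, h4⟩ := hA u hu
    have hu0 : (0 : ℝ) < u := lt_of_lt_of_le one_pos h4
    obtain ⟨hs0, hder⟩ := hxrange u h3
    set s := xinv u with hsdef
    set R0 : ℝ := ψ s - s * deriv ψ s with hR0
    have hψeq : ψ s = R0 + s * x u := by rw [hR0, ← hder]; ring
    have hpow : (0 : ℝ) < u ^ (r - 1) := Real.rpow_pos_of_pos hu0 _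
    have hR : Cc * u ^ (r - 1) ≤ R0 := by
      rw [le_div_iff₀ hpow] at h2
      linarith
    have hur : u ^ (r - 1) * u = u ^ r := by
      nth_rewrite 2 [← Real.rpow_one u]
      rw [← Real.rpow_add hu0]
      norm_num
    have hexp : s * t - u * ψ s ≤ -(Cc * u ^ r) := by
      have e1 : s * t - u * ψ s = s * (t - u * x u) - u * R0 := by rw [hψeq]; ring
      have e2 : s * (t - u * x u) ≤ 0 := mul_nonpos_of_nonneg_of_nonpos hs0.le (by linarith)
      have e3 : Cc * u ^ r ≤ u * R0 := by
        have := mul_le_mul_of_nonneg_left hR hu0.le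
        calc Cc * u ^ r = u ^ (r - 1) * u * Cc := by rw [hur]; ring
          _ = u * (Cc * u ^ (r - 1)) := by ring
          _ ≤ u * R0 := this
      linarith
    calc P {ω | D u ω ≤ t} ≤ ENNReal.ofReal (Real.exp (s * t - u * ψ s)) := hchern u s hu0 hs0
      _ ≤ ENNReal.ofReal (Real.exp (-(Cc * u ^ r))) :=
        ENNReal.ofReal_le_ofReal (Real.exp_le_exp.mpr hexp)
  -- choose N
  set A' : ℝ := max A 0 with hA'
  set N : ℕ := ⌈A'⌉₊ + 2 with hN
  have hN2 : 2 ≤ N := Nat.le_add_left 2 ⌈A'⌉₊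
  have hNA : ∀ n : ℕ, N ≤ n → A ≤ (n : ℝ) - 1 / 2 ∧ (2 : ℝ) ≤ (n : ℝ) := by
    intro n hn
    have h1 : (N : ℝ) ≤ n := by exact_mod_cast hn
    have h2 : A' ≤ ⌈A'⌉₊ := Nat.le_ceil A'
    have h3 : (N : ℝ) = (⌈A'⌉₊ : ℝ) + 2 := by exact_mod_cast rfl
    have h4 : A ≤ A' := le_max_left A 0
    constructor
    · linarith
    · have : (0 : ℝ) ≤ (⌈A'⌉₊ : ℝ) := Nat.cast_nonneg _
      linarith
  -- the covering sets
  set B : ℕ → Set Ω := fun n =>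
    if n = 0 then Set.univ else {ω | D ((n : ℝ) - 1 / 2) ω ≤ t} with hBdef
  have hBmeas : ∀ n, MeasurableSet (B n) := by
    intro n
    by_cases h0 : n = 0
    · simp [hBdef, h0]
    · simp only [hBdef, if_neg h0]
      exact measurableSet_le (hDmeas _) measurable_const
  -- pointwise bound
  have hpt : ∀ ω, ENNReal.ofReal (Real.exp (lam * (Einf ω) ^ r)) ≤
      ∑' n : ℕ, (B n).indicator
        (fun _ => ENNReal.ofReal (Real.exp (lam * ((n : ℝ) + 1) ^ r))) ω := by
    intro ω
    set e := Einf ω with he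
    have he0 : 0 ≤ e := hEnn ω
    set n := ⌊e⌋₊ with hn
    have hn1 : e < (n : ℝ) + 1 := Nat.lt_floor_add_one e
    have hn2 : (n : ℝ) ≤ e := Nat.floor_le he0
    have hmem : ω ∈ B n := by
      by_cases h0 : n = 0
      · simp [hBdef, h0]
      · have hge1 : 1 ≤ n := Nat.one_le_iff_ne_zero.mpr h0
        have hge1' : (1 : ℝ) ≤ (n : ℝ) := by exact_mod_cast hge1
        simp only [hBdef, if_neg h0]
        exact htail ((n : ℝ) - 1 / 2) (by linarith) ω (by rw [← he]; linarith)
    have hle : Real.exp (lam * e ^ r) ≤ Real.exp (lam * ((n : ℝ) + 1) ^ r) := by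
      apply Real.exp_le_exp.mpr
      have := Real.rpow_le_rpow he0 hn1.le hr.le
      nlinarith
    calc ENNReal.ofReal (Real.exp (lam * e ^ r))
        ≤ (B n).indicator (fun _ => ENNReal.ofReal (Real.exp (lam * ((n : ℝ) + 1) ^ r))) ω := by
          rw [Set.indicator_of_mem hmem]
          exact ENNReal.ofReal_le_ofReal hle
      _ ≤ ∑' m : ℕ, (B m).indicator
            (fun _ => ENNReal.ofReal (Real.exp (lam * ((m : ℝ) + 1) ^ r))) ω :=
          ENNReal.le_tsum n
  -- integral bound
  set w : ℕ → ENNReal := fun n => ENNReal.ofReal (Real.exp (lam * ((n : ℝ) + 1) ^ r)) with hw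
  have hint : ∫⁻ ω, ENNReal.ofReal (Real.exp (lam * (Einf ω) ^ r)) ∂P ≤
      ∑' n : ℕ, w n * P (B n) := by
    calc ∫⁻ ω, ENNReal.ofReal (Real.exp (lam * (Einf ω) ^ r)) ∂P
        ≤ ∫⁻ ω, ∑' n : ℕ, (B n).indicator (fun _ => w n) ω ∂P := lintegral_mono hpt
      _ = ∑' n : ℕ, ∫⁻ ω, (B n).indicator (fun _ => w n) ω ∂P :=
          lintegral_tsum fun n => (measurable_const.indicator (hBmeas n)).aemeasurable
      _ = ∑' n : ℕ, w n * P (B n) := by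
          refine tsum_congr fun n => ?_
          rw [lintegral_indicator (hBmeas n), setLIntegral_const]
  -- term bound for large n
  have hterm : ∀ n : ℕ, N ≤ n → w n * P (B n) ≤ ENNReal.ofReal (Real.exp (-(c * (n : ℝ) ^ r))) := by
    intro n hn
    obtain ⟨hA1, hn2⟩ := hNA n hn
    have h0 : n ≠ 0 := by
      intro h
      rw [h] at hn2
      norm_num at hn2
    have hu0 : (0 : ℝ) < (n : ℝ) - 1 / 2 := by linarith
    have hBn : B n = {ω | D ((n : ℝ) - 1 / 2) ω ≤ t} := by simp only [hBdef, if_neg h0]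
    have hPB : P (B n) ≤ ENNReal.ofReal (Real.exp (-(Cc * ((n : ℝ) - 1 / 2) ^ r))) := by
      rw [hBn]; exact hgood _ hA1
    have hprod : w n * P (B n) ≤
        ENNReal.ofReal (Real.exp (lam * ((n : ℝ) + 1) ^ r - Cc * ((n : ℝ) - 1 / 2) ^ r)) := by
      calc w n * P (B n) ≤ w n * ENNReal.ofReal (Real.exp (-(Cc * ((n : ℝ) - 1 / 2) ^ r))) :=
            mul_le_mul_right hPB _
        _ = ENNReal.ofReal (Real.exp (lam * ((n : ℝ) + 1) ^ r - Cc * ((n : ℝ) - 1 / 2) ^ r)) := by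
            rw [hw, ← ENNReal.ofReal_mul (Real.exp_pos _).le, ← Real.exp_add]
            ring_nf
    refine hprod.trans (ENNReal.ofReal_le_ofReal (Real.exp_le_exp.mpr ?_))
    -- exponent bound
    have hu : (0 : ℝ) < (n : ℝ) - 1 / 2 := hu0
    have h21 : ((n : ℝ) + 1) ≤ 2 * ((n : ℝ) - 1 / 2) := by linarith
    have h22 : ((n : ℝ) + 1) ^ r ≤ (2 : ℝ) ^ (r : ℝ) * ((n : ℝ) - 1 / 2) ^ r := by
      calc ((n : ℝ) + 1) ^ r ≤ (2 * ((n : ℝ) - 1 / 2)) ^ r :=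
            Real.rpow_le_rpow (by linarith) h21 hr.le
        _ = (2 : ℝ) ^ (r : ℝ) * ((n : ℝ) - 1 / 2) ^ r := Real.mul_rpow (by norm_num) hu.le
    have h23 : ((n : ℝ) / 2) ^ r ≤ ((n : ℝ) - 1 / 2) ^ r :=
      Real.rpow_le_rpow (by linarith) (by linarith) hr.le
    have h24 : ((n : ℝ) / 2) ^ r = (n : ℝ) ^ r / (2 : ℝ) ^ (r : ℝ) :=
      Real.div_rpow (Nat.cast_nonneg n) (by norm_num : (0:ℝ) ≤ 2) r
    have h25 : c * (n : ℝ) ^ r ≤ lam * ((n : ℝ) - 1 / 2) ^ r := by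
      rw [hc]
      rw [h24] at h23
      calc lam / (2 : ℝ) ^ (r : ℝ) * (n : ℝ) ^ r = lam * ((n : ℝ) ^ r / (2 : ℝ) ^ (r : ℝ)) := by
            ring
        _ ≤ lam * ((n : ℝ) - 1 / 2) ^ r := by nlinarith
    have h26 : lam * ((n : ℝ) + 1) ^ r ≤ lam * (2 : ℝ) ^ (r : ℝ) * ((n : ℝ) - 1 / 2) ^ r := by
      nlinarith
    rw [hCc]
    nlinarith
  -- summability of the tail
  have hsummable : Summable fun n : ℕ => Real.exp (-(c * (n : ℝ) ^ r)) :=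
    aux_summable_exp_neg_mul_rpow hc0 hr
  -- conclude
  have hsplit : ∑' n : ℕ, w n * P (B n) =
      ∑ i ∈ Finset.range N, w i * P (B i) + ∑' i : ℕ, w (i + N) * P (B (i + N)) :=
    (Summable.sum_add_tsum_nat_add' (f := fun n => w n * P (B n)) ENNReal.summable).symm
  have hsum : ∑' n : ℕ, w n * P (B n) < ⊤ := by
    rw [hsplit]
    apply ENNReal.add_lt_top.mpr
    constructor
    · rw [ENNReal.sum_lt_top]
      intro i _
      exact ENNReal.mul_lt_top ENNReal.ofReal_lt_top (measure_lt_top P _)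
    · calc ∑' i : ℕ, w (i + N) * P (B (i + N))
          ≤ ∑' i : ℕ, ENNReal.ofReal (Real.exp (-(c * ((i + N : ℕ) : ℝ) ^ r))) :=
            ENNReal.tsum_le_tsum fun i => hterm (i + N) (Nat.le_add_left N i)
        _ ≤ ∑' i : ℕ, ENNReal.ofReal (Real.exp (-(c * (i : ℝ) ^ r))) := by
            refine ENNReal.tsum_le_tsum fun i => ENNReal.ofReal_le_ofReal
              (Real.exp_le_exp.mpr ?_)
            have hle : (i : ℝ) ≤ ((i + N : ℕ) : ℝ) := by
              exact_mod_cast Nat.le_add_right i N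
            have := Real.rpow_le_rpow (Nat.cast_nonneg i) hle hr.le
            nlinarith
        _ = ENNReal.ofReal (∑' i : ℕ, Real.exp (-(c * (i : ℝ) ^ r))) :=
            (ENNReal.ofReal_tsum_of_nonneg (fun i => (Real.exp_pos _).le) hsummable).symm
        _ < ⊤ := ENNReal.ofReal_lt_top
  exact lt_of_le_of_lt hint hsum
end

section
/- Let D be a subordinator with infinite Lévy measure ν and Laplace exponent ψ, let E be its inverse subordinator, and set g(s) = ψ'(s), R(s) = ψ(s) − sψ'(s). Fix λ > 0, t > 0 and r > 0. If there exist a constant M > 0 and a decreasing function x : [M,∞) → (g(∞), g(0+)) such that s·x(s) → 0 and R(g^{−1}(x(s)))/s^{r−1} → 0 as s → ∞, then E[exp(λ E_t^r)] = ∞. -/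
open MeasureTheory Filter Topology Set

lemma subord_integrable_min_one (ν : Measure ℝ)
    (hν : ∫⁻ y in Set.Ioi (0:ℝ), ENNReal.ofReal (min y 1) ∂ν < ⊤) :
    Integrable (fun y => min y 1) (ν.restrict (Set.Ioi 0)) := by
  refine ⟨(continuous_id.min continuous_const).aestronglyMeasurable, ?_⟩
  rw [hasFiniteIntegral_iff_norm]
  have h : ∀ᵐ y ∂ν.restrict (Set.Ioi 0),
      ENNReal.ofReal ‖min y 1‖ = ENNReal.ofReal (min y 1) := by
    filter_upwards [ae_restrict_mem measurableSet_Ioi] with y hy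
    rw [Real.norm_of_nonneg (le_min (le_of_lt hy) one_pos.le)]
  rwa [lintegral_congr_ae h]

lemma subord_integrable_of_le_min (ν : Measure ℝ)
    (hν : ∫⁻ y in Set.Ioi (0:ℝ), ENNReal.ofReal (min y 1) ∂ν < ⊤)
    {f : ℝ → ℝ} (hf : AEStronglyMeasurable f (ν.restrict (Set.Ioi 0)))
    {K : ℝ} (h : ∀ y, 0 < y → ‖f y‖ ≤ K * min y 1) :
    Integrable f (ν.restrict (Set.Ioi 0)) := by
  refine Integrable.mono' ((subord_integrable_min_one ν hν).const_mul K) hf ?_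
  filter_upwards [ae_restrict_mem measurableSet_Ioi] with y hy using h y hy

lemma subord_exp_bound {c y : ℝ} (hc : 0 < c) (hy : 0 < y) :
    ‖y * Real.exp (-(c * y))‖ ≤ (1 + 4 / c ^ 2) * min y 1 := by
  have he : Real.exp (-(c * y)) ≤ 1 := Real.exp_le_one_iff.2 (by nlinarith)
  have hep : 0 < Real.exp (-(c * y)) := Real.exp_pos _
  have hd : 0 ≤ 4 / c ^ 2 := by positivity
  rw [Real.norm_of_nonneg (by positivity)]
  rcases le_total y 1 with h1 | h1
  · rw [min_eq_left h1]
    nlinarith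
  · rw [min_eq_right h1]
    have h2 : c * y / 2 ≤ Real.exp (c * y / 2) := by
      nlinarith [Real.add_one_le_exp (c * y / 2)]
    have h3 : (c * y / 2) ^ 2 ≤ Real.exp (c * y) := by
      have := mul_le_mul h2 h2 (by positivity) (Real.exp_pos _).le
      rwa [← Real.exp_add, show c * y / 2 + c * y / 2 = c * y by ring, ← sq] at this
    have hE : Real.exp (c * y) * Real.exp (-(c * y)) = 1 := by
      rw [← Real.exp_add]; simp
    have h6 : c ^ 2 * y ^ 2 / 4 * Real.exp (-(c * y)) ≤ 1 := by
      nlinarith [mul_le_mul_of_nonneg_right h3 hep.le]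
    have h7 : c ^ 2 * (y * Real.exp (-(c * y))) ≤ 4 := by
      nlinarith [mul_nonneg (mul_nonneg (mul_nonneg (sq_nonneg c) hy.le) hep.le)
        (sub_nonneg.2 h1)]
    have h8 : y * Real.exp (-(c * y)) ≤ 4 / c ^ 2 := by
      rw [le_div_iff₀ (by positivity)]
      linarith
    linarith

lemma subord_one_sub_exp_bound {s y : ℝ} (hs : 0 < s) (hy : 0 < y) :
    ‖1 - Real.exp (-(s * y))‖ ≤ max s 1 * min y 1 := by
  have hsy : 0 < s * y := mul_pos hs hy
  have he : Real.exp (-(s * y)) ≤ 1 := Real.exp_le_one_iff.2 (by linarith)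
  have hep : 0 < Real.exp (-(s * y)) := Real.exp_pos _
  have hz : 1 - s * y ≤ Real.exp (-(s * y)) := by
    nlinarith [Real.add_one_le_exp (-(s * y))]
  rw [Real.norm_of_nonneg (by linarith)]
  rcases le_total y 1 with h1 | h1
  · rw [min_eq_left h1]
    have : 1 - Real.exp (-(s * y)) ≤ s * y := by linarith
    calc 1 - Real.exp (-(s * y)) ≤ s * y := this
      _ ≤ max s 1 * y := by
          apply mul_le_mul_of_nonneg_right (le_max_left s 1) hy.le
  · rw [min_eq_right h1]
    have : (1:ℝ) ≤ max s 1 := le_max_right s 1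
    nlinarith

lemma subord_hasDerivAt_psi (ν : Measure ℝ)
    (hν : ∫⁻ y in Set.Ioi (0:ℝ), ENNReal.ofReal (min y 1) ∂ν < ⊤)
    {σ : ℝ} (hσ : 0 < σ) :
    HasDerivAt (fun s => ∫ y in Set.Ioi (0:ℝ), (1 - Real.exp (-(s * y))) ∂ν)
      (∫ y in Set.Ioi (0:ℝ), y * Real.exp (-(σ * y)) ∂ν) σ := by
  have hσ2 : 0 < σ / 2 := by linarith
  have hmeas : ∀ s : ℝ, AEStronglyMeasurable (fun y => 1 - Real.exp (-(s * y)))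
      (ν.restrict (Set.Ioi 0)) := fun s =>
    (continuous_const.sub (Real.continuous_exp.comp
      ((continuous_const.mul continuous_id).neg))).aestronglyMeasurable
  have hint : Integrable (fun y => 1 - Real.exp (-(σ * y))) (ν.restrict (Set.Ioi 0)) :=
    subord_integrable_of_le_min ν hν (hmeas σ) (fun y hy => subord_one_sub_exp_bound hσ hy)
  have hF'meas : AEStronglyMeasurable (fun y => y * Real.exp (-(σ * y)))
      (ν.restrict (Set.Ioi 0)) :=
    (continuous_id.mul (Real.continuous_exp.comp
      ((continuous_const.mul continuous_id).neg))).aestronglyMeasurable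
  have hbound : Integrable (fun y => y * Real.exp (-(σ / 2 * y))) (ν.restrict (Set.Ioi 0)) :=
    subord_integrable_of_le_min ν hν
      ((continuous_id.mul (Real.continuous_exp.comp
        ((continuous_const.mul continuous_id).neg))).aestronglyMeasurable)
      (fun y hy => subord_exp_bound hσ2 hy)
  have hderiv : ∀ y : ℝ, ∀ s : ℝ, HasDerivAt (fun u => 1 - Real.exp (-(u * y)))
      (y * Real.exp (-(s * y))) s := by
    intro y s
    have h1 : HasDerivAt (fun u : ℝ => u * y) y s := hasDerivAt_mul_const y
    have h2 := (h1.neg).exp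
    have h3 : HasDerivAt (fun u => 1 - Real.exp (-(u * y))) (0 - Real.exp (-(s * y)) * -y) s :=
      (hasDerivAt_const s (1:ℝ)).sub h2
    convert h3 using 1
    ring
  have := hasDerivAt_integral_of_dominated_loc_of_lip (F := fun s y => 1 - Real.exp (-(s * y)))
    (F' := fun y => y * Real.exp (-(σ * y))) (x₀ := σ)
    (bound := fun y => y * Real.exp (-(σ / 2 * y))) (Metric.ball_mem_nhds σ hσ2)
    (Filter.Eventually.of_forall fun s => hmeas s) hint hF'meas ?_ hbound ?_
  · exact this.2
  · filter_upwards [ae_restrict_mem measurableSet_Ioi] with y hy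
    rw [Set.mem_Ioi] at hy
    apply Convex.lipschitzOnWith_of_nnnorm_hasDerivWithin_le (convex_ball σ (σ / 2))
      (f' := fun s => y * Real.exp (-(s * y)))
      (fun s _ => (hderiv y s).hasDerivWithinAt)
    intro s hs
    have hs2 : σ / 2 < s := by
      have := abs_lt.1 (mem_ball_iff_norm.1 hs)
      linarith [this.1]
    have hle : y * Real.exp (-(s * y)) ≤ y * Real.exp (-(σ / 2 * y)) := by
      apply mul_le_mul_of_nonneg_left _ hy.le
      apply Real.exp_le_exp.2
      nlinarith
    have h0 : 0 ≤ y * Real.exp (-(s * y)) := by positivity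
    rw [← NNReal.coe_le_coe]
    simp only [coe_nnnorm, Real.norm_eq_abs, Real.coe_nnabs]
    rw [abs_of_nonneg h0, abs_of_nonneg (by positivity)]
    exact hle
  · exact Filter.Eventually.of_forall fun y => hderiv y σ

set_option maxHeartbeats 2000000 in
theorem exp_moment_inverse_subordinator_infinite_of_tail_limit
    {Ω : Type*} [MeasurableSpace Ω] (P : Measure Ω) [IsProbabilityMeasure P]
    (D : ℝ → Ω → ℝ) (ν : Measure ℝ) (ψ : ℝ → ℝ) (lam t r : ℝ)
    (hDmeas : ∀ u, Measurable (D u))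
    (hD0 : ∀ ω, D 0 ω = 0)
    (hDmono : ∀ ω, MonotoneOn (fun u => D u ω) (Set.Ici 0))
    (hDrc : ∀ ω, ∀ u, 0 ≤ u → ContinuousWithinAt (fun v => D v ω) (Set.Ici u) u)
    (hstat : ∀ s u : ℝ, 0 ≤ s → 0 ≤ u →
      Measure.map (fun ω => D (s + u) ω - D s ω) P = Measure.map (D u) P)
    (hindep : ∀ (n : ℕ) (τ : Fin (n + 1) → ℝ), (∀ i, 0 ≤ τ i) → Monotone τ →
      ProbabilityTheory.iIndepFun
        (fun i : Fin n => fun ω => D (τ i.succ) ω - D (τ i.castSucc) ω) P)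
    (hν : ∫⁻ y in Set.Ioi (0 : ℝ), ENNReal.ofReal (min y 1) ∂ν < ⊤)
    (hνinf : ν (Set.Ioi (0 : ℝ)) = ⊤)
    (hψ : ∀ s, 0 < s → ψ s = ∫ y in Set.Ioi (0 : ℝ), (1 - Real.exp (-(s * y))) ∂ν)
    (hlaplace : ∀ s, 0 < s → ∀ u, 0 ≤ u →
      ∫ ω, Real.exp (-(s * D u ω)) ∂P = Real.exp (-(u * ψ s)))
    (hlam : 0 < lam) (ht : 0 < t) (hr : 0 < r)
    (M : ℝ) (x xinv : ℝ → ℝ) (hM : 0 < M)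
    (hxrange : ∀ s, M ≤ s → 0 < xinv s ∧ deriv ψ (xinv s) = x s)
    (hxanti : ∀ s₁ s₂, M ≤ s₁ → s₁ ≤ s₂ → x s₂ ≤ x s₁)
    (hxzero : Tendsto (fun s => s * x s) atTop (𝓝 0))
    (hRzero : Tendsto
      (fun s => (ψ (xinv s) - xinv s * deriv ψ (xinv s)) / s ^ (r - 1)) atTop (𝓝 0)) :
    ∫⁻ ω, ENNReal.ofReal (Real.exp (lam * (sInf {u : ℝ | 0 < u ∧ t < D u ω}) ^ r)) ∂P = ⊤ := by
  set L := ∫⁻ ω, ENNReal.ofReal (Real.exp (lam * (sInf {u : ℝ | 0 < u ∧ t < D u ω}) ^ r)) ∂P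
    with hLdef
  -- nonnegativity of D
  have hD0' : ∀ ω, ∀ u : ℝ, 0 ≤ u → 0 ≤ D u ω := by
    intro ω u hu
    have h := hDmono ω (Set.mem_Ici.2 (le_refl (0:ℝ))) (Set.mem_Ici.2 hu) hu
    simpa [hD0 ω] using h
  -- integrability of integrands over ν
  have hmeas1 : ∀ s : ℝ, AEStronglyMeasurable (fun y => 1 - Real.exp (-(s * y)))
      (ν.restrict (Set.Ioi 0)) := fun s =>
    (continuous_const.sub (Real.continuous_exp.comp
      ((continuous_const.mul continuous_id).neg))).aestronglyMeasurable
  have hint1 : ∀ s : ℝ, 0 < s →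
      Integrable (fun y => 1 - Real.exp (-(s * y))) (ν.restrict (Set.Ioi 0)) :=
    fun s hs => subord_integrable_of_le_min ν hν (hmeas1 s)
      (fun y hy => subord_one_sub_exp_bound hs hy)
  have hintG : ∀ s : ℝ, 0 < s →
      Integrable (fun y => y * Real.exp (-(s * y))) (ν.restrict (Set.Ioi 0)) :=
    fun s hs => subord_integrable_of_le_min ν hν
      ((continuous_id.mul (Real.continuous_exp.comp
        ((continuous_const.mul continuous_id).neg))).aestronglyMeasurable)
      (fun y hy => subord_exp_bound hs hy)
  -- derivative of ψ
  have hpsideriv : ∀ σ : ℝ, 0 < σ →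
      HasDerivAt ψ (∫ y in Set.Ioi (0:ℝ), y * Real.exp (-(σ * y)) ∂ν) σ := by
    intro σ hσ
    refine (subord_hasDerivAt_psi ν hν hσ).congr_of_eventuallyEq ?_
    filter_upwards [Ioi_mem_nhds hσ] with s hs using hψ s hs
  -- tangent line bound for the concave function ψ
  have htangent : ∀ a σ : ℝ, 0 < a → 0 < σ →
      ψ a ≤ (ψ σ - σ * deriv ψ σ) + a * deriv ψ σ := by
    intro a σ ha hσ
    have hd : deriv ψ σ = ∫ y in Set.Ioi (0:ℝ), y * Real.exp (-(σ * y)) ∂ν :=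
      (hpsideriv σ hσ).deriv
    have hsub : ψ a - ψ σ = ∫ y in Set.Ioi (0:ℝ),
        ((1 - Real.exp (-(a * y))) - (1 - Real.exp (-(σ * y)))) ∂ν := by
      rw [hψ a ha, hψ σ hσ, ← integral_sub (hint1 a ha) (hint1 σ hσ)]
    have hmono : ∫ y in Set.Ioi (0:ℝ),
        ((1 - Real.exp (-(a * y))) - (1 - Real.exp (-(σ * y)))) ∂ν
        ≤ ∫ y in Set.Ioi (0:ℝ), (a - σ) * (y * Real.exp (-(σ * y))) ∂ν := by
      refine integral_mono_ae ((hint1 a ha).sub (hint1 σ hσ))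
        ((hintG σ hσ).const_mul (a - σ)) ?_
      filter_upwards [ae_restrict_mem measurableSet_Ioi] with y hy
      rw [Set.mem_Ioi] at hy
      have h1 : -((a - σ) * y) + 1 ≤ Real.exp (-((a - σ) * y)) := Real.add_one_le_exp _
      have h2 : Real.exp (-(a * y)) = Real.exp (-(σ * y)) * Real.exp (-((a - σ) * y)) := by
        rw [← Real.exp_add]; congr 1; ring
      have hep : (0:ℝ) < Real.exp (-(σ * y)) := Real.exp_pos _
      have h3 : Real.exp (-(σ * y)) * (-((a - σ) * y) + 1) ≤ Real.exp (-(a * y)) := by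
        rw [h2]; exact mul_le_mul_of_nonneg_left h1 hep.le
      nlinarith
    rw [integral_const_mul] at hmono
    rw [← hsub, ← hd] at hmono
    linarith
  -- integrability of exp(-(a * D u))
  have hexp_int : ∀ a u : ℝ, 0 < a → 0 ≤ u →
      Integrable (fun ω => Real.exp (-(a * D u ω))) P := by
    intro a u ha hu
    refine Integrable.mono' (integrable_const (1:ℝ))
      ((Real.measurable_exp.comp
        ((measurable_const.mul (hDmeas u)).neg)).aestronglyMeasurable) ?_
    refine Filter.Eventually.of_forall fun ω => ?_
    rw [Real.norm_of_nonneg (Real.exp_pos _).le]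
    exact Real.exp_le_one_iff.2 (by nlinarith [mul_nonneg ha.le (hD0' ω u hu)])
  have hAmeas : ∀ u : ℝ, MeasurableSet {ω | D u ω ≤ t} := fun u =>
    measurableSet_le (hDmeas u) measurable_const
  -- Chebyshev-type lower bound
  have hlower : ∀ a u : ℝ, 0 < a → 0 ≤ u →
      Real.exp (-(u * ψ a)) - Real.exp (-(a * t)) ≤ (P {ω | D u ω ≤ t}).toReal := by
    intro a u ha hu
    have hind : Integrable ({ω | D u ω ≤ t}.indicator (fun _ => (1:ℝ))) P :=
      (integrable_indicator_iff (hAmeas u)).2 ((integrable_const (1:ℝ)).integrableOn)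
    have key : ∫ ω, Real.exp (-(a * D u ω)) ∂P
        ≤ ∫ ω, ({ω | D u ω ≤ t}.indicator (fun _ => (1:ℝ)) ω + Real.exp (-(a * t))) ∂P := by
      refine integral_mono (hexp_int a u ha hu) (hind.add (integrable_const _)) ?_
      intro ω
      by_cases hω : ω ∈ {ω | D u ω ≤ t}
      · simp only [Set.indicator_of_mem hω]
        have h1 : Real.exp (-(a * D u ω)) ≤ 1 :=
          Real.exp_le_one_iff.2 (by nlinarith [mul_nonneg ha.le (hD0' ω u hu)])
        have h2 := (Real.exp_pos (-(a * t))).le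
        linarith
      · simp only [Set.indicator_of_notMem hω]
        simp only [Set.mem_setOf_eq, not_le] at hω
        have h1 : Real.exp (-(a * D u ω)) ≤ Real.exp (-(a * t)) :=
          Real.exp_le_exp.2 (by nlinarith)
        simpa using h1
    rw [hlaplace a ha u hu, integral_add hind (integrable_const _),
      integral_indicator_const (1:ℝ) (hAmeas u), integral_const, probReal_univ] at key
    simp only [smul_eq_mul, mul_one, ENNReal.toReal_one, one_mul, measureReal_def] at key
    linarith
  -- Chebyshev-type upper bound
  have hupper : ∀ u : ℝ, 0 ≤ u →
      (P {ω | D u ω ≤ t}).toReal ≤ Real.exp (-(u * ψ 1) + t) := by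
    intro u hu
    have hind : Integrable ({ω | D u ω ≤ t}.indicator (fun _ => Real.exp (-t))) P :=
      (integrable_indicator_iff (hAmeas u)).2 ((integrable_const _).integrableOn)
    have key : ∫ ω, ({ω | D u ω ≤ t}.indicator (fun _ => Real.exp (-t)) ω) ∂P
        ≤ ∫ ω, Real.exp (-(1 * D u ω)) ∂P := by
      refine integral_mono hind (hexp_int 1 u one_pos hu) ?_
      intro ω
      by_cases hω : ω ∈ {ω | D u ω ≤ t}
      · simp only [Set.indicator_of_mem hω]
        simp only [Set.mem_setOf_eq] at hω
        exact Real.exp_le_exp.2 (by linarith)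
      · simp only [Set.indicator_of_notMem hω]
        exact (Real.exp_pos _).le
    rw [hlaplace 1 one_pos u hu, integral_indicator_const _ (hAmeas u), smul_eq_mul] at key
    have hE1 : Real.exp (-t) * Real.exp t = 1 := by rw [← Real.exp_add]; simp
    have h2 : (P {ω | D u ω ≤ t}).toReal * Real.exp (-t) * Real.exp t
        ≤ Real.exp (-(u * ψ 1)) * Real.exp t :=
      mul_le_mul_of_nonneg_right key (Real.exp_pos t).le
    rw [mul_assoc, hE1, mul_one, ← Real.exp_add] at h2
    exact h2
  -- positivity of ψ 1
  have hc : 0 < ψ 1 := by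
    rw [hψ 1 one_pos]
    have hi : IntegrableOn (fun y => 1 - Real.exp (-(1 * y))) (Set.Ioi 0) ν := hint1 1 one_pos
    have hnn : 0 ≤ᵐ[ν.restrict (Set.Ioi 0)] fun y => 1 - Real.exp (-(1 * y)) := by
      filter_upwards [ae_restrict_mem measurableSet_Ioi] with y hy
      rw [Set.mem_Ioi] at hy
      have : Real.exp (-(1 * y)) ≤ 1 := Real.exp_le_one_iff.2 (by linarith)
      simp only [Pi.zero_apply]
      linarith
    rw [setIntegral_pos_iff_support_of_nonneg_ae hnn hi]
    have hsub2 : Set.Ioi (0:ℝ) ⊆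
        Function.support (fun y => 1 - Real.exp (-(1 * y))) ∩ Set.Ioi 0 := by
      intro y hy
      have hy' : 0 < y := hy
      refine ⟨?_, hy⟩
      simp only [Function.mem_support]
      intro hzero
      have h1 : Real.exp (-(1 * y)) = 1 := by linarith
      have h2 := Real.log_exp (-(1 * y))
      rw [h1, Real.log_one] at h2
      linarith
    have hmo := measure_mono (μ := ν) hsub2
    rw [hνinf, top_le_iff] at hmo
    rw [hmo]
    exact ENNReal.zero_lt_top
  -- choose a large parameter s
  by_contra hL
  set ε := min t lam / 4 with hεdef
  have hmin : 0 < min t lam := lt_min ht hlam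
  have hε : 0 < ε := by rw [hεdef]; linarith
  have hεt : 2 * ε ≤ t / 2 := by
    have := min_le_left t lam; rw [hεdef]; linarith
  have helam : 2 * ε ≤ lam / 2 := by
    have := min_le_right t lam; rw [hεdef]; linarith
  have hsr : Tendsto (fun s : ℝ => s ^ r) atTop atTop := tendsto_rpow_atTop hr
  have ev5' : Tendsto (fun s : ℝ => (t - 2 * ε) * s ^ r) atTop atTop :=
    hsr.const_mul_atTop (by linarith)
  have ev6' : Tendsto (fun s : ℝ => Real.exp (lam / 2 * s ^ r)) atTop atTop :=
    Real.tendsto_exp_atTop.comp (hsr.const_mul_atTop (by linarith))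
  obtain ⟨s, ⟨⟨⟨⟨hsM, hs1⟩, hx3⟩, hR4⟩, hlog⟩, hbig⟩ :=
    ((((((eventually_ge_atTop M).and (eventually_ge_atTop 1)).and
      (hxzero.eventually_lt_const hε)).and
      (hRzero.eventually_lt_const hε)).and
      (ev5'.eventually_ge_atTop (Real.log 2))).and
      (ev6'.eventually_ge_atTop (2 * (L.toReal + 2)))).exists
  have hs0 : (0:ℝ) < s := lt_of_lt_of_le one_pos hs1
  have hσ : 0 < xinv s := (hxrange s hsM).1
  have hder : deriv ψ (xinv s) = x s := (hxrange s hsM).2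
  have ha : (0:ℝ) < s ^ r := Real.rpow_pos_of_pos hs0 r
  have hsrnn : (0:ℝ) ≤ s ^ r := ha.le
  have hpow : s ^ (r - 1) * s = s ^ r := by
    rw [← Real.rpow_add_one (ne_of_gt hs0) (r - 1)]
    norm_num
  have hprm1 : (0:ℝ) < s ^ (r - 1) := Real.rpow_pos_of_pos hs0 _
  rw [hder] at hR4
  have hR4' : ψ (xinv s) - xinv s * x s ≤ ε * s ^ (r - 1) := by
    rw [div_lt_iff₀ hprm1] at hR4
    linarith
  have htan := htangent (s ^ r) (xinv s) ha hσ
  rw [hder] at htan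
  have hkey : s * ψ (s ^ r) ≤ 2 * ε * s ^ r := by
    have h2 : s * (ψ (xinv s) - xinv s * x s) ≤ ε * s ^ r := by
      calc s * (ψ (xinv s) - xinv s * x s) ≤ s * (ε * s ^ (r - 1)) :=
            mul_le_mul_of_nonneg_left hR4' hs0.le
        _ = ε * s ^ r := by rw [← hpow]; ring
    have h4 : s ^ r * (s * x s) ≤ s ^ r * ε := mul_le_mul_of_nonneg_left hx3.le hsrnn
    have h5 : s * ((ψ (xinv s) - xinv s * x s) + s ^ r * x s)
        = s * (ψ (xinv s) - xinv s * x s) + s ^ r * (s * x s) := by ring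
    have h6 := mul_le_mul_of_nonneg_left htan hs0.le
    linarith
  -- the auxiliary large time β
  set β := (lam * s ^ r + t + 1) / ψ 1 + s with hβdef
  have hnum : 0 < lam * s ^ r + t + 1 := by
    have := mul_pos hlam ha; linarith
  have hβs : s ≤ β := by
    have := div_nonneg hnum.le hc.le
    rw [hβdef]; linarith
  have hβ0 : 0 < β := lt_of_lt_of_le hs0 hβs
  have hβc : β * ψ 1 = lam * s ^ r + t + 1 + s * ψ 1 := by
    rw [hβdef, add_mul, div_mul_cancel₀ _ (ne_of_gt hc)]
  -- the event B
  set A := {ω | D s ω ≤ t} with hAdef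
  set Cset := {ω | D β ω ≤ t} with hCdef
  set B := A \ Cset with hBdef
  have hBmeas : MeasurableSet B := (hAmeas s).diff (hAmeas β)
  have hsInf : ∀ ω, ω ∈ B → s ≤ sInf {u : ℝ | 0 < u ∧ t < D u ω} := by
    intro ω hω
    obtain ⟨hA1, hC1⟩ := hω
    simp only [hAdef, Set.mem_setOf_eq] at hA1
    simp only [hCdef, Set.mem_setOf_eq, not_le] at hC1
    have hne : β ∈ {u : ℝ | 0 < u ∧ t < D u ω} := ⟨hβ0, hC1⟩
    refine le_csInf ⟨β, hne⟩ ?_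
    intro v hv
    by_contra hvs
    push_neg at hvs
    have hDv : D v ω ≤ D s ω :=
      hDmono ω (Set.mem_Ici.2 hv.1.le) (Set.mem_Ici.2 hs0.le) hvs.le
    exact absurd (lt_of_lt_of_le hv.2 (le_trans hDv hA1)) (lt_irrefl t)
  -- lower bound for the lintegral
  have hLB : ENNReal.ofReal (Real.exp (lam * s ^ r)) * P B ≤ L := by
    rw [hLdef, ← lintegral_indicator_const hBmeas]
    refine lintegral_mono fun ω => ?_
    by_cases hω : ω ∈ B
    · rw [Set.indicator_of_mem hω]
      apply ENNReal.ofReal_le_ofReal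
      apply Real.exp_le_exp.2
      apply mul_le_mul_of_nonneg_left _ hlam.le
      exact Real.rpow_le_rpow hs0.le (hsInf ω hω) hr.le
    · rw [Set.indicator_of_notMem hω]
      exact zero_le
  have hfin : Real.exp (lam * s ^ r) * (P B).toReal ≤ L.toReal := by
    have h := ENNReal.toReal_mono hL hLB
    rwa [ENNReal.toReal_mul, ENNReal.toReal_ofReal (Real.exp_pos _).le] at h
  -- splitting the measure
  have hsplit : (P A).toReal ≤ (P B).toReal + (P Cset).toReal := by
    have hsub : A ⊆ B ∪ Cset := by
      intro ω hω
      by_cases h2 : ω ∈ Cset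
      · exact Or.inr h2
      · exact Or.inl ⟨hω, h2⟩
    have h1 : P A ≤ P B + P Cset :=
      le_trans (measure_mono hsub) (measure_union_le B Cset)
    have h2 := ENNReal.toReal_mono
      (ENNReal.add_ne_top.2 ⟨measure_ne_top P B, measure_ne_top P Cset⟩) h1
    rwa [ENNReal.toReal_add (measure_ne_top P B) (measure_ne_top P Cset)] at h2
  have hpA : Real.exp (-(s * ψ (s ^ r))) - Real.exp (-(s ^ r * t)) ≤ (P A).toReal :=
    hlower (s ^ r) s ha hs0.le
  have hpC : (P Cset).toReal ≤ Real.exp (-(β * ψ 1) + t) := hupper β hβ0.le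
  -- final computation
  set W := Real.exp ((lam - 2 * ε) * s ^ r) with hW
  have hEpos : (0:ℝ) < Real.exp (lam * s ^ r) := Real.exp_pos _
  have hX : W ≤ Real.exp (lam * s ^ r) * Real.exp (-(s * ψ (s ^ r))) := by
    rw [← Real.exp_add, hW]
    apply Real.exp_le_exp.2
    have hring : (lam - 2 * ε) * s ^ r = lam * s ^ r - 2 * ε * s ^ r := by ring
    linarith
  have hY : Real.exp (lam * s ^ r) * Real.exp (-(s ^ r * t)) ≤ W * (1 / 2) := by
    have h1 : Real.exp (lam * s ^ r) * Real.exp (-(s ^ r * t))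
        = W * Real.exp (-((t - 2 * ε) * s ^ r)) := by
      rw [hW, ← Real.exp_add, ← Real.exp_add]; congr 1; ring
    rw [h1]
    apply mul_le_mul_of_nonneg_left _ (by rw [hW]; positivity : (0:ℝ) ≤ W)
    have h4 : Real.exp (-((t - 2 * ε) * s ^ r)) ≤ Real.exp (-(Real.log 2)) :=
      Real.exp_le_exp.2 (by linarith)
    have h5 : Real.exp (-(Real.log 2)) = 1 / 2 := by
      rw [Real.exp_neg, Real.exp_log two_pos]
      norm_num
    linarith
  have hZ : Real.exp (lam * s ^ r) * Real.exp (-(β * ψ 1) + t) ≤ 1 := by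
    rw [← Real.exp_add]
    apply Real.exp_le_one_iff.2
    have := mul_nonneg hs0.le hc.le
    linarith [hβc]
  have hW2 : Real.exp (lam / 2 * s ^ r) ≤ W := by
    apply Real.exp_le_exp.2
    nlinarith [mul_le_mul_of_nonneg_right (by linarith : lam / 2 ≤ lam - 2 * ε) hsrnn]
  have h1 : Real.exp (-(s * ψ (s ^ r))) - Real.exp (-(s ^ r * t))
      - Real.exp (-(β * ψ 1) + t) ≤ (P B).toReal := by linarith
  have h2 := mul_le_mul_of_nonneg_left h1 hEpos.le
  have h3 : Real.exp (lam * s ^ r) * (Real.exp (-(s * ψ (s ^ r)))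
        - Real.exp (-(s ^ r * t)) - Real.exp (-(β * ψ 1) + t))
      = Real.exp (lam * s ^ r) * Real.exp (-(s * ψ (s ^ r)))
        - Real.exp (lam * s ^ r) * Real.exp (-(s ^ r * t))
        - Real.exp (lam * s ^ r) * Real.exp (-(β * ψ 1) + t) := by ring
  linarith
end
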